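/- arXiv:1210.1502 — 8 statements merged into one kernel-verified Lean document; each statement's English description precedes it below -/
import Mathlib

section
/- Let K be a field, R = K[x_1,...,x_m] a polynomial ring, and let f ∈ K[x_1,...,x_{m}] be a polynomial not involving the variable x_i (for some fixed i). Let I = (x_i, f) be the ideal generated by x_i and f, and let a ≥ 0 be a natural number. Write a polynomial P ∈ R as P = Σ_{k≥0} P_k x_i^k where each P_k does not involve x_i. Then P ∈ I^a if and only if f^{a-k} divides P_k (in the subring of polynomials not involving x_i) for all 0 ≤ k ≤ a. -/
open MvPolynomial

section PolyAux
open Polynomial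

theorem coeffDvd_mul {S : Type*} [CommRing S] {c : S} {b : ℕ} {p : S[X]}
    (h : ∀ j, c ^ (b - j) ∣ p.coeff j) (u : S[X]) :
    ∀ k, c ^ (b - k) ∣ (u * p).coeff k := by
  intro k
  rw [Polynomial.coeff_mul]
  refine Finset.dvd_sum fun x hx => ?_
  rw [Finset.HasAntidiagonal.mem_antidiagonal] at hx
  exact Dvd.dvd.mul_left ((pow_dvd_pow c (Nat.sub_le_sub_left (by omega) b)).trans (h x.2)) _

theorem mem_pow_imp {S : Type*} [CommRing S] (c : S) :
    ∀ (a : ℕ) (p : S[X]), p ∈ (Ideal.span {Polynomial.X, Polynomial.C c}) ^ a →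
      ∀ k, c ^ (a - k) ∣ p.coeff k := by
  intro a
  induction a with
  | zero => simp
  | succ a ih =>
    intro p hp
    rw [pow_succ] at hp
    refine Submodule.mul_induction_on hp ?_ ?_
    · intro x hx y hy
      obtain ⟨u, v, huv⟩ := Ideal.mem_span_pair.mp hy
      have hx' := ih x hx
      have h1 : ∀ j, c ^ (a + 1 - j) ∣ (Polynomial.X * x).coeff j := by
        intro j
        cases j with
        | zero => simp [Polynomial.mul_coeff_zero]
        | succ j =>
          rw [Polynomial.coeff_X_mul]
          exact (pow_dvd_pow c (by omega)).trans (hx' j)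
      have h2 : ∀ j, c ^ (a + 1 - j) ∣ (Polynomial.C c * x).coeff j := by
        intro j
        rw [Polynomial.coeff_C_mul]
        have : c ^ (a - j) * c ∣ c * x.coeff j := by
          rw [mul_comm c (x.coeff j)]
          exact mul_dvd_mul (hx' j) dvd_rfl
        exact ((pow_dvd_pow c (show a + 1 - j ≤ (a - j) + 1 by omega)).trans
          (by rw [pow_succ]; exact this))
      intro k
      have hxy : x * y = u * (Polynomial.X * x) + v * (Polynomial.C c * x) := by
        rw [← huv]; ring
      rw [hxy, Polynomial.coeff_add]
      exact dvd_add (coeffDvd_mul h1 u k) (coeffDvd_mul h2 v k)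
    · intro x y hx hy k
      rw [Polynomial.coeff_add]
      exact dvd_add (hx k) (hy k)

theorem imp_mem_pow {S : Type*} [CommRing S] (c : S) (a : ℕ) (p : S[X])
    (h : ∀ k, c ^ (a - k) ∣ p.coeff k) :
    p ∈ (Ideal.span {Polynomial.X, Polynomial.C c}) ^ a := by
  have hX : Polynomial.X ∈ Ideal.span {Polynomial.X, Polynomial.C c} :=
    Ideal.subset_span (by simp)
  have hC : Polynomial.C c ∈ Ideal.span {Polynomial.X, Polynomial.C c} :=
    Ideal.subset_span (by simp)
  obtain ⟨q, hq⟩ : Polynomial.X ^ a ∣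
      p - ∑ k ∈ Finset.range a, Polynomial.C (p.coeff k) * Polynomial.X ^ k := by
    rw [Polynomial.X_pow_dvd_iff]
    intro d hd
    simp [Polynomial.coeff_sub, Polynomial.finset_sum_coeff, Polynomial.coeff_C_mul,
      Polynomial.coeff_X_pow, Finset.sum_ite_eq, hd]
  have hp : p = (∑ k ∈ Finset.range a, Polynomial.C (p.coeff k) * Polynomial.X ^ k)
      + Polynomial.X ^ a * q := by
    rw [← hq]; ring
  rw [hp]
  refine Ideal.add_mem _ (Ideal.sum_mem _ fun k hk => ?_)
    (Ideal.mul_mem_right _ _ (Ideal.pow_mem_pow hX a))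
  rw [Finset.mem_range] at hk
  obtain ⟨s, hs⟩ := h k
  have heq : Polynomial.C (p.coeff k) * Polynomial.X ^ k =
      Polynomial.C s * (Polynomial.C c ^ (a - k) * Polynomial.X ^ k) := by
    rw [hs, map_mul, map_pow]; ring
  rw [heq]
  refine Ideal.mul_mem_left _ _ ?_
  have := Ideal.mul_mem_mul (Ideal.pow_mem_pow hC (a - k)) (Ideal.pow_mem_pow hX k)
  rwa [← pow_add, Nat.sub_add_cancel hk.le] at this

end PolyAux

noncomputable def auxE (K : Type*) [Field K] {n : ℕ} (i : Fin (n + 1)) :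
    MvPolynomial (Fin (n + 1)) K ≃ₐ[K] Polynomial (MvPolynomial (Fin n) K) :=
  (renameEquiv K (Equiv.swap i 0)).trans (finSuccEquiv K n)

theorem auxE_X {K : Type*} [Field K] {n : ℕ} (i : Fin (n + 1)) :
    auxE K i (X i) = Polynomial.X := by
  simp [auxE, Equiv.swap_apply_left, finSuccEquiv_X_zero]

theorem auxE_X_ne {K : Type*} [Field K] {n : ℕ} (i : Fin (n + 1)) {j : Fin (n + 1)}
    (hj : j ≠ i) : ∃ t, auxE K i (X j) = Polynomial.C (X t) := by
  have hne : Equiv.swap i 0 j ≠ 0 := by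
    intro h
    exact hj ((Equiv.swap i 0).injective (h.trans (Equiv.swap_apply_left i 0).symm))
  obtain ⟨t, ht⟩ := Fin.eq_succ_of_ne_zero hne
  refine ⟨t, ?_⟩
  simp [auxE, ht, finSuccEquiv_X_succ]

theorem auxE_supported {K : Type*} [Field K] {n : ℕ} (i : Fin (n + 1))
    (g : MvPolynomial (Fin (n + 1)) K) (hg : g ∈ supported K ({i}ᶜ : Set (Fin (n + 1)))) :
    ∃ s, auxE K i g = Polynomial.C s := by
  have hg' : g ∈ Algebra.adjoin K (X '' ({i}ᶜ : Set (Fin (n + 1)))) := hg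
  clear hg
  induction hg' using Algebra.adjoin_induction with
  | mem x hx =>
    obtain ⟨j, hj, rfl⟩ := hx
    obtain ⟨t, ht⟩ := auxE_X_ne (K := K) i (show j ≠ i from hj)
    exact ⟨X t, ht⟩
  | algebraMap r =>
    refine ⟨MvPolynomial.C r, ?_⟩
    rw [AlgEquiv.commutes]
    simp [Polynomial.algebraMap_apply, MvPolynomial.algebraMap_eq]
  | add x y _ _ hx hy =>
    obtain ⟨s, hs⟩ := hx; obtain ⟨t, ht⟩ := hy
    exact ⟨s + t, by rw [map_add, hs, ht, map_add]⟩
  | mul x y _ _ hx hy =>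
    obtain ⟨s, hs⟩ := hx; obtain ⟨t, ht⟩ := hy
    exact ⟨s * t, by rw [map_mul, hs, ht, map_mul]⟩

theorem auxE_symm_C {K : Type*} [Field K] {n : ℕ} (i : Fin (n + 1))
    (s : MvPolynomial (Fin n) K) :
    (auxE K i).symm (Polynomial.C s) ∈ supported K ({i}ᶜ : Set (Fin (n + 1))) := by
  induction s using MvPolynomial.induction_on with
  | C r =>
    have : (Polynomial.C (MvPolynomial.C r) :
        Polynomial (MvPolynomial (Fin n) K)) = algebraMap K _ r := by
      simp [Polynomial.algebraMap_apply, MvPolynomial.algebraMap_eq]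
    rw [this, AlgEquiv.commutes]
    exact Subalgebra.algebraMap_mem _ r
  | add p q hp hq =>
    rw [map_add, map_add]
    exact Subalgebra.add_mem _ hp hq
  | mul_X p j hp =>
    rw [map_mul, map_mul]
    refine Subalgebra.mul_mem _ hp ?_
    have hE : auxE K i (X ((Equiv.swap i 0).symm j.succ)) = Polynomial.C (X j) := by
      simp [auxE, finSuccEquiv_X_succ]
    rw [← hE, AlgEquiv.symm_apply_apply]
    rw [X_mem_supported (R := K)]
    intro h
    have : (Equiv.swap i 0) ((Equiv.swap i 0).symm j.succ) = (Equiv.swap i 0) i := by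
      rw [Set.mem_singleton_iff.mp h]
    rw [Equiv.apply_symm_apply, Equiv.swap_apply_left] at this
    exact Fin.succ_ne_zero j this

/-- Membership in powers of the ideal `(x_i, f)` in terms of the expansion of `P`
in powers of `x_i` with coefficients not involving `x_i`. -/
theorem stmt_0 {K : Type*} [Field K] {m : ℕ} (i : Fin m)
    (f : MvPolynomial (Fin m) K) (hf : f ∈ supported K ({i}ᶜ : Set (Fin m)))
    (a : ℕ) (P : MvPolynomial (Fin m) K) (Pk : ℕ → MvPolynomial (Fin m) K)
    (hPk : ∀ k, Pk k ∈ supported K ({i}ᶜ : Set (Fin m)))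
    (N : ℕ) (hPkN : ∀ k, N ≤ k → Pk k = 0)
    (hP : P = ∑ k ∈ Finset.range N, Pk k * X i ^ k) :
    P ∈ (Ideal.span {X i, f}) ^ a ↔
      ∀ k ≤ a, ∃ Q ∈ supported K ({i}ᶜ : Set (Fin m)), Pk k = f ^ (a - k) * Q := by
  cases m with
  | zero => exact i.elim0
  | succ n =>
  set e := auxE K i with he
  obtain ⟨c, hc⟩ := auxE_supported i f hf
  choose g hg using fun k => auxE_supported i (Pk k) (hPk k)
  have hgN : ∀ k, N ≤ k → g k = 0 := by
    intro k hk
    have h1 := hg k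
    rw [hPkN k hk, map_zero] at h1
    exact (Polynomial.C_eq_zero.mp h1.symm)
  have hcoeff : ∀ k, (e P).coeff k = g k := by
    intro k
    rw [hP, map_sum]
    rw [Polynomial.finset_sum_coeff]
    have : ∀ j ∈ Finset.range N,
        (e (Pk j * X i ^ j)).coeff k = if k = j then g j else 0 := by
      intro j _
      rw [map_mul, map_pow, hg j, he, auxE_X,
        Polynomial.coeff_C_mul, Polynomial.coeff_X_pow]
      split <;> simp
    rw [Finset.sum_congr rfl this, Finset.sum_ite_eq]
    split
    · rfl
    · rename_i h
      rw [Finset.mem_range, not_lt] at h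
      exact (hgN k h).symm
  have hmap : Ideal.map (e : MvPolynomial (Fin (n+1)) K ≃+* _)
      (Ideal.span {X i, f}) = Ideal.span {Polynomial.X, Polynomial.C c} := by
    rw [Ideal.map_span, Set.image_pair]
    have h1 : (e : MvPolynomial (Fin (n+1)) K ≃+* Polynomial (MvPolynomial (Fin n) K)) (X i)
        = Polynomial.X := auxE_X i
    have h2 : (e : MvPolynomial (Fin (n+1)) K ≃+* Polynomial (MvPolynomial (Fin n) K)) f
        = Polynomial.C c := hc
    rw [h1, h2]
  have hmem : P ∈ (Ideal.span {X i, f}) ^ a ↔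
      e P ∈ (Ideal.span {Polynomial.X, Polynomial.C c}) ^ a := by
    rw [← hmap, ← Ideal.map_pow]
    constructor
    · intro h
      exact Ideal.mem_map_of_mem _ h
    · intro h
      obtain ⟨x, hx, hxe⟩ :=
        (Ideal.mem_map_iff_of_surjective _ e.surjective).mp h
      rwa [← e.injective hxe]
  rw [hmem]
  constructor
  · intro h k hk
    have hdvd := mem_pow_imp c a (e P) h k
    rw [hcoeff k] at hdvd
    obtain ⟨q, hq⟩ := hdvd
    refine ⟨(auxE K i).symm (Polynomial.C q), auxE_symm_C i q, ?_⟩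
    apply e.injective
    rw [map_mul, map_pow, hc, AlgEquiv.apply_symm_apply, hg k, hq]
    rw [map_mul, map_pow]
  · intro h
    apply imp_mem_pow
    intro k
    by_cases hk : k ≤ a
    · obtain ⟨Q, hQs, hQ⟩ := h k hk
      obtain ⟨q, hq⟩ := auxE_supported i Q hQs
      rw [hcoeff k]
      have h1 : Polynomial.C (g k) = Polynomial.C (c ^ (a - k) * q) := by
        rw [← hg k, hQ, map_mul, map_pow, hc, hq, map_mul, map_pow]
      exact ⟨q, Polynomial.C_injective h1⟩
    · rw [Nat.sub_eq_zero_of_le (by omega), pow_zero]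
      exact one_dvd _
end

section
/- Let K be a field, R = K[x_1,...,x_m], and let f be an irreducible polynomial not involving the variable x_i. Let I = (x_i, f). If P, Q ∈ R satisfy PQ ∈ I^a for some natural number a ≥ 1, then there exists 0 ≤ b ≤ a such that P ∈ I^b and Q ∈ I^{a-b}. -/
open MvPolynomial

/-- A prime power dividing a product splits between the factors. -/
lemma prime_pow_dvd_mul_split {α : Type*} [CommMonoidWithZero α] [IsCancelMulZero α] {p : α}
    (hp : Prime p) : ∀ (n : ℕ) (x y : α), p ^ n ∣ x * y →
      ∃ b ≤ n, p ^ b ∣ x ∧ p ^ (n - b) ∣ y := by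
  intro n
  induction n with
  | zero => intro x y _; exact ⟨0, le_rfl, by simp, by simp⟩
  | succ n ih =>
    intro x y h
    have hpd : p ∣ x * y := dvd_trans (dvd_pow_self p (Nat.succ_ne_zero n)) h
    rcases hp.2.2 x y hpd with hx | hy
    · obtain ⟨x', rfl⟩ := hx
      have h' : p ^ n ∣ x' * y := by
        have h2 : p * p ^ n ∣ p * (x' * y) := by
          rw [← pow_succ']; rwa [mul_assoc] at h
        exact (mul_dvd_mul_iff_left hp.ne_zero).mp h2
      obtain ⟨b, hb, h1, h2⟩ := ih x' y h'
      refine ⟨b + 1, Nat.succ_le_succ hb, ?_, ?_⟩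
      · rw [pow_succ']; exact mul_dvd_mul_left p h1
      · simpa [Nat.succ_sub_succ] using h2
    · obtain ⟨y', rfl⟩ := hy
      have h' : p ^ n ∣ x * y' := by
        have h2 : p * p ^ n ∣ p * (x * y') := by
          rw [← pow_succ']
          rwa [mul_left_comm x p y'] at h
        exact (mul_dvd_mul_iff_left hp.ne_zero).mp h2
      obtain ⟨b, hb, h1, h2⟩ := ih x y' h'
      refine ⟨b, le_trans hb (Nat.le_succ n), h1, ?_⟩
      rw [Nat.succ_sub hb, pow_succ']
      exact mul_dvd_mul_left p h2

section PolySide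

variable {S : Type*} [CommRing S] [IsDomain S]

omit [IsDomain S] in
lemma coeff_aeval_C_mul_X (g : S) (p : Polynomial S) (n : ℕ) :
    (Polynomial.aeval (Polynomial.C g * Polynomial.X) p).coeff n = g ^ n * p.coeff n := by
  induction p using Polynomial.induction_on' with
  | add p q hp hq => simp [hp, hq, mul_add]
  | monomial k c =>
    have hca : (algebraMap S (Polynomial S)) c = Polynomial.C c := rfl
    rw [Polynomial.aeval_monomial, mul_pow, ← Polynomial.C_pow, hca, ← mul_assoc,
      ← Polynomial.C_mul, Polynomial.C_mul_X_pow_eq_monomial]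
    simp only [Polynomial.coeff_monomial]
    by_cases h : k = n
    · subst h; simp [mul_comm]
    · simp [h]

omit [IsDomain S] in
lemma C_pow_dvd_of_mem_pow {g : S} {a : ℕ} {p : Polynomial S}
    (hp : p ∈ (Ideal.span {Polynomial.X, Polynomial.C g}) ^ a) :
    Polynomial.C g ^ a ∣ Polynomial.aeval (Polynomial.C g * Polynomial.X) p := by
  rw [← Ideal.mem_span_singleton, ← Ideal.span_singleton_pow]
  have h1 : Ideal.map (Polynomial.aeval (Polynomial.C g * Polynomial.X) : Polynomial S →ₐ[S] Polynomial S).toRingHom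
      (Ideal.span {Polynomial.X, Polynomial.C g}) ≤ Ideal.span {Polynomial.C g} := by
    rw [Ideal.map_span]
    apply Ideal.span_le.mpr
    rintro x ⟨y, hy, rfl⟩
    rcases hy with rfl | rfl
    · simp only [AlgHom.toRingHom_eq_coe, RingHom.coe_coe, Polynomial.aeval_X]
      exact Ideal.mem_span_singleton.mpr ⟨Polynomial.X, rfl⟩
    · simp only [AlgHom.toRingHom_eq_coe, RingHom.coe_coe, Polynomial.aeval_C]
      exact Ideal.mem_span_singleton.mpr ⟨1, by simp [Polynomial.algebraMap_apply]⟩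
  have h2 := Ideal.pow_right_mono h1 a
  rw [← Ideal.map_pow] at h2
  exact h2 (Ideal.mem_map_of_mem _ hp)

lemma mem_pow_of_C_pow_dvd {g : S} (hg : Prime g) {b : ℕ} {p : Polynomial S}
    (h : Polynomial.C g ^ b ∣ Polynomial.aeval (Polynomial.C g * Polynomial.X) p) :
    p ∈ (Ideal.span {Polynomial.X, Polynomial.C g}) ^ b := by
  set J := Ideal.span ({Polynomial.X, Polynomial.C g} : Set (Polynomial S)) with hJ
  have hXJ : (Polynomial.X : Polynomial S) ∈ J := Ideal.subset_span (Set.mem_insert _ _)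
  have hCJ : (Polynomial.C g : Polynomial S) ∈ J :=
    Ideal.subset_span (Set.mem_insert_of_mem _ rfl)
  have hcoeff : ∀ n, g ^ b ∣ g ^ n * p.coeff n := by
    intro n
    have hh := (Polynomial.C_dvd_iff_dvd_coeff (g ^ b)
      (Polynomial.aeval (Polynomial.C g * Polynomial.X) p)).mp (by rwa [Polynomial.C_pow]) n
    rwa [coeff_aeval_C_mul_X] at hh
  have key : ∀ n : ℕ, (Polynomial.monomial n (p.coeff n) : Polynomial S) ∈ J ^ b := by
    intro n
    by_cases hn : b ≤ n
    · have hXb : (Polynomial.X : Polynomial S) ^ b ∈ J ^ b := Ideal.pow_mem_pow hXJ b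
      have heq : (Polynomial.monomial n (p.coeff n) : Polynomial S)
          = Polynomial.C (p.coeff n) * Polynomial.X ^ (n - b) * Polynomial.X ^ b := by
        rw [mul_assoc, ← pow_add, Nat.sub_add_cancel hn, Polynomial.C_mul_X_pow_eq_monomial]
      rw [heq]
      exact Ideal.mul_mem_left _ _ hXb
    · push_neg at hn
      have hdvd : g ^ (b - n) ∣ p.coeff n := by
        have hne : (g : S) ^ n ≠ 0 := pow_ne_zero n hg.ne_zero
        have h3 : g ^ n * g ^ (b - n) ∣ g ^ n * p.coeff n := by
          rw [← pow_add, Nat.add_sub_cancel' hn.le]; exact hcoeff n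
        exact (mul_dvd_mul_iff_left hne).mp h3
      obtain ⟨c, hc⟩ := hdvd
      have heq : (Polynomial.monomial n (p.coeff n) : Polynomial S)
          = Polynomial.C c * (Polynomial.C g ^ (b - n) * Polynomial.X ^ n) := by
        rw [hc, ← Polynomial.C_mul_X_pow_eq_monomial, Polynomial.C_mul, Polynomial.C_pow]; ring
      rw [heq]
      have h1 : (Polynomial.C g : Polynomial S) ^ (b - n) ∈ J ^ (b - n) :=
        Ideal.pow_mem_pow hCJ _
      have h2 : (Polynomial.X : Polynomial S) ^ n ∈ J ^ n := Ideal.pow_mem_pow hXJ n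
      have h4 := Ideal.mul_mem_mul h1 h2
      rw [← pow_add, Nat.sub_add_cancel hn.le] at h4
      exact Ideal.mul_mem_left _ _ h4
  have h5 : (p.sum fun n c => Polynomial.monomial n c) ∈ J ^ b := by
    apply Ideal.sum_mem
    intro n _
    exact key n
  rwa [Polynomial.sum_monomial_eq] at h5

/-- The splitting theorem on the `Polynomial` side. -/
theorem poly_split {g : S} (hg : Prime g) (a : ℕ) (p q : Polynomial S)
    (h : p * q ∈ (Ideal.span {Polynomial.X, Polynomial.C g}) ^ a) :
    ∃ b ≤ a, p ∈ (Ideal.span {Polynomial.X, Polynomial.C g}) ^ b ∧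
      q ∈ (Ideal.span {Polynomial.X, Polynomial.C g}) ^ (a - b) := by
  have hCg : Prime (Polynomial.C g) := Polynomial.prime_C_iff.mpr hg
  have hdvd : Polynomial.C g ^ a ∣
      (Polynomial.aeval (Polynomial.C g * Polynomial.X) p) *
      (Polynomial.aeval (Polynomial.C g * Polynomial.X) q) := by
    rw [← map_mul]
    exact C_pow_dvd_of_mem_pow h
  obtain ⟨b, hb, h1, h2⟩ := prime_pow_dvd_mul_split hCg a _ _ hdvd
  exact ⟨b, hb, mem_pow_of_C_pow_dvd hg h1, mem_pow_of_C_pow_dvd hg h2⟩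

end PolySide

/-- An algebra map sends a supported polynomial into any subalgebra containing the
images of the relevant variables. -/
lemma aeval_mem_of_supported {K : Type*} [CommSemiring K] {σ : Type*} {A : Type*}
    [CommSemiring A] [Algebra K A] (s : Set σ) (ψ : MvPolynomial σ K →ₐ[K] A)
    (T : Subalgebra K A) (h : ∀ j ∈ s, ψ (X j) ∈ T) {f : MvPolynomial σ K}
    (hf : f ∈ supported K s) : ψ f ∈ T := by
  have hf' : f ∈ Algebra.adjoin K (MvPolynomial.X '' s) := hf
  clear hf
  induction hf' using Algebra.adjoin_induction with
  | mem x hx =>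
    obtain ⟨j, hj, rfl⟩ := hx
    exact h j hj
  | algebraMap r =>
    rw [AlgHom.commutes]
    exact T.algebraMap_mem r
  | add x y _ _ hx hy => rw [map_add]; exact T.add_mem hx hy
  | mul x y _ _ hx hy => rw [map_mul]; exact T.mul_mem hx hy

/-- If `PQ ∈ (x_i, f)^a` with `f` irreducible and not involving `x_i`, then the power
splits between the factors. -/
theorem stmt_1 {K : Type*} [Field K] {m : ℕ} (i : Fin m)
    (f : MvPolynomial (Fin m) K) (hf : f ∈ supported K ({i}ᶜ : Set (Fin m)))
    (hirr : Irreducible f) (a : ℕ) (ha : 1 ≤ a)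
    (P Q : MvPolynomial (Fin m) K)
    (hPQ : P * Q ∈ (Ideal.span {X i, f}) ^ a) :
    ∃ b ≤ a, P ∈ (Ideal.span {X i, f}) ^ b ∧ Q ∈ (Ideal.span {X i, f}) ^ (a - b) := by
  classical
  set ι := {j : Fin m // j ≠ i}
  set S' := MvPolynomial ι K with hS'
  let e : Option ι ≃ Fin m := Equiv.optionSubtypeNe i
  let Φ : MvPolynomial (Fin m) K ≃ₐ[K] Polynomial S' :=
    (renameEquiv K e.symm).trans (optionEquivLeft K ι)
  have hΦX : Φ (X i) = Polynomial.X := by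
    show (optionEquivLeft K ι) (rename e.symm (X i)) = Polynomial.X
    rw [rename_X, show e.symm i = none from Equiv.optionSubtypeNe_symm_self i,
      optionEquivLeft_X_none]
  -- Φ f is a constant polynomial
  have hfC : ∃ g : S', Φ f = Polynomial.C g := by
    have hmem : Φ f ∈ Subalgebra.restrictScalars K (⊥ : Subalgebra S' (Polynomial S')) := by
      apply aeval_mem_of_supported _ (Φ : MvPolynomial (Fin m) K →ₐ[K] Polynomial S') _ _ hf
      intro j hj
      have hji : j ≠ i := hj
      show Φ (X j) ∈ Subalgebra.restrictScalars K (⊥ : Subalgebra S' (Polynomial S'))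
      have hXj : Φ (X j) = Polynomial.C (MvPolynomial.X ⟨j, hji⟩) := by
        show (optionEquivLeft K ι) (rename e.symm (X j)) = _
        rw [rename_X, Equiv.optionSubtypeNe_symm_of_ne hji, optionEquivLeft_X_some]
      rw [hXj, Subalgebra.mem_restrictScalars, Algebra.mem_bot]
      exact ⟨MvPolynomial.X ⟨j, hji⟩, rfl⟩
    rw [Subalgebra.mem_restrictScalars, Algebra.mem_bot] at hmem
    obtain ⟨g, hg⟩ := hmem
    exact ⟨g, hg.symm⟩
  obtain ⟨g, hg⟩ := hfC
  -- g is prime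
  have hfprime : Prime f := hirr.prime
  have hgprime : Prime g := by
    rw [← Polynomial.prime_C_iff, ← hg]
    exact (MulEquiv.prime_iff Φ.toMulEquiv).mpr hfprime
  -- Translate the ideal
  set I := Ideal.span ({X i, f} : Set (MvPolynomial (Fin m) K)) with hI
  set J := Ideal.span ({Polynomial.X, Polynomial.C g} : Set (Polynomial S')) with hJ
  have hmap : Ideal.map (Φ : MvPolynomial (Fin m) K →+* Polynomial S') I = J := by
    rw [hI, Ideal.map_span, hJ]
    congr 1
    rw [Set.image_insert_eq, Set.image_singleton]
    show ({Φ (X i), Φ f} : Set (Polynomial S')) = {Polynomial.X, Polynomial.C g}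
    rw [hΦX, hg]
  have hbij : Function.Bijective (Φ : MvPolynomial (Fin m) K →+* Polynomial S') :=
    Φ.toEquiv.bijective
  have hmem_iff : ∀ (b : ℕ) (x : MvPolynomial (Fin m) K),
      x ∈ I ^ b ↔ Φ x ∈ J ^ b := by
    intro b x
    rw [← hmap, ← Ideal.map_pow]
    constructor
    · exact fun hx => Ideal.mem_map_of_mem _ hx
    · intro hx
      have hcm := Ideal.comap_map_of_bijective
        (Φ : MvPolynomial (Fin m) K →+* Polynomial S') hbij (I := I ^ b)
      rw [← hcm]
      exact Ideal.mem_comap.mpr hx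
  have hPQ' : Φ P * Φ Q ∈ J ^ a := by
    rw [← map_mul]
    exact (hmem_iff a (P * Q)).mp hPQ
  obtain ⟨b, hb, h1, h2⟩ := poly_split hgprime a (Φ P) (Φ Q) hPQ'
  exact ⟨b, hb, (hmem_iff b P).mpr h1, (hmem_iff (a - b) Q).mpr h2⟩
end

section
/- Let K be a field, R = K[x_1,...,x_m], and let f be an irreducible polynomial not involving the variable x_i. Then for every natural number a ≥ 1, the ideal I^a, where I = (x_i, f), is a primary ideal, and its radical equals I. -/
open MvPolynomial

section PolyCore


variable {S : Type*} [CommRing S] [IsDomain S] {f : S}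

private lemma aux_dvd_coeff_mul {a : ℕ} {s : Polynomial S}
    (hs : ∀ j < a, f ^ (a - j) ∣ s.coeff j) (u : Polynomial S) :
    ∀ j < a, f ^ (a - j) ∣ (s * u).coeff j := by
  intro j hj
  rw [Polynomial.coeff_mul]
  refine Finset.dvd_sum fun x hx => ?_
  rw [Finset.HasAntidiagonal.mem_antidiagonal] at hx
  have hx1 : x.1 ≤ j := by omega
  exact dvd_mul_of_dvd_left
    ((pow_dvd_pow f (by omega : a - j ≤ a - x.1)).trans (hs x.1 (by omega))) _

private lemma coeff_dvd_of_mem_pow {a : ℕ} {p : Polynomial S}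
    (hp : p ∈ (Ideal.span {(Polynomial.X : Polynomial S), Polynomial.C f}) ^ a) :
    ∀ j < a, f ^ (a - j) ∣ p.coeff j := by
  induction a generalizing p with
  | zero => intro j hj; omega
  | succ a ih =>
    rw [pow_succ] at hp
    refine Submodule.mul_induction_on hp ?_ ?_
    · intro s hs r hr j hj
      obtain ⟨u, v, huv⟩ := Ideal.mem_span_pair.mp hr
      have hsu := aux_dvd_coeff_mul (ih hs) u
      have hsv := aux_dvd_coeff_mul (ih hs) v
      have hX : ∀ k < a + 1, f ^ (a + 1 - k) ∣ (s * u * Polynomial.X).coeff k := by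
        intro k hk
        match k with
        | 0 => simp [Polynomial.mul_coeff_zero]
        | k + 1 =>
          rw [Polynomial.coeff_mul_X]
          exact (pow_dvd_pow f (by omega : a + 1 - (k + 1) ≤ a - k)).trans
            (hsu k (by omega))
      have hC : ∀ k < a + 1, f ^ (a + 1 - k) ∣ (s * v * Polynomial.C f).coeff k := by
        intro k hk
        rw [Polynomial.coeff_mul_C]
        have h1 : f ^ (a - k) ∣ (s * v).coeff k := by
          by_cases h : k < a
          · exact hsv k h
          · have : a - k = 0 := by omega
            simp [this]
        have h2 : a + 1 - k = (a - k) + 1 := by omega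
        rw [h2, pow_succ]
        exact mul_dvd_mul h1 dvd_rfl
      have : s * r = s * u * Polynomial.X + s * v * Polynomial.C f := by rw [← huv]; ring
      rw [this, Polynomial.coeff_add]
      exact dvd_add (hX j hj) (hC j hj)
    · intro x y hx hy j hj
      rw [Polynomial.coeff_add]
      exact dvd_add (hx j hj) (hy j hj)

private lemma X_mem_span : (Polynomial.X : Polynomial S) ∈ Ideal.span {(Polynomial.X : Polynomial S), Polynomial.C f} :=
  Ideal.subset_span (Set.mem_insert _ _)

private lemma Cf_mem_span : (Polynomial.C f : Polynomial S) ∈ Ideal.span {(Polynomial.X : Polynomial S), Polynomial.C f} :=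
  Ideal.subset_span (Set.mem_insert_of_mem _ rfl)

private lemma mem_pow_of_coeff_dvd {a : ℕ} {p : Polynomial S}
    (h : ∀ j < a, f ^ (a - j) ∣ p.coeff j) :
    p ∈ (Ideal.span {(Polynomial.X : Polynomial S), Polynomial.C f}) ^ a := by
  set J : Ideal (Polynomial S) := Ideal.span {(Polynomial.X : Polynomial S), Polynomial.C f} with hJ
  rw [Polynomial.as_sum_range p]
  refine Ideal.sum_mem _ fun j _ => ?_
  rw [← Polynomial.C_mul_X_pow_eq_monomial]
  by_cases hj : j < a
  · obtain ⟨g, hg⟩ := h j hj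
    have hmem : (Polynomial.C f) ^ (a - j) * Polynomial.X ^ j ∈ J ^ a := by
      have : (Polynomial.C f) ^ (a - j) * Polynomial.X ^ j ∈ J ^ (a - j) * J ^ j :=
        Ideal.mul_mem_mul (Ideal.pow_mem_pow Cf_mem_span _)
          (Ideal.pow_mem_pow X_mem_span _)
      rwa [← pow_add, Nat.sub_add_cancel hj.le] at this
    have : Polynomial.C (p.coeff j) * Polynomial.X ^ j = Polynomial.C g * ((Polynomial.C f) ^ (a - j) * Polynomial.X ^ j) := by
      rw [hg]; push_cast [map_mul, map_pow]; ring
    rw [this]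
    exact Ideal.mul_mem_left _ _ hmem
  · push_neg at hj
    have hmem : (Polynomial.X : Polynomial S) ^ a ∈ J ^ a := Ideal.pow_mem_pow X_mem_span _
    have : Polynomial.C (p.coeff j) * Polynomial.X ^ j = (Polynomial.C (p.coeff j) * Polynomial.X ^ (j - a)) * Polynomial.X ^ a := by
      rw [mul_assoc, ← pow_add, Nat.sub_add_cancel hj]
    rw [this]
    exact Ideal.mul_mem_left _ _ hmem

private lemma mem_span_iff (hf : Prime f) {p : Polynomial S} :
    p ∈ Ideal.span {(Polynomial.X : Polynomial S), Polynomial.C f} ↔ f ∣ p.coeff 0 := by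
  constructor
  · intro hp
    have := coeff_dvd_of_mem_pow (f := f) (a := 1) (by simpa using hp) 0 one_pos
    simpa using this
  · intro hp
    have := mem_pow_of_coeff_dvd (f := f) (a := 1) (p := p)
      (fun j hj => by interval_cases j; simpa using hp)
    simpa using this

private lemma span_isPrime (hf : Prime f) :
    (Ideal.span {(Polynomial.X : Polynomial S), Polynomial.C f}).IsPrime := by
  have heq : Ideal.span {(Polynomial.X : Polynomial S), Polynomial.C f} =
      Ideal.comap (Polynomial.constantCoeff) (Ideal.span {f}) := by
    ext p
    rw [Ideal.mem_comap, Ideal.mem_span_singleton, mem_span_iff hf,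
      Polynomial.constantCoeff_apply]
  rw [heq]
  have : (Ideal.span {f}).IsPrime := (Ideal.span_singleton_prime hf.ne_zero).mpr hf
  exact Ideal.IsPrime.comap _

private theorem poly_core (hf : Prime f) {a : ℕ} (ha : 1 ≤ a) :
    ((Ideal.span {(Polynomial.X : Polynomial S), Polynomial.C f}) ^ a).IsPrimary ∧
      ((Ideal.span {(Polynomial.X : Polynomial S), Polynomial.C f}) ^ a).radical =
        Ideal.span {(Polynomial.X : Polynomial S), Polynomial.C f} := by
  have hprime := span_isPrime hf
  have hrad : ((Ideal.span {(Polynomial.X : Polynomial S), Polynomial.C f}) ^ a).radical =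
      Ideal.span {(Polynomial.X : Polynomial S), Polynomial.C f} := by
    rw [Ideal.radical_pow _ (show a ≠ 0 by omega), hprime.radical]
  refine ⟨Ideal.isPrimary_iff.mpr ⟨?_, @fun x y hxy => ?_⟩, hrad⟩
  · intro htop
    exact hprime.ne_top (top_le_iff.mp (htop ▸ Ideal.pow_le_self (by omega)))
  · by_cases hy : y ∈ ((Ideal.span {(Polynomial.X : Polynomial S), Polynomial.C f}) ^ a).radical
    · exact Or.inr hy
    · left
      rw [hrad, mem_span_iff hf] at hy
      refine mem_pow_of_coeff_dvd ?_
      intro j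
      induction j using Nat.strong_induction_on with
      | _ j IH =>
        intro hj
        have h1 : f ^ (a - j) ∣ (x * y).coeff j :=
          coeff_dvd_of_mem_pow hxy j hj
        rw [Polynomial.coeff_mul] at h1
        have hmem : ((j, 0) : ℕ × ℕ) ∈ Finset.HasAntidiagonal.antidiagonal j := by
          simp
        rw [← Finset.add_sum_erase _ _ hmem] at h1
        have h2 : f ^ (a - j) ∣
            ∑ k ∈ (Finset.HasAntidiagonal.antidiagonal j).erase (j, 0), x.coeff k.1 * y.coeff k.2 := by
          refine Finset.dvd_sum fun k hk => ?_
          have hk1 := Finset.HasAntidiagonal.mem_antidiagonal.mp (Finset.mem_of_mem_erase hk)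
          have hkne := Finset.ne_of_mem_erase hk
          have hklt : k.1 < j := by
            rcases Nat.lt_or_ge k.1 j with h | h
            · exact h
            · exfalso; apply hkne
              have : k.1 = j := by omega
              have : k.2 = 0 := by omega
              exact Prod.ext (by omega) this
          exact dvd_mul_of_dvd_left
            ((pow_dvd_pow f (by omega : a - j ≤ a - k.1)).trans
              (IH k.1 hklt (by omega))) _
        have h3 : f ^ (a - j) ∣ x.coeff j * y.coeff 0 :=
          (dvd_add_right h2).mp (by rwa [add_comm] at h1)
        exact hf.pow_dvd_of_dvd_mul_right _ hy h3

end PolyCore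

section Transfer

private lemma comap_isPrimary {R S : Type*} [CommRing R] [CommRing S]
    (e : R ≃+* S) {M : Ideal S} (hM : M.IsPrimary) :
    (M.comap (e : R →+* S)).IsPrimary := by
  obtain ⟨hM1, hM2⟩ := Ideal.isPrimary_iff.mp hM
  refine Ideal.isPrimary_iff.mpr ⟨?_, @fun x y hxy => ?_⟩
  · intro h
    apply hM1
    rw [Ideal.eq_top_iff_one] at h ⊢
    simpa using h
  · have : e x * e y ∈ M := by rw [← map_mul]; exact hxy
    rcases hM2 this with h | h
    · exact Or.inl h
    · right
      rw [← Ideal.comap_radical]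
      exact h

end Transfer

section Glue

variable {K : Type*} [Field K] {m : ℕ}

private lemma optionEquivLeft_rename_some {τ : Type*} (p : MvPolynomial τ K) :
    optionEquivLeft K τ (rename some p) = Polynomial.C p := by
  induction p using MvPolynomial.induction_on with
  | C r => rw [rename_C, optionEquivLeft_C]
  | add p q hp hq => rw [map_add, map_add, hp, hq, map_add]
  | mul_X p s hp => rw [map_mul, map_mul, hp, rename_X, optionEquivLeft_X_some, ← map_mul]

end Glue

/-- Powers of the prime ideal `(x_i, f)` are primary with radical `(x_i, f)`. -/
theorem stmt_3 {K : Type*} [Field K] {m : ℕ} (i : Fin m)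
    (f : MvPolynomial (Fin m) K) (hf : f ∈ supported K ({i}ᶜ : Set (Fin m)))
    (hirr : Irreducible f) (a : ℕ) (ha : 1 ≤ a) :
    ((Ideal.span {X i, f} : Ideal (MvPolynomial (Fin m) K)) ^ a).IsPrimary ∧
      ((Ideal.span {X i, f} : Ideal (MvPolynomial (Fin m) K)) ^ a).radical =
        Ideal.span {X i, f} := by
  classical
  set τ : Set (Fin m) := ({i}ᶜ : Set (Fin m)) with hτ
  -- the equivalence of variable sets
  have hmem : ∀ b : Fin m, b ≠ i ↔ b ∈ τ := by
    intro b; simp [hτ]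
  let e0 : Fin m ≃ Option τ :=
    (Equiv.optionSubtypeNe i).symm.trans
      (Equiv.optionCongr (Equiv.subtypeEquivRight hmem))
  let e : MvPolynomial (Fin m) K ≃ₐ[K] Polynomial (MvPolynomial τ K) :=
    (renameEquiv K e0).trans (optionEquivLeft K τ)
  -- f comes from the small polynomial ring
  rw [supported_eq_range_rename, AlgHom.mem_range] at hf
  obtain ⟨f', hf'⟩ := hf
  -- computation of e on generators
  have he0i : e0 i = none := by
    simp [e0, Equiv.optionSubtypeNe_symm_self]
  have heX : e (X i) = Polynomial.X := by
    show optionEquivLeft K τ (renameEquiv K e0 (X i)) = Polynomial.X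
    rw [renameEquiv_apply, rename_X, he0i, optionEquivLeft_X_none]
  have he0some : (fun j : τ => e0 (j : Fin m)) = fun j : τ => some j := by
    funext j
    have hji : (j : Fin m) ≠ i := by
      have := j.2
      rw [← hmem] at this
      exact this
    show (Equiv.optionCongr (Equiv.subtypeEquivRight hmem))
        ((Equiv.optionSubtypeNe i).symm (j : Fin m)) = some j
    rw [Equiv.optionSubtypeNe_symm_of_ne hji]
    rfl
  have heF : e f = Polynomial.C f' := by
    show optionEquivLeft K τ (renameEquiv K e0 f) = Polynomial.C f'
    have hc : ⇑e0 ∘ (Subtype.val : τ → Fin m) = fun j : τ => some j := he0some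
    rw [← hf', renameEquiv_apply, rename_rename, hc]
    exact optionEquivLeft_rename_some f'
  -- f' is prime
  have hinj : Function.Injective (Subtype.val : τ → Fin m) := Subtype.val_injective
  have hf'irr : Irreducible f' := by
    constructor
    · intro hu
      exact hirr.not_isUnit (hf' ▸ hu.map (rename (Subtype.val : τ → Fin m)))
    · intro g h hgh
      have : f = rename (Subtype.val : τ → Fin m) g *
          rename (Subtype.val : τ → Fin m) h := by
        rw [← hf', hgh, map_mul]
      rcases hirr.isUnit_or_isUnit this with hu | hu
      · left
        have := hu.map (killCompl hinj)
        rwa [killCompl_rename_app] at this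
      · right
        have := hu.map (killCompl hinj)
        rwa [killCompl_rename_app] at this
  have hf'prime : Prime f' :=
    (UniqueFactorizationMonoid.irreducible_iff_prime).mp hf'irr
  -- transfer
  set M : Ideal (Polynomial (MvPolynomial τ K)) :=
    Ideal.span {Polynomial.X, Polynomial.C f'} with hM
  set ee : MvPolynomial (Fin m) K ≃+* Polynomial (MvPolynomial τ K) :=
    e.toRingEquiv with hee
  set eh : MvPolynomial (Fin m) K →+* Polynomial (MvPolynomial τ K) :=
    (ee : MvPolynomial (Fin m) K →+* Polynomial (MvPolynomial τ K)) with heh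
  have hmap : (Ideal.span {X i, f}).map eh = M := by
    rw [Ideal.map_span, Set.image_pair]
    have h1 : eh (X i) = Polynomial.X := heX
    have h2 : eh f = Polynomial.C f' := heF
    rw [h1, h2]
  have hcomap : Ideal.span {X i, f} = M.comap eh := by
    rw [← hmap, Ideal.comap_map_of_bijective eh ee.bijective]
  have hcomap_pow : (Ideal.span {X i, f} : Ideal (MvPolynomial (Fin m) K)) ^ a =
      (M ^ a).comap eh := by
    rw [← hmap, ← Ideal.map_pow, Ideal.comap_map_of_bijective eh ee.bijective]
  obtain ⟨hprimary, hrad⟩ := poly_core hf'prime ha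
  constructor
  · rw [hcomap_pow]
    exact comap_isPrimary ee hprimary
  · rw [hcomap_pow, ← Ideal.comap_radical, hM, hrad, ← hM]
    exact hcomap.symm
end

section
/- In the polynomial ring R = K[x_1, x_2, x_3] over a field K (e.g. K = ℚ), consider the ideals I_1 = (x_1, x_2 + x_3), I_2 = (x_2, x_3 + x_1), I_3 = (x_3, x_1 + x_2). Then x_1 + x_2 + x_3 lies in I_1 ∩ I_2 ∩ I_3 but not in the product ideal I_1 · I_2 · I_3. -/
open MvPolynomial

/-- For the cyclic A₃ seed, `x₁+x₂+x₃` is in the intersection of the ideals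
`I₁ = (x₁, x₂+x₃)`, `I₂ = (x₂, x₃+x₁)`, `I₃ = (x₃, x₁+x₂)` but not in their product. -/
theorem stmt_6 :
    let R := MvPolynomial (Fin 3) ℚ
    let I1 : Ideal R := Ideal.span {X 0, X 1 + X 2}
    let I2 : Ideal R := Ideal.span {X 1, X 2 + X 0}
    let I3 : Ideal R := Ideal.span {X 2, X 0 + X 1}
    (X 0 + X 1 + X 2 : R) ∈ I1 ⊓ I2 ⊓ I3 ∧ (X 0 + X 1 + X 2 : R) ∉ I1 * I2 * I3 := by
  intro R I1 I2 I3
  constructor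
  · refine ⟨⟨?_, ?_⟩, ?_⟩
    · have h : (X 0 + X 1 + X 2 : R) = X 0 + (X 1 + X 2) := by ring
      rw [h]
      exact Ideal.add_mem _ (Ideal.subset_span (Set.mem_insert _ _))
        (Ideal.subset_span (Set.mem_insert_of_mem _ rfl))
    · have h : (X 0 + X 1 + X 2 : R) = X 1 + (X 2 + X 0) := by ring
      rw [h]
      exact Ideal.add_mem _ (Ideal.subset_span (Set.mem_insert _ _))
        (Ideal.subset_span (Set.mem_insert_of_mem _ rfl))
    · have h : (X 0 + X 1 + X 2 : R) = X 2 + (X 0 + X 1) := by ring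
      rw [h]
      exact Ideal.add_mem _ (Ideal.subset_span (Set.mem_insert _ _))
        (Ideal.subset_span (Set.mem_insert_of_mem _ rfl))
  · intro hmem
    -- map xᵢ ↦ t into ℚ[t]
    set ψ : R →+* Polynomial ℚ :=
      (aeval (fun _ : Fin 3 => (Polynomial.X : Polynomial ℚ))).toRingHom with hψ
    have hX : ∀ i : Fin 3, ψ (X i) = Polynomial.X := by
      intro i; exact aeval_X _ i
    have hmap : ∀ I : Ideal R, (∀ g ∈ ({X 0, X 1 + X 2} : Set R) ∪ {X 1, X 2 + X 0}
        ∪ {X 2, X 0 + X 1}, True) → True := fun _ _ => trivial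
    have hIle : ∀ i : Fin 3,
        Ideal.map ψ (Ideal.span ({X i, X ((i+1) % 3) + X ((i+2) % 3)} : Set R))
          ≤ Ideal.span {Polynomial.X} := by
      intro i
      rw [Ideal.map_span, Ideal.span_le]
      rintro p ⟨q, hq, rfl⟩
      rcases hq with rfl | rfl
      · exact Ideal.subset_span (by simp [hX])
      · refine Ideal.mem_span_singleton.mpr ⟨2, ?_⟩
        simp [map_add, hX]; ring
    have h1 : Ideal.map ψ I1 ≤ Ideal.span {Polynomial.X} := by
      have := hIle 0; simpa using this
    have h2 : Ideal.map ψ I2 ≤ Ideal.span {Polynomial.X} := by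
      have := hIle 1; simpa using this
    have h3 : Ideal.map ψ I3 ≤ Ideal.span {Polynomial.X} := by
      have := hIle 2; simpa using this
    have hprod : ψ (X 0 + X 1 + X 2) ∈
        (Ideal.span {(Polynomial.X : Polynomial ℚ)}) ^ 3 := by
      have h' : ψ (X 0 + X 1 + X 2) ∈ Ideal.map ψ (I1 * I2 * I3) :=
        Ideal.mem_map_of_mem ψ hmem
      rw [Ideal.map_mul, Ideal.map_mul] at h'
      have : Ideal.map ψ I1 * Ideal.map ψ I2 * Ideal.map ψ I3 ≤
          (Ideal.span {(Polynomial.X : Polynomial ℚ)}) ^ 3 := by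
        calc Ideal.map ψ I1 * Ideal.map ψ I2 * Ideal.map ψ I3
            ≤ Ideal.span {(Polynomial.X : Polynomial ℚ)} *
              Ideal.span {(Polynomial.X : Polynomial ℚ)} *
              Ideal.span {(Polynomial.X : Polynomial ℚ)} :=
              mul_le_mul' (mul_le_mul' h1 h2) h3
          _ = (Ideal.span {(Polynomial.X : Polynomial ℚ)}) ^ 3 := by ring
      exact this h'
    rw [Ideal.span_singleton_pow, Ideal.mem_span_singleton] at hprod
    have hval : ψ (X 0 + X 1 + X 2) = 3 * Polynomial.X := by
      simp [map_add, hX]; ring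
    rw [hval] at hprod
    have hne : (3 * Polynomial.X : Polynomial ℚ) ≠ 0 := by
      intro h
      have := congrArg (Polynomial.coeff · 1) h
      simp at this
    have := Polynomial.natDegree_le_of_dvd hprod hne
    simp [Polynomial.natDegree_X_pow] at this
end

section
/- Let A ⊆ ℂ[x_1^{±1}, x_2^{±1}] be the subring generated by x_1, x_2, (1+x_2^2)/x_1, and (1+x_1^2)/x_2 (the coefficient-free Kronecker cluster algebra over ℂ). Then x_1 is not a prime element of A. -/
open MvPolynomial
set_option synthInstance.maxHeartbeats 1000000
set_option maxHeartbeats 1000000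

noncomputable section KroneckerAux

abbrev Rk := MvPolynomial (Fin 2) ℂ
abbrev Fk := FractionRing Rk

def evk (u : ℂ) : Rk →ₐ[ℂ] Polynomial ℂ := aeval ![Polynomial.X, Polynomial.C (-u)]

def Bk (u : ℂ) : Subalgebra ℂ Fk where
  carrier := {z | ∃ f g : Rk, evk u g ≠ 0 ∧ z * algebraMap Rk Fk g = algebraMap Rk Fk f ∧
    evk u g ∣ evk u f}
  mul_mem' := by
    rintro z1 z2 ⟨f1, g1, hg1, e1, d1⟩ ⟨f2, g2, hg2, e2, d2⟩
    refine ⟨f1 * f2, g1 * g2, by simp [mul_ne_zero hg1 hg2], ?_, ?_⟩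
    · rw [map_mul, map_mul]
      linear_combination (z2 * algebraMap Rk Fk g2) * e1 + algebraMap Rk Fk f1 * e2
    · rw [map_mul, map_mul]; exact mul_dvd_mul d1 d2
  add_mem' := by
    rintro z1 z2 ⟨f1, g1, hg1, e1, d1⟩ ⟨f2, g2, hg2, e2, d2⟩
    refine ⟨f1 * g2 + f2 * g1, g1 * g2, by simp [mul_ne_zero hg1 hg2], ?_, ?_⟩
    · rw [map_add, map_mul, map_mul, map_mul]
      linear_combination algebraMap Rk Fk g2 * e1 + algebraMap Rk Fk g1 * e2
    · rw [map_add, map_mul, map_mul, map_mul]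
      exact dvd_add (mul_dvd_mul d1 dvd_rfl)
        (by rw [mul_comm ((evk u) f2)]; exact mul_dvd_mul dvd_rfl d2)
  algebraMap_mem' := by
    intro c
    refine ⟨C c, 1, by simp, ?_, by simp⟩
    rw [map_one, mul_one, IsScalarTower.algebraMap_apply ℂ Rk Fk]
    rfl


def x₁k : Fk := algebraMap Rk Fk (X 0)
def x₂k : Fk := algebraMap Rk Fk (X 1)

lemma x₁k_ne : x₁k ≠ 0 := by
  simpa [x₁k] using
    (map_ne_zero_iff (algebraMap Rk Fk) (IsFractionRing.injective Rk Fk)).mpr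
      (X_ne_zero (R := ℂ) (n := 0))

lemma x₂k_ne : x₂k ≠ 0 := by
  simpa [x₂k] using
    (map_ne_zero_iff (algebraMap Rk Fk) (IsFractionRing.injective Rk Fk)).mpr
      (X_ne_zero (R := ℂ) (n := 1))

lemma adjoin_le_Bk (u : ℂ) (hu : u * u = -1) :
    Algebra.adjoin ℂ ({x₁k, x₂k, (1 + x₂k ^ 2) / x₁k, (1 + x₁k ^ 2) / x₂k} : Set Fk) ≤ Bk u := by
  have hune : u ≠ 0 := by rintro rfl; simpa using hu
  apply Algebra.adjoin_le
  rintro z hz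
  simp only [Set.mem_insert_iff, Set.mem_singleton_iff] at hz
  rcases hz with rfl | rfl | rfl | rfl
  · exact ⟨X 0, 1, by simp [evk], by simp [x₁k], by simp⟩
  · exact ⟨X 1, 1, by simp [evk], by simp [x₂k], by simp⟩
  · refine ⟨1 + (X 1) ^ 2, X 0, by simp [evk], ?_, ?_⟩
    · rw [show (algebraMap Rk Fk) (X 0) = x₁k from rfl, div_mul_cancel₀ _ x₁k_ne]
      simp [x₂k, map_add, map_pow, map_one]
    · have : evk u (1 + (X 1) ^ 2) = 0 := by
        have h1 : evk u (X 1) = Polynomial.C (-u) := by simp [evk]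
        rw [map_add, map_one, map_pow, h1, ← Polynomial.C_pow,
          show (-u) ^ 2 = -1 by linear_combination hu]
        simp
      rw [this]
      exact dvd_zero _
  · refine ⟨1 + (X 0) ^ 2, X 1, by simp [evk, hune], ?_, ?_⟩
    · rw [show (algebraMap Rk Fk) (X 1) = x₂k from rfl, div_mul_cancel₀ _ x₂k_ne]
      simp [x₁k, map_add, map_pow, map_one]
    · have : evk u (X 1) = Polynomial.C (-u) := by simp [evk]
      rw [this]
      exact (Polynomial.isUnit_C.mpr (isUnit_iff_ne_zero.mpr (neg_ne_zero.mpr hune))).dvd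

lemma key (u : ℂ) (hu : u * u = -1) (s : Fk)
    (hs : s ∈ Algebra.adjoin ℂ
      ({x₁k, x₂k, (1 + x₂k ^ 2) / x₁k, (1 + x₁k ^ 2) / x₂k} : Set Fk))
    (hx : x₁k * s = 1 + algebraMap ℂ Fk u * x₂k) : False := by
  obtain ⟨f, g, hg, e, h, hh⟩ := adjoin_le_Bk u hu hs
  -- equation in Fk
  have hconst : algebraMap ℂ Fk u = algebraMap Rk Fk (C u) := by
    rw [IsScalarTower.algebraMap_apply ℂ Rk Fk]; rfl
  have eF : algebraMap Rk Fk (X 0 * f) = algebraMap Rk Fk ((1 + C u * X 1) * g) := by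
    rw [map_mul, map_mul, map_add, map_mul, map_one, ← hconst]
    calc algebraMap Rk Fk (X 0) * algebraMap Rk Fk f
        = x₁k * (s * algebraMap Rk Fk g) := by rw [e]; rfl
      _ = (x₁k * s) * algebraMap Rk Fk g := by ring
      _ = (1 + algebraMap ℂ Fk u * x₂k) * algebraMap Rk Fk g := by rw [hx]
  have eR : X 0 * f = (1 + C u * X 1) * g := IsFractionRing.injective Rk Fk eF
  have eP := congrArg (evk u) eR
  simp only [map_mul, map_add, map_one] at eP
  have h0 : evk u (X 0) = Polynomial.X := by simp [evk]
  have h1 : evk u (X 1) = Polynomial.C (-u) := by simp [evk]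
  have h2 : evk u (C u) = Polynomial.C u := by simp [evk]
  rw [h0, h1, h2, hh] at eP
  have hC : (1 : Polynomial ℂ) + Polynomial.C u * Polynomial.C (-u) = 2 := by
    rw [← Polynomial.C_mul]
    rw [show u * -u = 1 by linear_combination -hu]
    norm_num
  rw [hC] at eP
  -- eP : X * (evk u g * h) = 2 * evk u g
  have : Polynomial.X * h = 2 := by
    have := mul_right_cancel₀ hg (show (Polynomial.X * h) * evk u g = 2 * evk u g by
      linear_combination eP)
    exact this
  have := congrArg (Polynomial.eval 0) this
  simp at this

end KroneckerAux

/-- In the Kronecker cluster algebra over ℂ, the cluster variable `x₁` is not prime. -/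
theorem stmt_8 :
    let R := MvPolynomial (Fin 2) ℂ
    let F := FractionRing R
    let x1 : F := algebraMap R F (X 0)
    let x2 : F := algebraMap R F (X 1)
    let A := Algebra.adjoin ℂ ({x1, x2, (1 + x2 ^ 2) / x1, (1 + x1 ^ 2) / x2} : Set F)
    ∀ h : x1 ∈ A, ¬ Prime (⟨x1, h⟩ : A) := by
  intro R F x1 x2 A h hp
  have hι : (algebraMap ℂ Fk Complex.I) * (algebraMap ℂ Fk Complex.I) = -1 := by
    rw [← map_mul, Complex.I_mul_I, map_neg, map_one]
  set ι : Fk := algebraMap ℂ Fk Complex.I with hιdef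
  have hx2A : x₂k ∈ A := Algebra.subset_adjoin (by right; left; rfl)
  have haA : 1 + ι * x₂k ∈ A :=
    A.add_mem A.one_mem (A.mul_mem (A.algebraMap_mem _) hx2A)
  have hbA : 1 - ι * x₂k ∈ A :=
    A.sub_mem A.one_mem (A.mul_mem (A.algebraMap_mem _) hx2A)
  have hx1' : (1 + x₂k ^ 2) / x₁k ∈ A := Algebra.subset_adjoin (by
    right; right; left; rfl)
  have hprod : (⟨x1, h⟩ : A) ∣ ⟨1 + ι * x₂k, haA⟩ * ⟨1 - ι * x₂k, hbA⟩ := by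
    refine ⟨⟨(1 + x₂k ^ 2) / x₁k, hx1'⟩, Subtype.ext ?_⟩
    show (1 + ι * x₂k) * (1 - ι * x₂k) = x₁k * ((1 + x₂k ^ 2) / x₁k)
    rw [mul_comm x₁k, div_mul_cancel₀ _ x₁k_ne]
    linear_combination -(x₂k * x₂k) * hι
  rcases hp.2.2 _ _ hprod with ⟨c, hc⟩ | ⟨c, hc⟩
  · have hval : 1 + ι * x₂k = x₁k * c.1 := congrArg Subtype.val hc
    exact key Complex.I (by rw [Complex.I_mul_I]) c.1 c.2 hval.symm
  · have hval : 1 - ι * x₂k = x₁k * c.1 := congrArg Subtype.val hc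
    refine key (-Complex.I) (by rw [neg_mul_neg, Complex.I_mul_I]) c.1 c.2 ?_
    rw [map_neg, ← hιdef]
    linear_combination -hval
end

section
/- Let K be a field and R = K[x_1,...,x_m]. Suppose f = x_l + M where l ≠ i is an index and M is a monomial not involving x_l, and set I = (x_i, f). Then R = K[x_1,...,x̂_l,...,x_m][f] (i.e., every polynomial P ∈ R can be written uniquely as P = Σ_{r≥0} A_r f^r with A_r polynomials not involving x_l), and P ∈ I^a if and only if x_i^{a-r} divides A_r for all 0 ≤ r ≤ a. -/
section PolyLemma

variable {T : Type*} [CommRing T]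

private def Dvdc (y : T) (a : ℕ) (q : Polynomial T) : Prop := ∀ r ≤ a, y ^ (a - r) ∣ q.coeff r

private lemma Dvdc_add {y : T} {a : ℕ} {p q : Polynomial T} (hp : Dvdc y a p) (hq : Dvdc y a q) :
    Dvdc y a (p + q) := fun r hr => by
  rw [Polynomial.coeff_add]; exact dvd_add (hp r hr) (hq r hr)

private lemma Dvdc_mul {y : T} {a : ℕ} (g : Polynomial T) {q : Polynomial T} (hq : Dvdc y a q) :
    Dvdc y a (g * q) := fun r hr => by
  rw [Polynomial.coeff_mul]
  refine Finset.dvd_sum fun p hp => ?_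
  have hp2 : p.2 ≤ r := by
    have := Finset.HasAntidiagonal.mem_antidiagonal.mp hp
    omega
  exact ((pow_dvd_pow y (by omega)).trans (hq p.2 (hp2.trans hr))).mul_left _

private lemma Dvdc_C_mul {y : T} {a : ℕ} {q : Polynomial T} (hq : Dvdc y a q) :
    Dvdc y (a + 1) (Polynomial.C y * q) := fun r hr => by
  rw [Polynomial.coeff_C_mul]
  rcases le_or_gt r a with h | h
  · have : a + 1 - r = (a - r) + 1 := by omega
    rw [this, pow_succ, mul_comm y (q.coeff r)]
    exact mul_dvd_mul (hq r h) dvd_rfl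
  · have : a + 1 - r = 0 := by omega
    rw [this, pow_zero]; exact one_dvd _
private lemma Dvdc_X_mul {y : T} {a : ℕ} {q : Polynomial T} (hq : Dvdc y a q) :
    Dvdc y (a + 1) (Polynomial.X * q) := fun r hr => by
  match r with
  | 0 => rw [Polynomial.mul_coeff_zero, Polynomial.coeff_X_zero, zero_mul]; exact dvd_zero _
  | (n+1) =>
    rw [Polynomial.coeff_X_mul]
    have : a + 1 - (n + 1) = a - n := by omega
    rw [this]; exact hq n (by omega)

lemma mem_span_pow_iff (y : T) (a : ℕ) (q : Polynomial T) :
    q ∈ (Ideal.span {Polynomial.C y, Polynomial.X}) ^ a ↔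
      ∀ r ≤ a, y ^ (a - r) ∣ q.coeff r := by
  constructor
  · intro hq
    induction a generalizing q with
    | zero => intro r hr; interval_cases r; simpa using one_dvd _
    | succ a ih =>
      rw [pow_succ] at hq
      refine Submodule.mul_induction_on hq (fun u hu v hv => ?_)
        (fun x z hx hz => Dvdc_add hx hz)
      have hu' : Dvdc y a u := ih u hu
      obtain ⟨p, s, hps⟩ := Ideal.mem_span_pair.mp hv
      have : u * v = Polynomial.C y * (p * u) + Polynomial.X * (s * u) := by
        rw [← hps]; ring
      rw [this]
      exact Dvdc_add (Dvdc_C_mul (Dvdc_mul p hu')) (Dvdc_X_mul (Dvdc_mul s hu'))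
  · intro h
    have hCy : Polynomial.C y ∈ Ideal.span {Polynomial.C y, Polynomial.X} :=
      Ideal.subset_span (Set.mem_insert _ _)
    have hX : (Polynomial.X : Polynomial T) ∈ Ideal.span {Polynomial.C y, Polynomial.X} :=
      Ideal.subset_span (Set.mem_insert_of_mem _ rfl)
    rw [← Polynomial.sum_C_mul_X_pow_eq q, Polynomial.sum]
    refine Ideal.sum_mem _ fun r hr => ?_
    rcases le_or_gt r a with h' | h'
    · obtain ⟨b, hb⟩ := h r h'
      rw [hb, map_mul, mul_comm (Polynomial.C (y ^ (a - r))) (Polynomial.C b), mul_assoc]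
      refine Ideal.mul_mem_left _ _ ?_
      rw [map_pow]
      have : Polynomial.C y ^ (a - r) * Polynomial.X ^ r ∈
          (Ideal.span {Polynomial.C y, Polynomial.X}) ^ (a - r) *
          (Ideal.span {Polynomial.C y, Polynomial.X}) ^ r :=
        Ideal.mul_mem_mul (Ideal.pow_mem_pow hCy _) (Ideal.pow_mem_pow hX _)
      rwa [← pow_add, Nat.sub_add_cancel h'] at this
    · refine Ideal.mul_mem_left _ _ ?_
      exact Ideal.pow_le_pow_right h'.le (Ideal.pow_mem_pow hX _)

end PolyLemma

private lemma hCdvd {T : Type*} [CommRing T] (u v : T) :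
    (Polynomial.C u ∣ Polynomial.C v) ↔ u ∣ v := by
  constructor
  · rintro ⟨g, hg⟩
    refine ⟨g.coeff 0, ?_⟩
    have := congrArg (fun p => Polynomial.coeff p 0) hg
    simpa using this
  · rintro ⟨w, hw⟩
    exact ⟨Polynomial.C w, by rw [hw, map_mul]⟩

open MvPolynomial

/-- If `f = x_l + M` with `M` a monomial not involving `x_l`, then every `P` has a unique
expansion `P = Σ A_r f^r` with the `A_r` not involving `x_l`, and `P ∈ (x_i, f)^a` iff
`x_i^(a-r) ∣ A_r` for all `r ≤ a`. -/
theorem stmt_15 {K : Type*} [Field K] {m : ℕ} (i l : Fin m) (hil : i ≠ l)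
    (d : Fin m →₀ ℕ) (c : K) (hc : c ≠ 0) (hd : d l = 0)
    (f : MvPolynomial (Fin m) K) (hf : f = X l + monomial d c) :
    (∀ P : MvPolynomial (Fin m) K,
      ∃! A : ℕ →₀ MvPolynomial (Fin m) K,
        (∀ r, A r ∈ supported K ({l}ᶜ : Set (Fin m))) ∧
          P = A.sum fun r Ar => Ar * f ^ r) ∧
    (∀ (P : MvPolynomial (Fin m) K) (a : ℕ) (A : ℕ →₀ MvPolynomial (Fin m) K),
      (∀ r, A r ∈ supported K ({l}ᶜ : Set (Fin m))) →
      P = (A.sum fun r Ar => Ar * f ^ r) →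
      (P ∈ (Ideal.span {X i, f}) ^ a ↔ ∀ r ≤ a, (X i : MvPolynomial (Fin m) K) ^ (a - r) ∣ A r)) := by
  classical
  -- Step 1: build the algebra equivalence
  have hmono : ∀ g : Fin m → MvPolynomial (Fin m) K, (∀ j, j ≠ l → g j = X j) →
      aeval g (monomial d c) = monomial d c := by
    intro g hg
    rw [aeval_monomial, monomial_eq, algebraMap_eq]
    congr 1
    refine Finsupp.prod_congr fun j hj => ?_
    have hjl : j ≠ l := by
      rintro rfl
      exact (Finsupp.mem_support_iff.mp hj) hd
    rw [hg j hjl]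
  obtain ⟨Φ, hΦX, hΦf⟩ :
      ∃ Φ : MvPolynomial (Fin m) K ≃ₐ[K]
        Polynomial (MvPolynomial {b : Fin m // b ≠ l} K),
        (∀ (j : Fin m) (h : j ≠ l), Φ (X j) = Polynomial.C (X ⟨j, h⟩)) ∧
          Φ f = Polynomial.X := by
    set gσ : Fin m → MvPolynomial (Fin m) K :=
      fun j => if j = l then X l - monomial d c else X j with hgσ
    set gτ : Fin m → MvPolynomial (Fin m) K :=
      fun j => if j = l then X l + monomial d c else X j with hgτ
    have hgσ' : ∀ j, j ≠ l → gσ j = X j := fun j h => by simp [hgσ, if_neg h]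
    have hgτ' : ∀ j, j ≠ l → gτ j = X j := fun j h => by simp [hgτ, if_neg h]
    have hgσl : gσ l = X l - monomial d c := by simp [hgσ]
    have hgτl : gτ l = X l + monomial d c := by simp [hgτ]
    have key1 : (aeval gσ).comp (aeval gτ) = AlgHom.id K (MvPolynomial (Fin m) K) := by
      apply algHom_ext
      intro j
      simp only [AlgHom.comp_apply, aeval_X, AlgHom.id_apply]
      by_cases h : j = l
      · rw [h, hgτl, map_add, aeval_X, hgσl, hmono gσ hgσ']
        ring
      · rw [hgτ' j h, aeval_X, hgσ' j h]
    have key2 : (aeval gτ).comp (aeval gσ) = AlgHom.id K (MvPolynomial (Fin m) K) := by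
      apply algHom_ext
      intro j
      simp only [AlgHom.comp_apply, aeval_X, AlgHom.id_apply]
      by_cases h : j = l
      · rw [h, hgσl, map_sub, aeval_X, hgτl, hmono gτ hgτ']
        ring
      · rw [hgσ' j h, aeval_X, hgτ' j h]
    set Φσ : MvPolynomial (Fin m) K ≃ₐ[K] MvPolynomial (Fin m) K :=
      AlgEquiv.ofAlgHom (aeval gσ) (aeval gτ) key1 key2 with hΦσ
    have hΦσ_apply : ∀ p, Φσ p = aeval gσ p := fun p => rfl
    set e : Option {b : Fin m // b ≠ l} ≃ Fin m := Equiv.optionSubtypeNe l with he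
    set Φ0 : MvPolynomial (Fin m) K ≃ₐ[K]
        Polynomial (MvPolynomial {b : Fin m // b ≠ l} K) :=
      (renameEquiv K e.symm).trans (optionEquivLeft K {b : Fin m // b ≠ l}) with hΦ0
    refine ⟨Φσ.trans Φ0, fun j h => ?_, ?_⟩
    · have h1 : Φσ (X j) = X j := by
        rw [hΦσ_apply, aeval_X, hgσ' j h]
      show Φ0 (Φσ (X j)) = _
      rw [h1, hΦ0]
      show optionEquivLeft K _ (rename e.symm (X j)) = _
      rw [rename_X, show e.symm j = some ⟨j, h⟩ from Equiv.optionSubtypeNe_symm_of_ne h,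
        optionEquivLeft_X_some]
    · have h1 : Φσ f = X l := by
        rw [hΦσ_apply, hf, map_add, aeval_X, hgσl, hmono gσ hgσ']
        ring
      show Φ0 (Φσ f) = _
      rw [h1, hΦ0]
      show optionEquivLeft K _ (rename e.symm (X l)) = _
      rw [rename_X, show e.symm l = none from Equiv.optionSubtypeNe_symm_self l,
        optionEquivLeft_X_none]
  -- The "coefficient extraction" homomorphism
  set ρ : MvPolynomial (Fin m) K →ₐ[K] MvPolynomial {b : Fin m // b ≠ l} K :=
    aeval (fun j => if h : j = l then 0 else X ⟨j, h⟩) with hρ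
  have hρX : ∀ (j : Fin m) (h : j ≠ l), ρ (X j) = X ⟨j, h⟩ := by
    intro j h
    rw [hρ, aeval_X, dif_neg h]
  have hmem_ne : ∀ j : Fin m, j ∈ ({l}ᶜ : Set (Fin m)) ↔ j ≠ l := fun j => Iff.rfl
  have hsupp : ∀ A ∈ supported K ({l}ᶜ : Set (Fin m)), Φ A = Polynomial.C (ρ A) := by
    intro A hA
    have hA' : A ∈ Algebra.adjoin K (X '' ({l}ᶜ : Set (Fin m))) := by
      rwa [← supported_eq_adjoin_X]
    refine Algebra.adjoin_induction (fun x hx => ?_) (fun r => ?_)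
      (fun x y _ _ hx hy => ?_) (fun x y _ _ hx hy => ?_) hA'
    · obtain ⟨j, hj, rfl⟩ := hx
      have hj' : j ≠ l := (hmem_ne j).mp hj
      rw [hΦX j hj', hρX j hj']
    · rw [AlgEquiv.commutes, AlgHom.commutes, Polynomial.algebraMap_apply]
    · rw [map_add, map_add, hx, hy, map_add]
    · rw [map_mul, map_mul, hx, hy, map_mul]
  have hsymmC : ∀ t, Φ.symm (Polynomial.C t) ∈ supported K ({l}ᶜ : Set (Fin m)) := by
    intro t
    induction t using MvPolynomial.induction_on with
    | C c =>
      have h1 : (Polynomial.C (C c) : Polynomial (MvPolynomial {b : Fin m // b ≠ l} K))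
          = algebraMap K _ c := by
        rw [Polynomial.algebraMap_apply, algebraMap_eq]
      rw [h1, AlgEquiv.commutes]
      exact Subalgebra.algebraMap_mem _ c
    | add p q hp hq => rw [map_add, map_add]; exact add_mem hp hq
    | mul_X p j hp =>
      rw [map_mul, map_mul]
      refine mul_mem hp ?_
      have h1 : Φ.symm (Polynomial.C (X j)) = X j.1 := by
        rw [AlgEquiv.symm_apply_eq, hΦX j.1 j.2, Subtype.eta]
      rw [h1]
      exact X_mem_supported.mpr ((hmem_ne j.1).mpr j.2)
  have hρsymm : ∀ t, ρ (Φ.symm (Polynomial.C t)) = t := by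
    intro t
    have h1 := hsupp _ (hsymmC t)
    rw [AlgEquiv.apply_symm_apply] at h1
    exact (Polynomial.C_injective h1).symm
  have hcoeff : ∀ (B : ℕ →₀ MvPolynomial (Fin m) K),
      (∀ r, B r ∈ supported K ({l}ᶜ : Set (Fin m))) →
      ∀ s, (Φ (B.sum fun r Br => Br * f ^ r)).coeff s = ρ (B s) := by
    intro B hB s
    rw [Finsupp.sum, map_sum, Polynomial.finset_sum_coeff]
    have h1 : ∀ r ∈ B.support,
        (Φ (B r * f ^ r)).coeff s = if s = r then ρ (B r) else 0 := by
      intro r _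
      rw [map_mul, map_pow, hΦf, hsupp _ (hB r), Polynomial.coeff_C_mul,
        Polynomial.coeff_X_pow, mul_ite, mul_one, mul_zero]
    rw [Finset.sum_congr rfl h1, Finset.sum_ite_eq]
    by_cases hs : s ∈ B.support
    · rw [if_pos hs]
    · rw [if_neg hs, Finsupp.notMem_support_iff.mp hs, map_zero]
  constructor
  · -- existence and uniqueness
    intro P
    set A : ℕ →₀ MvPolynomial (Fin m) K :=
      Finsupp.mapRange (fun t => Φ.symm (Polynomial.C t))
        (by simp) (Φ P).toFinsupp.coeff with hA
    have hAapp : ∀ r, A r = Φ.symm (Polynomial.C ((Φ P).coeff r)) := by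
      intro r
      rw [hA, Finsupp.mapRange_apply]
      rfl
    have hAsupp : ∀ r, A r ∈ supported K ({l}ᶜ : Set (Fin m)) := by
      intro r; rw [hAapp]; exact hsymmC _
    have hAeq : P = A.sum fun r Ar => Ar * f ^ r := by
      apply Φ.injective
      apply Polynomial.ext
      intro s
      rw [hcoeff A hAsupp s, hAapp, hρsymm]
    refine ⟨A, ⟨hAsupp, hAeq⟩, ?_⟩
    rintro B ⟨hB1, hB2⟩
    ext s
    have h1 : ρ (B s) = (Φ P).coeff s := by
      rw [hB2]; exact (hcoeff B hB1 s).symm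
    have h2 : Φ (B s) = Polynomial.C ((Φ P).coeff s) := by
      rw [hsupp _ (hB1 s), h1]
    rw [hAapp, ← h2, AlgEquiv.symm_apply_apply]
  · -- ideal membership criterion
    intro P a A hA1 hP
    have hc' : ∀ s, (Φ P).coeff s = ρ (A s) := fun s => by
      rw [hP]; exact hcoeff A hA1 s
    have hmem : P ∈ (Ideal.span {X i, f}) ^ a ↔
        Φ P ∈ Ideal.map Φ ((Ideal.span {X i, f}) ^ a) := by
      constructor
      · exact fun h => Ideal.mem_map_of_mem _ h
      · intro h
        obtain ⟨x, hx, hxP⟩ := (Ideal.mem_map_iff_of_surjective _ Φ.surjective).mp h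
        rwa [← Φ.injective hxP]
    have hIa : Ideal.map Φ ((Ideal.span {X i, f}) ^ a) =
        (Ideal.span {Polynomial.C (X (⟨i, hil⟩ : {b : Fin m // b ≠ l})), Polynomial.X}) ^ a := by
      rw [Ideal.map_pow, Ideal.map_span, Set.image_insert_eq, Set.image_singleton,
        hΦX i hil, hΦf]
    rw [hmem, hIa, mem_span_pow_iff]
    have hdvd : ∀ r, ((X i : MvPolynomial (Fin m) K) ^ (a - r) ∣ A r) ↔
        (X (⟨i, hil⟩ : {b : Fin m // b ≠ l}) ^ (a - r) ∣ ρ (A r)) := by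
      intro r
      constructor
      · intro h
        have h2 := map_dvd Φ h
        rw [map_pow, hΦX i hil, hsupp _ (hA1 r), ← Polynomial.C_pow] at h2
        exact (hCdvd _ _).mp h2
      · intro h
        have h2 : (Polynomial.C (X (⟨i, hil⟩ : {b : Fin m // b ≠ l}) ^ (a - r)) :
            Polynomial (MvPolynomial {b : Fin m // b ≠ l} K)) ∣ Polynomial.C (ρ (A r)) :=
          map_dvd (Polynomial.C : _ →+* _) h
        rw [Polynomial.C_pow, ← hΦX i hil, ← map_pow, ← hsupp _ (hA1 r)] at h2
        have h3 := map_dvd Φ.symm h2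
        rwa [AlgEquiv.symm_apply_apply, AlgEquiv.symm_apply_apply] at h3
    constructor
    · intro h r hr
      rw [hdvd r, ← hc' r]
      exact h r hr
    · intro h r hr
      rw [hc' r, ← hdvd r]
      exact h r hr
end

section
/- In R = ℚ[x_1,...,x_n] (n ≥ 4) with the ideals I_i = (x_i, f_i) of the linearly oriented A_n quiver (f_1 = 1+x_2, f_i = x_{i-1}+x_{i+1} for 2 ≤ i ≤ n-1, f_n = 1+x_{n-1}), for every tuple (a_1,...,a_n) ∈ ℕ^n one has I_1^{a_1} ∩ I_2^{a_2} ∩ ... ∩ I_n^{a_n} = I_1^{a_1} · I_2^{a_2} ··· I_n^{a_n}. -/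
set_option maxHeartbeats 1000000

open MvPolynomial

namespace A16

variable {n : ℕ}

abbrev Rg (n : ℕ) := MvPolynomial (Fin n) ℚ

/-- `w` is a nonzerodivisor modulo `A` (colon-stability). -/
def Stab (A : Ideal (Rg n)) (w : Rg n) : Prop := ∀ g, g * w ∈ A → g ∈ A

theorem Stab.pow {A : Ideal (Rg n)} {w : Rg n} (h : Stab A w) (m : ℕ) : Stab A (w ^ m) := by
  induction m with
  | zero => intro g hg; simpa using hg
  | succ m ih =>
    intro g hg
    have h1 : g * w ^ m * w ∈ A := by rw [mul_assoc, ← pow_succ]; exact hg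
    exact ih g (h _ h1)

theorem stab_top {w : Rg n} : Stab (⊤ : Ideal (Rg n)) w := fun g _ => trivial

theorem mem_add_iff {A B : Ideal (Rg n)} {x : Rg n} :
    x ∈ A ⊔ B ↔ ∃ a ∈ A, ∃ b ∈ B, a + b = x :=
  Submodule.mem_sup

theorem add_mem_add {A B : Ideal (Rg n)} {a b : Rg n} (ha : a ∈ A) (hb : b ∈ B) :
    a + b ∈ A ⊔ B := mem_add_iff.2 ⟨a, ha, b, hb, rfl⟩

theorem left_mem_add {A B : Ideal (Rg n)} {a : Rg n} (ha : a ∈ A) : a ∈ A ⊔ B := by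
  simpa using add_mem_add ha (Submodule.zero_mem B)

theorem right_mem_add {A B : Ideal (Rg n)} {b : Rg n} (hb : b ∈ B) : b ∈ A ⊔ B := by
  simpa using add_mem_add (Submodule.zero_mem A) hb

/-- Retraction (algebraic projection) onto the complement of an ideal. -/
structure IsRet (K : Ideal (Rg n)) (φ : Rg n →ₐ[ℚ] Rg n) : Prop where
  ker : ∀ x ∈ K, φ x = 0
  sec : ∀ x, x - φ x ∈ K

theorem IsRet.mem_iff {K : Ideal (Rg n)} {φ : Rg n →ₐ[ℚ] Rg n} (h : IsRet K φ) {x : Rg n} :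
    x ∈ K ↔ φ x = 0 := by
  constructor
  · exact h.ker x
  · intro hx
    have := h.sec x
    rw [hx, sub_zero] at this; exact this

theorem IsRet.stab {K : Ideal (Rg n)} {φ : Rg n →ₐ[ℚ] Rg n} (h : IsRet K φ) {w : Rg n}
    (hw : φ w ≠ 0) : Stab K w := by
  intro g hg
  have h0 : φ g * φ w = 0 := by rw [← map_mul]; exact h.ker _ hg
  rcases mul_eq_zero.1 h0 with h1 | h1
  · exact h.mem_iff.2 h1
  · exact absurd h1 hw

theorem ret_bot : IsRet (⊥ : Ideal (Rg n)) (AlgHom.id ℚ (Rg n)) := by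
  constructor
  · intro x hx; simpa using hx
  · intro x; simp

theorem sub_aeval_mem {A : Ideal (Rg n)} {vv : Fin n → Rg n}
    (h : ∀ i, X i - vv i ∈ A) (x : Rg n) : x - aeval vv x ∈ A := by
  induction x using MvPolynomial.induction_on with
  | C a => simp
  | add p q hp hq =>
    have : p + q - aeval vv (p + q) = (p - aeval vv p) + (q - aeval vv q) := by
      rw [map_add]; ring
    rw [this]; exact Submodule.add_mem A hp hq
  | mul_X p i hp =>
    have : p * X i - aeval vv (p * X i) = p * (X i - vv i) + (p - aeval vv p) * vv i := by
      rw [map_mul, aeval_X]; ring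
    rw [this]
    exact Submodule.add_mem A (Ideal.mul_mem_left A _ (h i)) (Ideal.mul_mem_right _ A hp)

theorem IsRet.extend {K : Ideal (Rg n)} {φ : Rg n →ₐ[ℚ] Rg n} (h : IsRet K φ)
    {ℓ z : Rg n} {i0 : Fin n}
    (hz : X i0 - z ∈ Ideal.span {φ ℓ})
    (h0 : aeval (Function.update X i0 z) (φ ℓ) = 0) :
    IsRet (K ⊔ Ideal.span {ℓ}) ((aeval (Function.update X i0 z)).comp φ) := by
  have hψspan : ∀ y : Rg n, y - aeval (Function.update X i0 z) y ∈ Ideal.span {φ ℓ} := by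
    intro y
    apply sub_aeval_mem
    intro i
    by_cases hi : i = i0
    · subst hi; rw [Function.update_self]; exact hz
    · rw [Function.update_of_ne hi, sub_self]; exact Submodule.zero_mem _
  have hφℓ : φ ℓ ∈ K ⊔ Ideal.span {ℓ} := by
    have h1 : ℓ - φ ℓ ∈ K := h.sec ℓ
    have : φ ℓ = ℓ - (ℓ - φ ℓ) := by ring
    rw [this]
    exact Submodule.sub_mem _ (right_mem_add (Ideal.subset_span rfl)) (left_mem_add h1)
  have hspanle : Ideal.span {φ ℓ} ≤ K ⊔ Ideal.span {ℓ} := by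
    rw [Ideal.span_le, Set.singleton_subset_iff]; exact hφℓ
  constructor
  · intro x hx
    rcases mem_add_iff.1 hx with ⟨a, ha, b, hb, rfl⟩
    rcases Ideal.mem_span_singleton'.1 hb with ⟨r, rfl⟩
    simp only [AlgHom.comp_apply, map_add, map_mul]
    rw [h.ker a ha, h0]
    simp
  · intro x
    have h1 : x - φ x ∈ K := h.sec x
    have h2 : φ x - aeval (Function.update X i0 z) (φ x) ∈ Ideal.span {φ ℓ} := hψspan (φ x)
    have : x - (aeval (Function.update X i0 z)).comp φ x
        = (x - φ x) + (φ x - aeval (Function.update X i0 z) (φ x)) := by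
      simp only [AlgHom.comp_apply]; ring
    rw [this]
    exact Submodule.add_mem _ (left_mem_add h1) (hspanle h2)

/-! ### Ideal algebra lemmas -/

theorem pow_add_le (B C : Ideal (Rg n)) (m : ℕ) : (B ⊔ C) ^ m ≤ B ^ m ⊔ C := by
  induction m with
  | zero => simp
  | succ m ih =>
    calc (B ⊔ C) ^ (m + 1) = (B ⊔ C) * (B ⊔ C) ^ m := by rw [pow_succ']
    _ ≤ (B ⊔ C) * (B ^ m ⊔ C) := Ideal.mul_mono_right ih
    _ ≤ B ^ (m+1) ⊔ C := by
        rw [Submodule.mul_sup, Submodule.sup_mul]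
        apply sup_le
        · apply sup_le
          · rw [← pow_succ']; exact le_sup_left
          · exact le_trans Ideal.mul_le_left le_sup_right
        · exact le_trans Ideal.mul_le_right le_sup_right

theorem add_eq_add_pow {B B' C : Ideal (Rg n)} (h : B ⊔ C = B' ⊔ C) (m : ℕ) :
    B ^ m ⊔ C = B' ^ m ⊔ C := by
  have key : ∀ D D' : Ideal (Rg n), D ⊔ C = D' ⊔ C → D ^ m ⊔ C ≤ D' ^ m ⊔ C := by
    intro D D' hDD'
    have h1 : D ^ m ≤ D' ^ m ⊔ C := by
      calc D ^ m ≤ (D ⊔ C) ^ m := Ideal.pow_right_mono le_sup_left m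
      _ = (D' ⊔ C) ^ m := by rw [hDD']
      _ ≤ D' ^ m ⊔ C := pow_add_le _ _ _
    exact sup_le h1 le_sup_right
  exact le_antisymm (key _ _ h) (key _ _ h.symm)

theorem mul_add_le (A B C : Ideal (Rg n)) : (A ⊔ C) * (B ⊔ C) ≤ A * B ⊔ C := by
  rw [Submodule.mul_sup, Submodule.sup_mul]
  apply sup_le
  · exact sup_le le_sup_left (le_trans Ideal.mul_le_left le_sup_right)
  · exact le_trans Ideal.mul_le_right le_sup_right

theorem prod_le_prod_add {s : Finset ℕ} {A B : ℕ → Ideal (Rg n)} {C : Ideal (Rg n)}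
    (h : ∀ k ∈ s, B k ≤ A k ⊔ C) : (∏ k ∈ s, B k) ≤ (∏ k ∈ s, A k) ⊔ C := by
  classical
  induction s using Finset.induction_on with
  | empty => simp
  | @insert a s ha ih =>
    rw [Finset.prod_insert ha, Finset.prod_insert ha]
    calc B a * ∏ k ∈ s, B k
        ≤ (A a ⊔ C) * ((∏ k ∈ s, A k) ⊔ C) :=
          Ideal.mul_mono (h a (Finset.mem_insert_self a s))
            (ih (fun k hk => h k (Finset.mem_insert_of_mem hk)))
    _ ≤ A a * (∏ k ∈ s, A k) ⊔ C := mul_add_le _ _ _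

theorem add_eq_add_prod {s : Finset ℕ} {A B : ℕ → Ideal (Rg n)} {C : Ideal (Rg n)}
    (a : ℕ → ℕ) (h : ∀ k ∈ s, A k ⊔ C = B k ⊔ C) :
    (∏ k ∈ s, A k ^ a k) ⊔ C = (∏ k ∈ s, B k ^ a k) ⊔ C := by
  have key : ∀ (A B : ℕ → Ideal (Rg n)), (∀ k ∈ s, A k ⊔ C = B k ⊔ C) →
      (∏ k ∈ s, A k ^ a k) ≤ (∏ k ∈ s, B k ^ a k) ⊔ C := by
    intro A B hAB
    apply prod_le_prod_add
    intro k hk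
    calc A k ^ a k ≤ (A k ⊔ C) ^ a k := Ideal.pow_right_mono le_sup_left _
    _ = (B k ⊔ C) ^ a k := by rw [hAB k hk]
    _ ≤ B k ^ a k ⊔ C := pow_add_le _ _ _
  exact le_antisymm (sup_le (key A B h) le_sup_right)
    (sup_le (key B A (fun k hk => (h k hk).symm)) le_sup_right)

theorem mul_absorb {A B C : Ideal (Rg n)} (h : B ⊔ C = ⊤) : A * B ⊔ C = A ⊔ C := by
  apply le_antisymm
  · exact sup_le (le_trans Ideal.mul_le_left le_sup_left) le_sup_right
  · apply sup_le _ le_sup_right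
    calc A = A * (B ⊔ C) := by rw [h, Ideal.mul_top]
    _ ≤ A * B ⊔ C := by
        rw [Submodule.mul_sup]
        exact sup_le le_sup_left (le_trans Ideal.mul_le_right le_sup_right)

theorem span_pair_eq_add (u v : Rg n) :
    Ideal.span {u, v} = Ideal.span {u} ⊔ Ideal.span {v} :=
  Ideal.span_insert u {v}

theorem u_mem_pair (u v : Rg n) : u ∈ Ideal.span {u, v} :=
  Ideal.subset_span (by simp)

theorem v_mem_pair (u v : Rg n) : v ∈ Ideal.span {u, v} :=
  Ideal.subset_span (by simp)

theorem span_pair_pow_succ (u v : Rg n) (d : ℕ) :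
    Ideal.span {u, v} ^ (d + 1)
      = Ideal.span {u} * Ideal.span {u, v} ^ d ⊔ Ideal.span {v ^ (d+1)} := by
  induction d with
  | zero =>
    rw [zero_add, pow_one, pow_zero, mul_one, pow_one]
    exact span_pair_eq_add u v
  | succ d ih =>
    have hvI : Ideal.span {v} ≤ Ideal.span {u, v} := by
      rw [Ideal.span_le, Set.singleton_subset_iff]; exact v_mem_pair u v
    have huI : Ideal.span {u} ≤ Ideal.span {u, v} := by
      rw [Ideal.span_le, Set.singleton_subset_iff]; exact u_mem_pair u v
    have hv : Ideal.span {v ^ (d+1)} ≤ Ideal.span {u, v} ^ (d+1) := by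
      rw [Ideal.span_le, Set.singleton_subset_iff]
      exact Ideal.pow_mem_pow (v_mem_pair u v) _
    apply le_antisymm
    · calc Ideal.span {u, v} ^ (d + 2) = Ideal.span {u, v} * Ideal.span {u, v} ^ (d+1) := by
            rw [← pow_succ']
      _ = Ideal.span {u, v} * (Ideal.span {u} * Ideal.span {u, v} ^ d ⊔ Ideal.span {v ^ (d+1)}) := by
            rw [ih]
      _ ≤ _ := by
          rw [Submodule.mul_sup]
          apply sup_le
          · apply le_sup_of_le_left
            rw [show Ideal.span {u, v} * (Ideal.span {u} * Ideal.span {u, v} ^ d)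
              = Ideal.span {u} * (Ideal.span {u, v} * Ideal.span {u, v} ^ d) by ring]
            rw [← pow_succ']
          · calc Ideal.span {u, v} * Ideal.span {v ^ (d+1)}
                = (Ideal.span {u} ⊔ Ideal.span {v}) * Ideal.span {v ^ (d+1)} := by
                  rw [← span_pair_eq_add]
            _ ≤ _ := by
              rw [Submodule.sup_mul]
              apply sup_le
              · apply le_sup_of_le_left
                exact Ideal.mul_mono_right hv
              · apply le_sup_of_le_right
                rw [Ideal.span_singleton_mul_span_singleton, ← pow_succ']
    · apply sup_le
      · calc Ideal.span {u} * Ideal.span {u, v} ^ (d+1)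
            ≤ Ideal.span {u, v} * Ideal.span {u, v} ^ (d+1) := Ideal.mul_mono_left huI
        _ = Ideal.span {u, v} ^ (d+2) := by rw [← pow_succ']
      · rw [Ideal.span_le, Set.singleton_subset_iff]
        exact Ideal.pow_mem_pow (v_mem_pair u v) _


/-! ### Regularity lemmas -/

theorem pow_mem_le {I : Ideal (Rg n)} {x : Rg n} (hx : x ∈ I) (d e : ℕ) (h : d ≤ e) :
    x ^ e ∈ I ^ d :=
  Ideal.pow_le_pow_right h (Ideal.pow_mem_pow hx e)

/-- Lemma A′: intersection with a power of a 2-generated ideal equals the product,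
relative to `K`, given relative regularity of the two generators. -/
theorem lemA {K J : Ideal (Rg n)} {u v : Rg n}
    (h1 : Stab (J ⊔ K) u)
    (h2 : Stab (J ⊔ K ⊔ Ideal.span {u}) v) :
    ∀ a, (Ideal.span {u, v} ^ a ⊔ K) ⊓ (J ⊔ K) = Ideal.span {u, v} ^ a * J ⊔ K := by
  intro a
  induction a with
  | zero => simp [Ideal.one_eq_top, inf_of_le_right (le_sup_right : K ≤ J ⊔ K)]
  | succ a ih =>
    set I := Ideal.span {u, v} with hI
    apply le_antisymm
    · intro g hg
      rw [Submodule.mem_inf] at hg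
      obtain ⟨hgI, hgJ⟩ := hg
      rw [span_pair_pow_succ] at hgI
      rcases mem_add_iff.1 hgI with ⟨g1, hg1, κ, hκ, hgeq0⟩
      rcases mem_add_iff.1 hg1 with ⟨e1, he1, w2, hw2, hg1'⟩
      rcases Ideal.mem_span_singleton_mul.1 he1 with ⟨h0, hh0, he1'⟩
      rcases Ideal.mem_span_singleton'.1 hw2 with ⟨r, hr⟩
      have hgeq : g = u * h0 + r * v ^ (a+1) + κ := by
        rw [← hgeq0, ← hg1', ← he1', ← hr]
      have hrv : r * v ^ (a+1) ∈ J ⊔ K ⊔ Ideal.span {u} := by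
        have heq : r * v ^ (a+1) = g - κ - u * h0 := by linear_combination -hgeq
        rw [heq]
        refine Submodule.sub_mem _ (Submodule.sub_mem _ ?_ ?_) ?_
        · exact (le_sup_left : J ⊔ K ≤ _) hgJ
        · exact (le_sup_left : J ⊔ K ≤ _) (right_mem_add hκ)
        · exact right_mem_add (Ideal.mem_span_singleton'.2 ⟨h0, mul_comm h0 u⟩)
      have hr' : r ∈ J ⊔ K ⊔ Ideal.span {u} := (h2.pow (a+1)) r hrv
      rcases mem_add_iff.1 hr' with ⟨b, hb, c, hc, hrbc⟩
      rcases mem_add_iff.1 hb with ⟨j0, hj0, κ2, hκ2, hbeq⟩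
      rcases Ideal.mem_span_singleton'.1 hc with ⟨s, hs⟩
      have hh' : h0 + s * v ^ (a+1) ∈ I ^ a := by
        refine Submodule.add_mem _ hh0 (Ideal.mul_mem_left _ _ ?_)
        exact pow_mem_le (v_mem_pair u v) a (a+1) (Nat.le_succ a)
      have huh' : (h0 + s * v ^ (a+1)) * u ∈ J ⊔ K := by
        have heq : (h0 + s * v ^ (a+1)) * u
            = g - j0 * v ^ (a+1) - (κ + κ2 * v ^ (a+1)) := by
          linear_combination -hgeq + v^(a+1) * hrbc + v^(a+1) * hbeq + v^(a+1) * hs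
        rw [heq]
        refine Submodule.sub_mem _ (Submodule.sub_mem _ hgJ ?_) ?_
        · exact left_mem_add (Ideal.mul_mem_right _ _ hj0)
        · exact right_mem_add (Submodule.add_mem _ hκ (Ideal.mul_mem_right _ _ hκ2))
      have hmem : h0 + s * v ^ (a+1) ∈ I ^ a * J ⊔ K := by
        rw [← ih]
        exact Submodule.mem_inf.2 ⟨left_mem_add hh', h1 _ huh'⟩
      rcases mem_add_iff.1 hmem with ⟨m1, hm1, κ3, hκ3, hmeq⟩
      have hfinal : g = u * m1 + j0 * v ^ (a+1) + (u * κ3 + κ + κ2 * v ^ (a+1)) := by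
        linear_combination hgeq - v^(a+1)*hrbc - v^(a+1)*hbeq - v^(a+1)*hs - u*hmeq
      rw [hfinal]
      refine add_mem_add (Submodule.add_mem _ ?_ ?_) (Submodule.add_mem _ (Submodule.add_mem _ ?_ hκ) ?_)
      · have hpow : I ^ (a+1) * J = I * (I ^ a * J) := by rw [pow_succ']; ring
        rw [hpow]
        exact Ideal.mul_mem_mul (u_mem_pair u v) hm1
      · rw [mul_comm j0 (v ^ (a+1))]
        exact Ideal.mul_mem_mul (Ideal.pow_mem_pow (v_mem_pair u v) _) hj0
      · exact Ideal.mul_mem_left _ _ hκ3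
      · exact Ideal.mul_mem_right _ _ hκ2
    · apply sup_le
      · apply le_inf
        · exact le_trans Ideal.mul_le_left le_sup_left
        · exact le_trans Ideal.mul_le_right le_sup_left
      · exact le_inf le_sup_right le_sup_right

/-- Quasi-regularity step. -/
theorem lemQ {K : Ideal (Rg n)} {u v w : Rg n}
    (hu : Stab K u)
    (hv : Stab (K ⊔ Ideal.span {u}) v)
    (hw : Stab (Ideal.span {u, v} ⊔ K) w) :
    ∀ d g, g ∈ Ideal.span {u, v} ^ d ⊔ K → g * w ∈ Ideal.span {u, v} ^ (d+1) ⊔ K →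
      g ∈ Ideal.span {u, v} ^ (d+1) ⊔ K := by
  intro d
  induction d with
  | zero =>
    intro g _ hgw
    rw [zero_add, pow_one] at hgw ⊢
    exact hw g hgw
  | succ d ih =>
    intro g hg hgw
    set I := Ideal.span {u, v} with hI
    rw [span_pair_pow_succ] at hg
    rcases mem_add_iff.1 hg with ⟨g1, hg1, κ, hκ, hgeq0⟩
    rcases mem_add_iff.1 hg1 with ⟨e1, he1, w2, hw2, hg1'⟩
    rcases Ideal.mem_span_singleton_mul.1 he1 with ⟨h0, hh0, he1'⟩
    rcases Ideal.mem_span_singleton'.1 hw2 with ⟨r, hr⟩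
    have hgeq : g = u * h0 + r * v ^ (d+1) + κ := by rw [← hgeq0, ← hg1', ← he1', ← hr]
    -- Step 1: r ∈ I ⊔ K
    have hIle : I ^ (d+2) ≤ Ideal.span {u} ⊔ Ideal.span {v ^ (d+2)} := by
      rw [span_pair_pow_succ]
      exact sup_le (le_trans Ideal.mul_le_left le_sup_left) le_sup_right
    have h1 : g * w ∈ Ideal.span {u} ⊔ Ideal.span {v ^ (d+2)} ⊔ K := by
      rcases mem_add_iff.1 hgw with ⟨p, hp, κ', hκ', hpe⟩
      rw [← hpe]
      exact add_mem_add (hIle hp) hκ'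
    rcases mem_add_iff.1 h1 with ⟨p, hp, κ', hκ', hpe⟩
    rcases mem_add_iff.1 hp with ⟨A0, hA0, q, hq, hpq⟩
    rcases Ideal.mem_span_singleton'.1 hA0 with ⟨α, hα⟩
    rcases Ideal.mem_span_singleton'.1 hq with ⟨β, hβ⟩
    have hrw : (r * w - β * v) * v ^ (d+1) ∈ K ⊔ Ideal.span {u} := by
      have heq : (r * w - β * v) * v ^ (d+1) = α * u + κ' - u * h0 * w - κ * w := by
        linear_combination -w * hgeq - hpe - hpq - hα - hβ
      rw [heq]
      refine Submodule.sub_mem _ (Submodule.sub_mem _ (Submodule.add_mem _ ?_ ?_) ?_) ?_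
      · exact right_mem_add (Ideal.mem_span_singleton'.2 ⟨α, rfl⟩)
      · exact left_mem_add hκ'
      · exact right_mem_add (Ideal.mem_span_singleton'.2 ⟨h0 * w, by ring⟩)
      · exact left_mem_add (Ideal.mul_mem_right _ _ hκ)
    have hrw2 : r * w - β * v ∈ K ⊔ Ideal.span {u} := (hv.pow (d+1)) _ hrw
    have hrwIK : r * w ∈ I ⊔ K := by
      have heq : r * w = (r * w - β * v) + β * v := by ring
      rw [heq]
      refine Submodule.add_mem _ ?_ (left_mem_add (Ideal.mul_mem_left _ _ (v_mem_pair u v)))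
      rcases mem_add_iff.1 hrw2 with ⟨κ0, hκ0, su, hsu, hse⟩
      rw [← hse]
      refine Submodule.add_mem _ (right_mem_add hκ0) ?_
      refine (le_sup_left : I ≤ I ⊔ K) ?_
      exact (Ideal.span_le.2 (Set.singleton_subset_iff.2 (u_mem_pair u v))) hsu
    have hrIK : r ∈ I ⊔ K := hw r hrwIK
    rcases mem_add_iff.1 hrIK with ⟨ρ, hρ, κ2, hκ2, hre⟩
    -- Step 2: h0 * w ∈ I^{d+1} ⊔ K
    have hrv' : r * v ^ (d+1) ∈ I ^ (d+2) ⊔ K := by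
      have heq : r * v ^ (d+1) = ρ * v ^ (d+1) + κ2 * v ^ (d+1) := by
        linear_combination -v^(d+1) * hre
      rw [heq]
      refine add_mem_add ?_ (Ideal.mul_mem_right _ _ hκ2)
      have hpow : I ^ (d+2) = I * I ^ (d+1) := by rw [← pow_succ']
      rw [hpow]
      exact Ideal.mul_mem_mul hρ (Ideal.pow_mem_pow (v_mem_pair u v) _)
    have huh0w : (u * h0) * w ∈ I ^ (d+2) ⊔ K := by
      have heq : (u * h0) * w = g * w - (r * v ^ (d+1)) * w - κ * w := by
        linear_combination -w * hgeq
      rw [heq]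
      refine Submodule.sub_mem _ (Submodule.sub_mem _ hgw ?_) ?_
      · rcases mem_add_iff.1 hrv' with ⟨p1, hp1, κ3, hκ3, hpe1⟩
        have heq2 : (r * v ^ (d+1)) * w = p1 * w + κ3 * w := by linear_combination -w * hpe1
        rw [heq2]
        exact add_mem_add (Ideal.mul_mem_right _ _ hp1) (Ideal.mul_mem_right _ _ hκ3)
      · exact right_mem_add (Ideal.mul_mem_right _ _ hκ)
    have hdec : (u * h0) * w ∈ Ideal.span {u} * I ^ (d+1) ⊔ Ideal.span {v ^ (d+2)} ⊔ K := by
      rcases mem_add_iff.1 huh0w with ⟨p1, hp1, κ3, hκ3, hpe1⟩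
      rw [span_pair_pow_succ] at hp1
      rw [← hpe1]
      exact add_mem_add hp1 hκ3
    rcases mem_add_iff.1 hdec with ⟨p1, hp1, κ3, hκ3, hpe1⟩
    rcases mem_add_iff.1 hp1 with ⟨e2, he2, q2, hq2, hpe2⟩
    rcases Ideal.mem_span_singleton_mul.1 he2 with ⟨h1', hh1', he2'⟩
    rcases Ideal.mem_span_singleton'.1 hq2 with ⟨γ, hγ⟩
    have hγm : γ * v ^ (d+2) ∈ K ⊔ Ideal.span {u} := by
      have heq : γ * v ^ (d+2) = u * (h0 * w - h1') - κ3 := by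
        linear_combination hpe1 + hpe2 + he2' + hγ
      rw [heq]
      refine Submodule.sub_mem _ ?_ (left_mem_add hκ3)
      exact right_mem_add (Ideal.mem_span_singleton'.2 ⟨h0 * w - h1', by ring⟩)
    have hγ2 : γ ∈ K ⊔ Ideal.span {u} := (hv.pow (d+2)) _ hγm
    rcases mem_add_iff.1 hγ2 with ⟨κ4, hκ4, su, hsu, hγe⟩
    rcases Ideal.mem_span_singleton'.1 hsu with ⟨s, hs⟩
    have hukey : (h0 * w - h1' - s * v ^ (d+2)) * u ∈ K := by
      have heq : (h0 * w - h1' - s * v ^ (d+2)) * u = κ3 + κ4 * v ^ (d+2) := by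
        linear_combination -hpe1 - hpe2 - he2' - hγ - v^(d+2)*hγe - v^(d+2)*hs
      rw [heq]
      exact Submodule.add_mem _ hκ3 (Ideal.mul_mem_right _ _ hκ4)
    have hkey : h0 * w - h1' - s * v ^ (d+2) ∈ K := hu _ hukey
    have hh0w : h0 * w ∈ I ^ (d+1) ⊔ K := by
      have heq : h0 * w = h1' + s * v ^ (d+2) + (h0 * w - h1' - s * v ^ (d+2)) := by ring
      rw [heq]
      refine add_mem_add (Submodule.add_mem _ hh1' ?_) hkey
      exact Ideal.mul_mem_left _ _ (pow_mem_le (v_mem_pair u v) (d+1) (d+2) (by omega))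
    -- Step 3: IH on h0
    have hh0' : h0 ∈ I ^ (d+1) ⊔ K := ih h0 (left_mem_add hh0) hh0w
    rcases mem_add_iff.1 hh0' with ⟨m, hm, κ5, hκ5, hme⟩
    -- Step 4: conclude
    have hfinal : g = u * m + ρ * v ^ (d+1) + (u * κ5 + κ2 * v ^ (d+1) + κ) := by
      linear_combination hgeq - u * hme - v^(d+1) * hre
    rw [hfinal]
    refine add_mem_add (Submodule.add_mem _ ?_ ?_)
      (Submodule.add_mem _ (Submodule.add_mem _ ?_ ?_) hκ)
    · have hpow : I ^ (d+2) = I * I ^ (d+1) := by rw [← pow_succ']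
      rw [hpow]
      exact Ideal.mul_mem_mul (u_mem_pair u v) hm
    · have hpow : I ^ (d+2) = I * I ^ (d+1) := by rw [← pow_succ']
      rw [hpow]
      exact Ideal.mul_mem_mul hρ (Ideal.pow_mem_pow (v_mem_pair u v) _)
    · exact Ideal.mul_mem_left _ _ hκ5
    · exact Ideal.mul_mem_right _ _ hκ2

/-- Lemma B: colon-stability of powers from quasi-regularity. -/
theorem lemB {K : Ideal (Rg n)} {u v w : Rg n}
    (hu : Stab K u)
    (hv : Stab (K ⊔ Ideal.span {u}) v)
    (hw : Stab (Ideal.span {u, v} ⊔ K) w) :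
    ∀ a, Stab (Ideal.span {u, v} ^ a ⊔ K) w := by
  intro a g hgw
  have key : ∀ j, j ≤ a → g ∈ Ideal.span {u, v} ^ j ⊔ K := by
    intro j
    induction j with
    | zero => intro _; simp [Ideal.one_eq_top]
    | succ j ih =>
      intro hj
      refine lemQ hu hv hw j g (ih (by omega)) ?_
      exact (sup_le_sup (Ideal.pow_le_pow_right hj) (le_refl K)) hgw
  exact key a (le_refl a)


/-! ### Nonzero helpers -/

theorem smul_X_ne {c : ℚ} (hc : c ≠ 0) (j : Fin n) : c • (X j : Rg n) ≠ 0 := by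
  intro h
  have h2 := congrArg (coeff (Finsupp.single j 1)) h
  simp [coeff_smul, MvPolynomial.coeff_X, hc] at h2

theorem C_add_smul_X_ne (c : ℚ) {d : ℚ} (hd : d ≠ 0) (j : Fin n) :
    (C c : Rg n) + d • X j ≠ 0 := by
  intro h
  have h2 := congrArg (coeff (Finsupp.single j 1)) h
  have hs : (Finsupp.single j 1 : Fin n →₀ ℕ) ≠ 0 := by
    simp [Finsupp.single_eq_zero]
  simp only [coeff_add, coeff_smul, MvPolynomial.coeff_X, coeff_C, coeff_zero] at h2
  rw [if_neg (fun hh => hs hh.symm)] at h2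
  simp [hd] at h2

theorem smul_X_add_smul_X_ne {c d : ℚ} (hc : c ≠ 0) {i j : Fin n} (hij : i ≠ j) :
    c • (X i : Rg n) + d • X j ≠ 0 := by
  intro h
  have h2 := congrArg (coeff (Finsupp.single i 1)) h
  have hs : Finsupp.single i 1 ≠ Finsupp.single j (1:ℕ) := by
    intro he
    exact hij (Finsupp.single_left_injective one_ne_zero he)
  rw [coeff_add, coeff_smul, coeff_smul, MvPolynomial.coeff_X, MvPolynomial.coeff_X'] at h2
  rw [if_neg (show ¬ (Finsupp.single j 1 = Finsupp.single i (1:ℕ)) from fun hh => hs hh.symm)] at h2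
  simp [hc] at h2

/-! ### The family structure -/

structure Fam (n q : ℕ) where
  v : ℕ → Rg n
  σ : ℕ → Fin n
  ε : ℕ → ℚ
  K : Ideal (Rg n)
  φ : Rg n →ₐ[ℚ] Rg n
  hv0 : v 0 = 1
  hvσ : ∀ i, 1 ≤ i → i ≤ q+1 → v i = ε i • X (σ i)
  hε : ∀ i, 1 ≤ i → i ≤ q+1 → ε i = 1 ∨ ε i = -1
  hσ : ∀ i j, 1 ≤ i → i ≤ q+1 → 1 ≤ j → j ≤ q+1 → σ i = σ j → i = j
  hret : IsRet K φ
  hfix : ∀ i, 1 ≤ i → i ≤ q+1 → φ (v i) = v i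

variable {q : ℕ}

namespace Fam

theorem εne (F : Fam n q) {i : ℕ} (h1 : 1 ≤ i) (h2 : i ≤ q+1) : F.ε i ≠ 0 := by
  rcases F.hε i h1 h2 with h | h <;> rw [h] <;> norm_num

theorem εsq (F : Fam n q) {i : ℕ} (h1 : 1 ≤ i) (h2 : i ≤ q+1) : F.ε i * F.ε i = 1 := by
  rcases F.hε i h1 h2 with h | h <;> rw [h] <;> norm_num

theorem vne (F : Fam n q) {i : ℕ} (h2 : i ≤ q+1) : F.v i ≠ 0 := by
  rcases Nat.eq_zero_or_pos i with h | h
  · subst h; rw [F.hv0]; exact one_ne_zero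
  · rw [F.hvσ i h h2]; exact smul_X_ne (F.εne h h2) _
theorem σne (F : Fam n q) {i j : ℕ} (hi1 : 1 ≤ i) (hi2 : i ≤ q+1) (hj1 : 1 ≤ j)
    (hj2 : j ≤ q+1) (hij : i ≠ j) : F.σ i ≠ F.σ j :=
  fun h => hij (F.hσ i j hi1 hi2 hj1 hj2 h)

theorem hfix' (F : Fam n q) {i : ℕ} (h2 : i ≤ q+1) : F.φ (F.v i) = F.v i := by
  rcases Nat.eq_zero_or_pos i with h | h
  · subst h; rw [F.hv0, map_one]
  · exact F.hfix i h h2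

end Fam

/-- The family ideals. -/
noncomputable def Iv (v : ℕ → Rg n) (k : ℕ) : Ideal (Rg n) :=
  Ideal.span {v k, v (k-1) + v (k+1)}

/-- Single-variable substitution. -/
noncomputable def subst (i0 : Fin n) (z : Rg n) : Rg n →ₐ[ℚ] Rg n :=
  aeval (Function.update X i0 z)

theorem subst_X_self (i0 : Fin n) (z : Rg n) : subst i0 z (X i0) = z := by
  rw [subst, aeval_X, Function.update_self]

theorem subst_X_ne {i0 j : Fin n} (h : j ≠ i0) (z : Rg n) : subst i0 z (X j) = X j := by
  rw [subst, aeval_X, Function.update_of_ne h]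

theorem subst_smul (i0 : Fin n) (z : Rg n) (c : ℚ) (p : Rg n) :
    subst i0 z (c • p) = c • subst i0 z p := by
  exact map_smul _ c p

/-- The composite retraction used for `I_k + K`. -/
noncomputable def phi2 (F : Fam n q) (k : ℕ) : Rg n →ₐ[ℚ] Rg n :=
  (subst (F.σ k) 0).comp F.φ

noncomputable def phi3 (F : Fam n q) (k : ℕ) : Rg n →ₐ[ℚ] Rg n :=
  (subst (F.σ (k+1)) (-(F.ε (k+1) • F.v (k-1)))).comp (phi2 F k)

namespace Fam

theorem phi2_v (F : Fam n q) {k j : ℕ} (hk1 : 1 ≤ k) (hk2 : k ≤ q+1)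
    (hj2 : j ≤ q+1) (hjk : j ≠ k) : phi2 F k (F.v j) = F.v j := by
  rw [phi2, AlgHom.comp_apply, F.hfix' hj2]
  rcases Nat.eq_zero_or_pos j with h | h
  · subst h; rw [F.hv0, map_one]
  · rw [F.hvσ j h hj2, subst_smul, subst_X_ne (F.σne h hj2 hk1 hk2 hjk)]

theorem phi2_vk (F : Fam n q) {k : ℕ} (hk1 : 1 ≤ k) (hk2 : k ≤ q+1) :
    phi2 F k (F.v k) = 0 := by
  rw [phi2, AlgHom.comp_apply, F.hfix' hk2, F.hvσ k hk1 hk2, subst_smul, subst_X_self, smul_zero]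

theorem phi3_v (F : Fam n q) {k j : ℕ} (hk1 : 1 ≤ k) (hk2 : k+1 ≤ q+1)
    (hj2 : j ≤ q+1) (hjk : j ≠ k) (hjk1 : j ≠ k+1) : phi3 F k (F.v j) = F.v j := by
  rw [phi3, AlgHom.comp_apply, F.phi2_v hk1 (by omega) hj2 hjk]
  rcases Nat.eq_zero_or_pos j with h | h
  · subst h; rw [F.hv0, map_one]
  · rw [F.hvσ j h hj2, subst_smul, subst_X_ne (F.σne h hj2 (by omega) hk2 hjk1)]

theorem phi3_vk (F : Fam n q) {k : ℕ} (hk1 : 1 ≤ k) (hk2 : k+1 ≤ q+1) :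
    phi3 F k (F.v k) = 0 := by
  rw [phi3, AlgHom.comp_apply, F.phi2_vk hk1 (by omega), map_zero]

theorem phi3_vk1 (F : Fam n q) {k : ℕ} (hk1 : 1 ≤ k) (hk2 : k+1 ≤ q+1) :
    phi3 F k (F.v (k+1)) = -F.v (k-1) := by
  rw [phi3, AlgHom.comp_apply, F.phi2_v hk1 (by omega) hk2 (by omega)]
  rw [F.hvσ (k+1) (by omega) hk2, subst_smul, subst_X_self, smul_neg, smul_smul,
    F.εsq (by omega) hk2, one_smul]

theorem phi3_one (F : Fam n q) (k : ℕ) : phi3 F k 1 = 1 := map_one _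

/-- Retraction for `K ⊔ (v k)`. -/
theorem ret2 (F : Fam n q) {k : ℕ} (hk1 : 1 ≤ k) (hk2 : k ≤ q+1) :
    IsRet (F.K ⊔ Ideal.span {F.v k}) (phi2 F k) := by
  have h := F.hret.extend (ℓ := F.v k) (z := 0) (i0 := F.σ k) ?_ ?_
  · exact h
  · rw [F.hfix' hk2]
    rw [Ideal.mem_span_singleton']
    refine ⟨C (F.ε k), ?_⟩
    rw [F.hvσ k hk1 hk2, sub_zero, smul_eq_C_mul, ← mul_assoc, ← map_mul, F.εsq hk1 hk2, map_one,
      one_mul]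
  · rw [F.hfix' hk2, F.hvσ k hk1 hk2]
    change subst (F.σ k) 0 _ = 0
    rw [subst_smul, subst_X_self, smul_zero]

/-- Retraction for `K ⊔ (v k) ⊔ (f k)`. -/
theorem ret3 (F : Fam n q) {k : ℕ} (hk1 : 1 ≤ k) (hk2 : k+1 ≤ q+1) :
    IsRet (F.K ⊔ Ideal.span {F.v k} ⊔ Ideal.span {F.v (k-1) + F.v (k+1)}) (phi3 F k) := by
  have hval : phi2 F k (F.v (k-1) + F.v (k+1))
      = F.v (k-1) + F.ε (k+1) • X (F.σ (k+1)) := by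
    rw [map_add, F.phi2_v hk1 (by omega) (by omega) (by omega),
      F.phi2_v hk1 (by omega) hk2 (by omega), F.hvσ (k+1) (by omega) hk2]
  have hsub1 : subst (F.σ (k+1)) (-(F.ε (k+1) • F.v (k-1))) (F.v (k-1)) = F.v (k-1) := by
    rcases Nat.eq_zero_or_pos (k-1) with h | h
    · rw [h, F.hv0, map_one]
    · rw [F.hvσ (k-1) h (by omega), subst_smul,
        subst_X_ne (F.σne h (by omega) (by omega) hk2 (by omega))]
  have h := (F.ret2 hk1 (by omega)).extend (ℓ := F.v (k-1) + F.v (k+1))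
      (z := -(F.ε (k+1) • F.v (k-1))) (i0 := F.σ (k+1)) ?_ ?_
  · exact h
  · rw [hval, Ideal.mem_span_singleton']
    refine ⟨C (F.ε (k+1)), ?_⟩
    rw [smul_eq_C_mul, smul_eq_C_mul]
    rw [mul_add, ← mul_assoc, ← map_mul, F.εsq (by omega) hk2, map_one, one_mul]
    ring
  · rw [hval]
    change subst _ _ _ = 0
    rw [map_add, hsub1, subst_smul, subst_X_self, smul_neg, smul_smul, F.εsq (by omega) hk2,
      one_smul]
    ring

theorem phi2_f_ne (F : Fam n q) {k : ℕ} (hk1 : 1 ≤ k) (hk2 : k+1 ≤ q+1) :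
    phi2 F k (F.v (k-1) + F.v (k+1)) ≠ 0 := by
  rw [map_add, F.phi2_v hk1 (by omega) (by omega) (by omega),
    F.phi2_v hk1 (by omega) hk2 (by omega)]
  rcases Nat.eq_zero_or_pos (k-1) with h | h
  · rw [h, F.hv0, F.hvσ (k+1) (by omega) hk2]
    have := C_add_smul_X_ne (1:ℚ) (F.εne (i := k+1) (by omega) hk2) (F.σ (k+1))
    simpa using this
  · rw [F.hvσ (k-1) h (by omega), F.hvσ (k+1) (by omega) hk2]
    exact smul_X_add_smul_X_ne (F.εne h (by omega))
      (F.σne h (by omega) (by omega) hk2 (by omega))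

end Fam

/-- The main colon-stability obligation. -/
theorem oblGen (F : Fam n q) {k : ℕ} (hk1 : 1 ≤ k) (hk2 : k+1 ≤ q+1) (w : Rg n)
    (hw : phi3 F k w ≠ 0) : ∀ a, Stab (Iv F.v k ^ a ⊔ F.K) w := by
  have hu : Stab F.K (F.v k) := F.hret.stab (by rw [F.hfix' (by omega)]; exact F.vne (by omega))
  have hv : Stab (F.K ⊔ Ideal.span {F.v k}) (F.v (k-1) + F.v (k+1)) :=
    (F.ret2 hk1 (by omega)).stab (F.phi2_f_ne hk1 hk2)
  have hw3 : Stab (Ideal.span {F.v k, F.v (k-1) + F.v (k+1)} ⊔ F.K) w := by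
    have h := (F.ret3 hk1 hk2).stab hw
    have heq : F.K ⊔ Ideal.span {F.v k} ⊔ Ideal.span {F.v (k-1) + F.v (k+1)}
        = Ideal.span {F.v k, F.v (k-1) + F.v (k+1)} ⊔ F.K := by
      rw [span_pair_eq_add, sup_assoc, sup_comm]
    rwa [heq] at h
  exact lemB hu hv hw3


theorem stab_biInf {s : Finset ℕ} {A : ℕ → Ideal (Rg n)} {w : Rg n}
    (h : ∀ k ∈ s, Stab (A k) w) : Stab (⨅ k ∈ s, A k) w := by
  intro g hg
  simp only [Submodule.mem_iInf] at hg ⊢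
  intro k hk
  exact h k hk g (hg k hk)

theorem span_pair_congr_left {b : Rg n} {C : Ideal (Rg n)} {x y : Rg n} (h : x - y ∈ C) :
    Ideal.span {x, b} ⊔ C = Ideal.span {y, b} ⊔ C := by
  have key : ∀ x y : Rg n, x - y ∈ C → Ideal.span {x, b} ⊔ C ≤ Ideal.span {y, b} ⊔ C := by
    intro x y hxy
    apply sup_le _ le_sup_right
    rw [Ideal.span_le]
    intro t ht
    rcases ht with rfl | ht
    · have heq : t = y + (t - y) := by ring
      rw [heq]
      exact Submodule.add_mem _ (left_mem_add (u_mem_pair _ _)) (right_mem_add hxy)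
    · rcases ht with rfl
      exact left_mem_add (v_mem_pair _ _)
  refine le_antisymm (key x y h) (key y x ?_)
  have : y - x = -(x - y) := by ring
  rw [this]
  exact Submodule.neg_mem _ h

theorem span_pair_congr_right {a : Rg n} {C : Ideal (Rg n)} {x y : Rg n} (h : x - y ∈ C) :
    Ideal.span {a, x} ⊔ C = Ideal.span {a, y} ⊔ C := by
  have hc : ∀ u v : Rg n, Ideal.span ({u, v} : Set (Rg n)) = Ideal.span {v, u} := by
    intro u v; rw [Set.pair_comm]
  rw [hc a x, hc a y]
  exact span_pair_congr_left h

theorem neg_one_add_smul_X_ne {d : ℚ} (hd : d ≠ 0) (j : Fin n) :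
    (-1 : Rg n) + d • X j ≠ 0 := by
  have h := C_add_smul_X_ne (-1 : ℚ) hd j
  simpa using h

theorem one_add_smul_X_ne {d : ℚ} (hd : d ≠ 0) (j : Fin n) :
    (1 : Rg n) + d • X j ≠ 0 := by
  have h := C_add_smul_X_ne (1 : ℚ) hd j
  simpa using h

/-! ### Value lemmas for the obligations -/

theorem val1_ne {q : ℕ} (F : Fam n (q+1)) {k : ℕ} (hk1 : 1 ≤ k) (hk2 : k ≤ q) :
    phi3 F k (F.v q + F.v (q+2)) ≠ 0 := by
  have hq2 : phi3 F k (F.v (q+2)) = F.v (q+2) :=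
    F.phi3_v (by omega) (by omega) (by omega) (by omega) (by omega)
  rw [map_add, hq2]
  by_cases hkq : k = q
  · subst hkq
    rw [F.phi3_vk (by omega) (by omega), zero_add]
    exact F.vne (by omega)
  · by_cases hkq1 : q = k + 1
    · subst hkq1
      rw [F.phi3_vk1 (by omega) (by omega)]
      rcases Nat.eq_zero_or_pos (k-1) with h0 | h0
      · rw [h0, F.hv0, F.hvσ (k+1+2) (by omega) (by omega)]
        exact neg_one_add_smul_X_ne (F.εne (by omega) (by omega)) _
      · rw [F.hvσ (k-1) h0 (by omega), F.hvσ (k+1+2) (by omega) (by omega), ← neg_smul]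
        exact smul_X_add_smul_X_ne (neg_ne_zero.2 (F.εne h0 (by omega)))
          (F.σne h0 (by omega) (by omega) (by omega) (by omega))
    · rw [F.phi3_v (q := q+1) (j := q) (by omega) (by omega) (by omega) (by omega) (by omega)]
      rw [F.hvσ q (by omega) (by omega), F.hvσ (q+2) (by omega) (by omega)]
      exact smul_X_add_smul_X_ne (F.εne (by omega) (by omega))
        (F.σne (by omega) (by omega) (by omega) (by omega) (by omega))

theorem val2_ne {q : ℕ} (G : Fam n q) {k : ℕ} (hk1 : 1 ≤ k) (hk2 : k ≤ q) :
    phi3 G k (G.v (q+1)) ≠ 0 := by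
  by_cases hkq : k = q
  · subst hkq
    rw [G.phi3_vk1 (by omega) (by omega)]
    exact neg_ne_zero.2 (G.vne (by omega))
  · rw [G.phi3_v (by omega) (by omega) (by omega) (by omega) (by omega)]
    exact G.vne (by omega)

/-! ### The child family -/

noncomputable def childFam {q : ℕ} (F : Fam n (q+1)) (hq : 1 ≤ q) : Fam n q where
  v := fun i => if i = q then -F.v (q+2) else F.v i
  σ := fun i => if i = q then F.σ (q+2) else F.σ i
  ε := fun i => if i = q then -F.ε (q+2) else F.ε i
  K := F.K ⊔ Ideal.span {F.v q + F.v (q+2)}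
  φ := (subst (F.σ q) (-(F.ε q • F.v (q+2)))).comp F.φ
  hv0 := by beta_reduce; rw [if_neg (by omega : (0:ℕ) ≠ q)]; exact F.hv0
  hvσ := by
    intro i h1 h2
    beta_reduce
    by_cases hiq : i = q
    · rw [if_pos hiq, if_pos hiq, if_pos hiq, F.hvσ (q+2) (by omega) (by omega), neg_smul]
    · rw [if_neg hiq, if_neg hiq, if_neg hiq]
      exact F.hvσ i h1 (by omega)
  hε := by
    intro i h1 h2
    beta_reduce
    by_cases hiq : i = q
    · rw [if_pos hiq]
      rcases F.hε (q+2) (by omega) (by omega) with h | h <;> rw [h] <;> norm_num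
    · rw [if_neg hiq]
      exact F.hε i h1 (by omega)
  hσ := by
    intro i j hi1 hi2 hj1 hj2 hh
    beta_reduce at hh
    by_cases hiq : i = q <;> by_cases hjq : j = q
    · omega
    · rw [if_pos hiq, if_neg hjq] at hh
      exact absurd (F.hσ (q+2) j (by omega) (by omega) hj1 (by omega) hh) (by omega)
    · rw [if_neg hiq, if_pos hjq] at hh
      exact absurd (F.hσ i (q+2) hi1 (by omega) (by omega) (by omega) hh) (by omega)
    · rw [if_neg hiq, if_neg hjq] at hh
      exact F.hσ i j hi1 (by omega) hj1 (by omega) hh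
  hret := by
    have hφu : F.φ (F.v q + F.v (q+2)) = F.v q + F.v (q+2) := by
      rw [map_add, F.hfix' (by omega), F.hfix' (by omega)]
    have hsubq2 : subst (F.σ q) (-(F.ε q • F.v (q+2))) (F.v (q+2)) = F.v (q+2) := by
      rw [F.hvσ (q+2) (by omega) (by omega), subst_smul,
        subst_X_ne (F.σne (by omega) (by omega) (by omega) (by omega) (by omega))]
    apply F.hret.extend (ℓ := F.v q + F.v (q+2)) (z := -(F.ε q • F.v (q+2))) (i0 := F.σ q)
    · rw [hφu, Ideal.mem_span_singleton']
      refine ⟨C (F.ε q), ?_⟩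
      rw [F.hvσ q (by omega) (by omega), smul_eq_C_mul, smul_eq_C_mul]
      rw [mul_add, ← mul_assoc, ← map_mul, F.εsq (by omega) (by omega), map_one, one_mul]
      ring
    · rw [hφu]
      change subst _ _ _ = 0
      rw [map_add, hsubq2, F.hvσ q (by omega) (by omega), subst_smul, subst_X_self,
        smul_neg, smul_smul, F.εsq (by omega) (by omega), one_smul]
      ring
  hfix := by
    intro i h1 h2
    have hsubq2 : subst (F.σ q) (-(F.ε q • F.v (q+2))) (F.v (q+2)) = F.v (q+2) := by
      rw [F.hvσ (q+2) (by omega) (by omega), subst_smul,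
        subst_X_ne (F.σne (by omega) (by omega) (by omega) (by omega) (by omega))]
    beta_reduce
    by_cases hiq : i = q
    · rw [if_pos hiq, AlgHom.comp_apply, map_neg, F.hfix' (by omega), map_neg, hsubq2]
    · rw [if_neg hiq, AlgHom.comp_apply, F.hfix' (by omega)]
      rw [F.hvσ i h1 (by omega), subst_smul,
        subst_X_ne (F.σne h1 (by omega) (by omega) (by omega) (by omega))]

theorem childFam_v_ne {q : ℕ} (F : Fam n (q+1)) (hq : 1 ≤ q) {i : ℕ} (hi : i ≠ q) :
    (childFam F hq).v i = F.v i := by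
  show (if i = q then -F.v (q+2) else F.v i) = F.v i
  rw [if_neg hi]

theorem childFam_v_q {q : ℕ} (F : Fam n (q+1)) (hq : 1 ≤ q) :
    (childFam F hq).v q = -F.v (q+2) := by
  show (if q = q then -F.v (q+2) else F.v q) = -F.v (q+2)
  rw [if_pos rfl]

theorem childFam_K {q : ℕ} (F : Fam n (q+1)) (hq : 1 ≤ q) :
    (childFam F hq).K = F.K ⊔ Ideal.span {F.v q + F.v (q+2)} := rfl

/-- Repositioning: the child ideals agree with the original ones modulo `K'`. -/
theorem childFam_Iv {q : ℕ} (F : Fam n (q+1)) (hq : 1 ≤ q) {k : ℕ} (hk1 : 1 ≤ k) (hk2 : k ≤ q) :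
    Iv F.v k ⊔ (childFam F hq).K = Iv (childFam F hq).v k ⊔ (childFam F hq).K := by
  have humem : F.v q + F.v (q+2) ∈ (childFam F hq).K := by
    rw [childFam_K]
    exact right_mem_add (Ideal.subset_span rfl)
  have e2 : (childFam F hq).v (k-1) = F.v (k-1) := childFam_v_ne F hq (by omega)
  by_cases hkq : k = q
  · have e1 : (childFam F hq).v k = -F.v (q+2) := by rw [hkq]; exact childFam_v_q F hq
    have e3 : (childFam F hq).v (k+1) = F.v (k+1) := childFam_v_ne F hq (by omega)
    rw [Iv, Iv, e1, e2, e3]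
    apply span_pair_congr_left
    have hvq : F.v k = F.v q := by rw [hkq]
    have heq : F.v k - -F.v (q+2) = F.v q + F.v (q+2) := by rw [hvq]; ring
    rw [heq]; exact humem
  · by_cases hkq1 : k + 1 = q
    · have e1 : (childFam F hq).v k = F.v k := childFam_v_ne F hq (by omega)
      have e3 : (childFam F hq).v (k+1) = -F.v (q+2) := by rw [hkq1]; exact childFam_v_q F hq
      rw [Iv, Iv, e1, e2, e3]
      apply span_pair_congr_right
      have hvq : F.v (k+1) = F.v q := by rw [hkq1]
      have heq : F.v (k-1) + F.v (k+1) - (F.v (k-1) + -F.v (q+2))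
          = F.v q + F.v (q+2) := by rw [hvq]; ring
      rw [heq]; exact humem
    · have e1 : (childFam F hq).v k = F.v k := childFam_v_ne F hq (by omega)
      have e3 : (childFam F hq).v (k+1) = F.v (k+1) := childFam_v_ne F hq (by omega)
      rw [Iv, Iv, e1, e2, e3]

/-- The master theorem: for a "path family" with variable tail,
intersections of powers (relative to `K`) are products. -/
theorem master : ∀ (q : ℕ) (F : Fam n q) (a : ℕ → ℕ),
    (⨅ k ∈ Finset.Icc 1 q, (Iv F.v k ^ a k ⊔ F.K))
      = (∏ k ∈ Finset.Icc 1 q, Iv F.v k ^ a k) ⊔ F.K := by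
  intro q
  induction q with
  | zero =>
    intro F a
    have h0 : Finset.Icc 1 0 = (∅ : Finset ℕ) := rfl
    simp [h0, Ideal.one_eq_top]
  | succ q IH =>
    intro F a
    rcases Nat.eq_zero_or_pos q with hq0 | hq1
    · subst hq0
      have h1 : Finset.Icc 1 1 = ({1} : Finset ℕ) := Finset.Icc_self 1
      simp [h1]
    -- main case : q ≥ 1
    have hIcc : Finset.Icc 1 (q+1) = insert (q+1) (Finset.Icc 1 q) := by
      ext i; simp only [Finset.mem_Icc, Finset.mem_insert]; omega
    have hnotmem : (q+1) ∉ Finset.Icc 1 q := by simp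
    have hIH1 : (⨅ k ∈ Finset.Icc 1 q, (Iv F.v k ^ a k ⊔ F.K))
        = (∏ k ∈ Finset.Icc 1 q, Iv F.v k ^ a k) ⊔ F.K :=
      IH ⟨F.v, F.σ, F.ε, F.K, F.φ, F.hv0, fun i h1 h2 => F.hvσ i h1 (by omega),
        fun i h1 h2 => F.hε i h1 (by omega),
        fun i j hi1 hi2 hj1 hj2 hh => F.hσ i j hi1 (by omega) hj1 (by omega) hh,
        F.hret, fun i h1 h2 => F.hfix i h1 (by omega)⟩ a
    have hstab1 : Stab ((∏ k ∈ Finset.Icc 1 q, Iv F.v k ^ a k) ⊔ F.K) (F.v q + F.v (q+2)) := by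
      rw [← hIH1]
      apply stab_biInf
      intro k hk
      rw [Finset.mem_Icc] at hk
      exact oblGen F (by omega) (by omega) _ (val1_ne F (by omega) (by omega)) (a k)
    have hIH2 : (⨅ k ∈ Finset.Icc 1 q, (Iv (childFam F hq1).v k ^ a k ⊔ (childFam F hq1).K))
        = (∏ k ∈ Finset.Icc 1 q, Iv (childFam F hq1).v k ^ a k) ⊔ (childFam F hq1).K :=
      IH (childFam F hq1) a
    have hprodeq : (∏ k ∈ Finset.Icc 1 q, Iv F.v k ^ a k) ⊔ (childFam F hq1).K
        = (∏ k ∈ Finset.Icc 1 q, Iv (childFam F hq1).v k ^ a k) ⊔ (childFam F hq1).K := by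
      apply add_eq_add_prod
      intro k hk
      rw [Finset.mem_Icc] at hk
      exact childFam_Iv F hq1 (by omega) (by omega)
    have hstab2 : Stab ((∏ k ∈ Finset.Icc 1 q, Iv F.v k ^ a k) ⊔ F.K
        ⊔ Ideal.span {F.v q + F.v (q+2)}) (F.v (q+1)) := by
      have hKrw : (∏ k ∈ Finset.Icc 1 q, Iv F.v k ^ a k) ⊔ F.K
          ⊔ Ideal.span {F.v q + F.v (q+2)}
          = (∏ k ∈ Finset.Icc 1 q, Iv F.v k ^ a k) ⊔ (childFam F hq1).K := by
        rw [childFam_K, sup_assoc]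
      rw [hKrw, hprodeq, ← hIH2]
      apply stab_biInf
      intro k hk
      rw [Finset.mem_Icc] at hk
      have hval := val2_ne (childFam F hq1) (k := k) (by omega) (by omega)
      rw [childFam_v_ne F hq1 (by omega : q+1 ≠ q)] at hval
      exact oblGen (childFam F hq1) (by omega) (by omega) _ hval (a k)
    have hmain := lemA hstab1 hstab2 (a (q+1))
    have hIvQ : Iv F.v (q+1) = Ideal.span {F.v q + F.v (q+2), F.v (q+1)} := by
      rw [Iv]
      rw [show (q+1-1) = q from rfl]
      rw [Set.pair_comm]
    rw [hIcc, Finset.iInf_insert, Finset.prod_insert hnotmem, hIvQ, hIH1]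
    exact hmain


/-! ### Fresh-variable stability -/
open Pointwise

/-- The isomorphism isolating the last variable. -/
noncomputable def Tiso (m : ℕ) :
    Rg (m+1) ≃ₐ[ℚ] Polynomial (MvPolynomial (Fin m) ℚ) :=
  (renameEquiv ℚ (Equiv.swap 0 (Fin.last m))).trans (finSuccEquiv ℚ m)

theorem Tiso_X_last (m : ℕ) : Tiso m (X (Fin.last m)) = Polynomial.X := by
  rw [Tiso, AlgEquiv.trans_apply, renameEquiv_apply, rename_X, Equiv.swap_apply_right,
    finSuccEquiv_X_zero]

/-- "not involving the last variable". -/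
def Pfree {m : ℕ} (x : Rg (m+1)) : Prop :=
  ∃ b : MvPolynomial (Fin m) ℚ, Tiso m x = Polynomial.C b

theorem Pfree.one {m : ℕ} : Pfree (1 : Rg (m+1)) := ⟨1, by simp⟩

theorem Pfree.mul {m : ℕ} {x y : Rg (m+1)} (hx : Pfree x) (hy : Pfree y) : Pfree (x * y) := by
  obtain ⟨b1, hb1⟩ := hx
  obtain ⟨b2, hb2⟩ := hy
  exact ⟨b1 * b2, by rw [map_mul, hb1, hb2, map_mul]⟩

theorem Pfree.add {m : ℕ} {x y : Rg (m+1)} (hx : Pfree x) (hy : Pfree y) : Pfree (x + y) := by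
  obtain ⟨b1, hb1⟩ := hx
  obtain ⟨b2, hb2⟩ := hy
  exact ⟨b1 + b2, by rw [map_add, hb1, hb2, map_add]⟩

theorem Pfree.neg {m : ℕ} {x : Rg (m+1)} (hx : Pfree x) : Pfree (-x) := by
  obtain ⟨b1, hb1⟩ := hx
  exact ⟨-b1, by rw [map_neg, hb1, map_neg]⟩

theorem Pfree_C {m : ℕ} (c : ℚ) : Pfree (C c : Rg (m+1)) :=
  ⟨MvPolynomial.C c, by rw [show (Tiso m) (C c) = _ from (Tiso m).commutes' c]; simp⟩

theorem Pfree_X {m : ℕ} {i : Fin (m+1)} (hi : i ≠ Fin.last m) : Pfree (X i : Rg (m+1)) := by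
  rcases Fin.eq_zero_or_eq_succ i with h0 | ⟨j, rfl⟩
  · subst h0
    have hm : 1 ≤ m := by
      by_contra hm
      push_neg at hm
      interval_cases m
      · exact hi (by ext; simp)
    refine ⟨X ⟨m-1, by omega⟩, ?_⟩
    rw [Tiso, AlgEquiv.trans_apply, renameEquiv_apply, rename_X, Equiv.swap_apply_left]
    have : Fin.last m = Fin.succ ⟨m-1, by omega⟩ := by
      ext; simp; omega
    rw [this, finSuccEquiv_X_succ]
  · refine ⟨X j, ?_⟩
    rw [Tiso, AlgEquiv.trans_apply, renameEquiv_apply, rename_X]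
    have h1 : Equiv.swap 0 (Fin.last m) j.succ = j.succ := by
      apply Equiv.swap_apply_of_ne_of_ne
      · exact Fin.succ_ne_zero j
      · exact hi
    rw [h1, finSuccEquiv_X_succ]

/-- Core freshness: spans of elements not involving the last variable are stable
under division by the last variable. -/
theorem freshCore {m : ℕ} (SS : Set (Rg (m+1))) (hSS : ∀ x ∈ SS, Pfree x) :
    ∀ g, g * X (Fin.last m) ∈ Ideal.span SS → g ∈ Ideal.span SS := by
  intro g hg
  set T : Rg (m+1) →+* Polynomial (MvPolynomial (Fin m) ℚ) := (Tiso m).toAlgHom.toRingHom with hT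
  have hTapp : ∀ x : Rg (m+1), T x = Tiso m x := fun x => rfl
  set SS₀ : Set (MvPolynomial (Fin m) ℚ) := Polynomial.C ⁻¹' (T '' SS) with hSS₀
  have himg : T '' SS = Polynomial.C '' SS₀ := by
    apply Set.eq_of_subset_of_subset
    · rintro y ⟨x, hx, rfl⟩
      obtain ⟨b, hb⟩ := hSS x hx
      refine ⟨b, ?_, ?_⟩
      · rw [hSS₀]
        refine Set.mem_preimage.2 ?_
        rw [show Polynomial.C b = T x by rw [hTapp, hb]]
        exact ⟨x, hx, rfl⟩
      · rw [hTapp, hb]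
    · rintro y ⟨b, hb, rfl⟩
      exact hb
  have hmap : Ideal.map T (Ideal.span SS)
      = Ideal.map (Polynomial.C : MvPolynomial (Fin m) ℚ →+* _) (Ideal.span SS₀) := by
    rw [Ideal.map_span, Ideal.map_span, himg]
  have hmem : T g * Polynomial.X ∈ Ideal.map (Polynomial.C : MvPolynomial (Fin m) ℚ →+* _)
      (Ideal.span SS₀) := by
    rw [← hmap]
    have h1 := Ideal.mem_map_of_mem T hg
    rw [map_mul] at h1
    rw [show T (X (Fin.last m)) = Polynomial.X by rw [hTapp]; exact Tiso_X_last m] at h1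
    exact h1
  have hcoeff : ∀ j, (T g * Polynomial.X).coeff j ∈ Ideal.span SS₀ :=
    Ideal.mem_map_C_iff.1 hmem
  have hcoeff2 : ∀ j, (T g).coeff j ∈ Ideal.span SS₀ := by
    intro j
    have h2 := hcoeff (j+1)
    rwa [Polynomial.coeff_mul_X] at h2
  have hTg : T g ∈ Ideal.map (Polynomial.C : MvPolynomial (Fin m) ℚ →+* _) (Ideal.span SS₀) :=
    Ideal.mem_map_C_iff.2 hcoeff2
  rw [← hmap] at hTg
  have hbij : Function.Bijective T := (Tiso m).bijective
  have h3 := Ideal.comap_map_of_bijective T hbij (I := Ideal.span SS)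
  rw [← h3]
  exact Ideal.mem_comap.2 hTg

/-- Products of powers of pair-spans of `Pfree` elements are spans of `Pfree` sets. -/
theorem exists_span_pairpow {m : ℕ} {u v : Rg (m+1)} (hu : Pfree u) (hv : Pfree v) (a : ℕ) :
    ∃ SS : Set (Rg (m+1)), Ideal.span {u, v} ^ a = Ideal.span SS ∧ ∀ x ∈ SS, Pfree x := by
  induction a with
  | zero =>
    refine ⟨{1}, ?_, ?_⟩
    · rw [pow_zero, Ideal.one_eq_top, Ideal.span_singleton_one]
    · rintro x rfl
      exact Pfree.one
  | succ a ih =>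
    obtain ⟨SS, hSS, hP⟩ := ih
    refine ⟨{u, v} * SS, ?_, ?_⟩
    · rw [pow_succ', hSS, Ideal.span_mul_span']
    · rintro x ⟨p, hp, s, hs, rfl⟩
      have hP1 : Pfree p := by
        rcases hp with rfl | hp
        · exact hu
        · rcases hp with rfl
          exact hv
      exact hP1.mul (hP s hs)

theorem exists_span_prod {m : ℕ} (s : Finset ℕ) (g1 g2 : ℕ → Rg (m+1)) (a : ℕ → ℕ)
    (hg : ∀ k ∈ s, Pfree (g1 k) ∧ Pfree (g2 k)) :
    ∃ SS : Set (Rg (m+1)),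
      (∏ k ∈ s, Ideal.span {g1 k, g2 k} ^ a k) = Ideal.span SS ∧ ∀ x ∈ SS, Pfree x := by
  classical
  induction s using Finset.induction_on with
  | empty =>
    refine ⟨{1}, ?_, ?_⟩
    · rw [Finset.prod_empty, Ideal.one_eq_top, Ideal.span_singleton_one]
    · rintro x rfl
      exact Pfree.one
  | @insert b t hb ih =>
    obtain ⟨SS, hSS, hP⟩ := ih (fun k hk => hg k (Finset.mem_insert_of_mem hk))
    obtain ⟨S2, hS2, hP2⟩ := exists_span_pairpow (hg b (Finset.mem_insert_self b t)).1
      (hg b (Finset.mem_insert_self b t)).2 (a b)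
    refine ⟨S2 * SS, ?_, ?_⟩
    · rw [Finset.prod_insert hb, hSS, hS2, Ideal.span_mul_span']
    · rintro x ⟨p, hp, q, hq, rfl⟩
      exact (hP2 p hp).mul (hP q hq)

/-- Freshness stability for products of pair-span powers. -/
theorem freshStab {m : ℕ} (s : Finset ℕ) (g1 g2 : ℕ → Rg (m+1)) (a : ℕ → ℕ)
    (hg : ∀ k ∈ s, Pfree (g1 k) ∧ Pfree (g2 k)) :
    ∀ g, g * X (Fin.last m) ∈ (∏ k ∈ s, Ideal.span {g1 k, g2 k} ^ a k) →
      g ∈ (∏ k ∈ s, Ideal.span {g1 k, g2 k} ^ a k) := by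
  obtain ⟨SS, hSS, hP⟩ := exists_span_prod s g1 g2 a hg
  rw [hSS]
  exact freshCore SS hP

/-- Maps of products of powers. -/
theorem map_prod_pow_le (f : Rg n →ₐ[ℚ] Rg n) (s : Finset ℕ) (A B : ℕ → Ideal (Rg n))
    (a : ℕ → ℕ) (h : ∀ k ∈ s, Ideal.map (f : Rg n →+* Rg n) (A k) ≤ B k) :
    Ideal.map (f : Rg n →+* Rg n) (∏ k ∈ s, A k ^ a k) ≤ ∏ k ∈ s, B k ^ a k := by
  classical
  induction s using Finset.induction_on with
  | empty => simp [Ideal.one_eq_top]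
  | @insert b t hb ih =>
    rw [Finset.prod_insert hb, Finset.prod_insert hb, Ideal.map_mul]
    refine Ideal.mul_mono ?_ (ih (fun k hk => h k (Finset.mem_insert_of_mem hk)))
    rw [Ideal.map_pow]
    exact Ideal.pow_right_mono (h b (Finset.mem_insert_self b t)) _


theorem prod_mono_ideal {s : Finset ℕ} {A B : ℕ → Ideal (Rg n)}
    (h : ∀ k ∈ s, A k ≤ B k) : (∏ k ∈ s, A k) ≤ ∏ k ∈ s, B k := by
  classical
  induction s using Finset.induction_on with
  | empty => simp
  | @insert b t hb ih =>
    rw [Finset.prod_insert hb, Finset.prod_insert hb]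
    exact Ideal.mul_mono (h b (Finset.mem_insert_self b t))
      (ih (fun k hk => h k (Finset.mem_insert_of_mem hk)))

/-! ### The top family and wrapper -/

theorem valC_ne {q : ℕ} (G : Fam n q) (hq3 : 3 ≤ q) {k : ℕ} (hk1 : 1 ≤ k) (hk2 : k ≤ q) :
    phi3 G k (G.v q + 1) ≠ 0 := by
  rw [map_add, map_one]
  by_cases hkq : k = q
  · subst hkq
    rw [G.phi3_vk (by omega) (by omega), zero_add]
    exact one_ne_zero
  · by_cases hkq1 : q = k + 1
    · subst hkq1
      rw [G.phi3_vk1 (by omega) (by omega)]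
      have h0 : 1 ≤ k - 1 := by omega
      rw [G.hvσ (k-1) h0 (by omega), ← neg_smul, add_comm]
      exact one_add_smul_X_ne (neg_ne_zero.2 (G.εne h0 (by omega))) _
    · rw [G.phi3_v (by omega) (by omega) (by omega) (by omega) (by omega)]
      rw [G.hvσ q (by omega) (by omega), add_comm]
      exact one_add_smul_X_ne (G.εne (by omega) (by omega)) _

noncomputable def vtop (m : ℕ) : ℕ → Rg (m+1) := fun i =>
  if i = 0 then 1 else X ⟨(i-1) % (m+1), Nat.mod_lt _ (Nat.succ_pos m)⟩

def σtop (m : ℕ) : ℕ → Fin (m+1) := fun i => ⟨(i-1) % (m+1), Nat.mod_lt _ (Nat.succ_pos m)⟩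

theorem vtop_zero (m : ℕ) : vtop m 0 = 1 := rfl

theorem vtop_pos (m : ℕ) {i : ℕ} (hi : 1 ≤ i) :
    vtop m i = X ⟨(i-1) % (m+1), Nat.mod_lt _ (Nat.succ_pos m)⟩ := by
  rw [vtop]; rw [if_neg (by omega)]

theorem vtop_eq_X (m : ℕ) {i : ℕ} (hi : 1 ≤ i) (hi2 : i ≤ m+1) :
    vtop m i = X ⟨i-1, by omega⟩ := by
  rw [vtop_pos m hi]
  congr 1
  ext
  exact Nat.mod_eq_of_lt (by omega)

noncomputable def Ftop (m : ℕ) : Fam (m+1) m where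
  v := vtop m
  σ := σtop m
  ε := fun _ => 1
  K := ⊥
  φ := AlgHom.id ℚ _
  hv0 := vtop_zero m
  hvσ := by
    intro i h1 h2
    rw [vtop_pos m h1, one_smul, σtop]
  hε := fun i _ _ => Or.inl rfl
  hσ := by
    intro i j hi1 hi2 hj1 hj2 hh
    have hh' := congrArg Fin.val hh
    simp only [σtop] at hh'
    rw [Nat.mod_eq_of_lt (by omega), Nat.mod_eq_of_lt (by omega)] at hh'
    omega
  hret := ret_bot
  hfix := fun i _ _ => rfl

/-- The wrapper theorem, in terms of the top family. -/
theorem wrapper (m : ℕ) (hm : 3 ≤ m) (a : ℕ → ℕ)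
    (Iw : ℕ → Ideal (Rg (m+1)))
    (hIw : ∀ k, 1 ≤ k → k ≤ m → Iw k = Iv (vtop m) k)
    (hIwTop : Iw (m+1) = Ideal.span {vtop m (m+1), vtop m m + 1}) :
    (⨅ k ∈ Finset.Icc 1 (m+1), Iw k ^ a k) = ∏ k ∈ Finset.Icc 1 (m+1), Iw k ^ a k := by
  have hIcc : Finset.Icc 1 (m+1) = insert (m+1) (Finset.Icc 1 m) := by
    ext i; simp only [Finset.mem_Icc, Finset.mem_insert]; omega
  have hnot : (m+1) ∉ Finset.Icc 1 m := by simp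
  have hIH := master m (Ftop m) a
  -- (Ftop m).v = vtop m and (Ftop m).K = ⊥ definitionally
  have hIH' : (⨅ k ∈ Finset.Icc 1 m, (Iv (vtop m) k ^ a k ⊔ ⊥))
      = (∏ k ∈ Finset.Icc 1 m, Iv (vtop m) k ^ a k) ⊔ (⊥ : Ideal (Rg (m+1))) := hIH
  set u : Rg (m+1) := vtop m m + 1 with hu_def
  -- h1
  have hstab1 : Stab ((∏ k ∈ Finset.Icc 1 m, Iv (vtop m) k ^ a k) ⊔ (⊥ : Ideal (Rg (m+1)))) u := by
    rw [← hIH']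
    apply stab_biInf
    intro k hk
    rw [Finset.mem_Icc] at hk
    refine oblGen (Ftop m) (by omega) (by omega) u ?_ (a k)
    exact valC_ne (Ftop m) (by omega) (by omega) (by omega)
  -- h2 : freshness
  have hKtop : ∀ (K2 : Ideal (Rg (m+1))), K2 = Ideal.span {u} →
      Stab ((∏ k ∈ Finset.Icc 1 m, Iv (vtop m) k ^ a k) ⊔ (⊥ : Ideal (Rg (m+1))) ⊔ K2)
        (vtop m (m+1)) := by
    intro K2 hK2
    rw [sup_bot_eq]
    have humem : u ∈ K2 := by rw [hK2]; exact Ideal.subset_span rfl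
    -- top ideal is killed
    have htop : Iv (vtop m) m ⊔ K2 = ⊤ := by
      rw [Ideal.eq_top_iff_one]
      have h1 : (1 : Rg (m+1)) = -(vtop m m) + u := by rw [hu_def]; ring
      rw [h1]
      exact add_mem_add (Submodule.neg_mem _ (u_mem_pair _ _)) humem
    have hptop : Iv (vtop m) m ^ a m ⊔ K2 = ⊤ := by
      apply top_le_iff.1
      calc (⊤ : Ideal (Rg (m+1))) = ⊤ ^ a m := by rw [Ideal.top_pow]
      _ = (Iv (vtop m) m ⊔ K2) ^ a m := by rw [htop]
      _ ≤ Iv (vtop m) m ^ a m ⊔ K2 := pow_add_le _ _ _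
    have hIcc2 : Finset.Icc 1 m = insert m (Finset.Icc 1 (m-1)) := by
      ext i; simp only [Finset.mem_Icc, Finset.mem_insert]; omega
    have hnot2 : m ∉ Finset.Icc 1 (m-1) := by simp; omega
    have habs : (∏ k ∈ Finset.Icc 1 m, Iv (vtop m) k ^ a k) ⊔ K2
        = (∏ k ∈ Finset.Icc 1 (m-1), Iv (vtop m) k ^ a k) ⊔ K2 := by
      rw [hIcc2, Finset.prod_insert hnot2, mul_comm]
      exact mul_absorb hptop
    rw [habs]
    -- the pivot retraction
    have hσmm : (⟨(m-1) % (m+1), Nat.mod_lt _ (Nat.succ_pos m)⟩ : Fin (m+1)) = σtop m m := rfl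
    have hretψ : IsRet K2 (subst (σtop m m) (C (-1))) := by
      constructor
      · intro x hx
        rw [hK2] at hx
        rcases Ideal.mem_span_singleton'.1 hx with ⟨r, rfl⟩
        rw [map_mul]
        have hzero : subst (σtop m m) (C (-1)) u = 0 := by
          rw [hu_def, vtop_pos m (by omega), map_add, map_one, hσmm, subst_X_self]
          rw [show (C (-1 : ℚ) : Rg (m+1)) = -1 by simp]
          ring
        rw [hzero, mul_zero]
      · intro x
        apply sub_aeval_mem
        intro i
        by_cases hi : i = σtop m m
        · subst hi
          rw [Function.update_self]
          have heq : X (σtop m m) - C (-1) = u := by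
            rw [hu_def, vtop_pos m (by omega), hσmm]
            rw [show (C (-1 : ℚ) : Rg (m+1)) = -1 by simp]
            ring
          rw [heq]
          exact humem
        · rw [Function.update_of_ne hi, sub_self]
          exact Submodule.zero_mem _
    -- freshness argument
    intro g hg
    have hψv : ∀ j, 1 ≤ j → j ≤ m - 1 → (subst (σtop m m) (C (-1))) (vtop m j) = vtop m j := by
      intro j h1 h2
      rw [vtop_eq_X m h1 (by omega)]
      refine subst_X_ne (Fin.ne_of_val_ne ?_) _
      show j - 1 ≠ (m-1) % (m+1)
      rw [Nat.mod_eq_of_lt (by omega)]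
      omega
    have hψtail : (subst (σtop m m) (C (-1))) (vtop m (m+1)) = vtop m (m+1) := by
      rw [vtop_eq_X m (by omega) (by omega)]
      refine subst_X_ne (Fin.ne_of_val_ne ?_) _
      show (m+1) - 1 ≠ (m-1) % (m+1)
      rw [Nat.mod_eq_of_lt (by omega)]
      omega
    have hψm : (subst (σtop m m) (C (-1))) (vtop m m) = C (-1) := by
      rw [vtop_pos m (by omega), hσmm, subst_X_self]
    have hψ0 : (subst (σtop m m) (C (-1))) (vtop m 0) = 1 := by
      rw [vtop_zero, map_one]
    have hvtopX : ∀ j (h1 : 1 ≤ j) (h2 : j ≤ m + 1), vtop m j = X (⟨j-1, by omega⟩ : Fin (m+1)) :=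
      fun j h1 h2 => vtop_eq_X m h1 h2
    have hlast : vtop m (m+1) = X (Fin.last m) := by
      rw [hvtopX (m+1) (by omega) (by omega)]
      congr 1
    have hPfree_vtop : ∀ j, 1 ≤ j → j ≤ m - 1 → Pfree (vtop m j) := by
      intro j h1 h2
      rw [hvtopX j h1 (by omega)]
      refine Pfree_X ?_
      intro hcon
      have hcon' := congrArg Fin.val hcon
      simp only [Fin.val_last] at hcon'
      omega
    -- the image ideal
    have hmapmem : (subst (σtop m m) (C (-1))) g * vtop m (m+1)
        ∈ ∏ k ∈ Finset.Icc 1 (m-1),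
          Ideal.span {vtop m k,
            (subst (σtop m m) (C (-1))) (vtop m (k-1) + vtop m (k+1))} ^ a k := by
      have h1 := Ideal.mem_map_of_mem
        ((subst (σtop m m) (C (-1)) : Rg (m+1) →ₐ[ℚ] Rg (m+1)) : Rg (m+1) →+* Rg (m+1)) hg
      rw [Ideal.map_sup] at h1
      have h2 : Ideal.map
          ((subst (σtop m m) (C (-1)) : Rg (m+1) →ₐ[ℚ] Rg (m+1)) : Rg (m+1) →+* Rg (m+1)) K2
          = ⊥ := by
        rw [hK2, Ideal.map_span, Set.image_singleton]
        have hzero : subst (σtop m m) (C (-1)) u = 0 := by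
          rw [hu_def, vtop_pos m (by omega), map_add, map_one, hσmm, subst_X_self]
          rw [show (C (-1 : ℚ) : Rg (m+1)) = -1 by simp]
          ring
        rw [Ideal.span_singleton_eq_bot]
        exact hzero
      rw [h2, sup_bot_eq] at h1
      have h3 := map_prod_pow_le (subst (σtop m m) (C (-1))) (Finset.Icc 1 (m-1))
        (fun k => Iv (vtop m) k)
        (fun k => Ideal.span {vtop m k,
          (subst (σtop m m) (C (-1))) (vtop m (k-1) + vtop m (k+1))}) a ?_
      · have h4 := h3 h1
        rw [map_mul] at h4
        simp only [AlgHom.coe_toRingHom] at h4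
        rwa [hψtail] at h4
      · intro k hk
        rw [Finset.mem_Icc] at hk
        beta_reduce
        rw [show Iv (vtop m) k = Ideal.span {vtop m k, vtop m (k-1) + vtop m (k+1)} from rfl,
          Ideal.map_span, Set.image_pair]
        simp only [AlgHom.coe_toRingHom]
        apply Ideal.span_mono
        intro t ht
        rcases ht with rfl | ht
        · rw [hψv k (by omega) (by omega)]
          exact Set.mem_insert _ _
        · rcases ht with rfl
          exact Set.mem_insert_of_mem _ rfl
    -- fresh stability
    have hfresh := freshStab (Finset.Icc 1 (m-1)) (fun k => vtop m k)
      (fun k => (subst (σtop m m) (C (-1))) (vtop m (k-1) + vtop m (k+1))) a ?_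
      ((subst (σtop m m) (C (-1))) g) ?_
    · -- D̄ ≤ D ⊔ K2 and conclude
      have hDle : (∏ k ∈ Finset.Icc 1 (m-1),
          Ideal.span {vtop m k,
            (subst (σtop m m) (C (-1))) (vtop m (k-1) + vtop m (k+1))} ^ a k)
          ≤ (∏ k ∈ Finset.Icc 1 (m-1), Iv (vtop m) k ^ a k) ⊔ K2 := by
        have : ∀ k ∈ Finset.Icc 1 (m-1),
            (Ideal.span {vtop m k,
              (subst (σtop m m) (C (-1))) (vtop m (k-1) + vtop m (k+1))} ^ a k)
            ≤ (Iv (vtop m) k ⊔ K2) ^ a k := by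
          intro k hk
          apply Ideal.pow_right_mono
          rw [Ideal.span_le]
          intro t ht
          rcases ht with rfl | ht
          · exact left_mem_add (u_mem_pair _ _)
          · rcases ht with rfl
            have hsec := hretψ.sec (vtop m (k-1) + vtop m (k+1))
            have heq2 : (subst (σtop m m) (C (-1))) (vtop m (k-1) + vtop m (k+1))
                = (vtop m (k-1) + vtop m (k+1))
                  - ((vtop m (k-1) + vtop m (k+1))
                    - (subst (σtop m m) (C (-1))) (vtop m (k-1) + vtop m (k+1))) := by
              ring
            rw [heq2]
            exact Submodule.sub_mem _ (left_mem_add (v_mem_pair _ _)) (right_mem_add hsec)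
        calc _ ≤ ∏ k ∈ Finset.Icc 1 (m-1), (Iv (vtop m) k ⊔ K2) ^ a k :=
              prod_mono_ideal this
        _ ≤ _ := by
            apply prod_le_prod_add
            intro k hk
            exact pow_add_le _ _ _
      have hsecg := hretψ.sec g
      have hgeq : g = (g - (subst (σtop m m) (C (-1))) g)
          + (subst (σtop m m) (C (-1))) g := by ring
      rw [hgeq]
      exact Submodule.add_mem _ (right_mem_add hsecg) (hDle hfresh)
    · -- Pfree hypotheses
      intro k hk
      rw [Finset.mem_Icc] at hk
      constructor
      · exact hPfree_vtop k (by omega) (by omega)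
      · beta_reduce
        rw [map_add]
        refine Pfree.add ?_ ?_
        · rcases Nat.eq_zero_or_pos (k-1) with h0 | h0
          · rw [h0, hψ0]
            exact Pfree.one
          · rw [hψv (k-1) h0 (by omega)]
            exact hPfree_vtop (k-1) h0 (by omega)
        · by_cases hk1m : k + 1 = m
          · rw [hk1m, hψm]
            exact Pfree_C _
          · rw [hψv (k+1) (by omega) (by omega)]
            exact hPfree_vtop (k+1) (by omega) (by omega)
    · -- the membership, with the tail written as X (last m)
      rw [← hlast]
      exact hmapmem
  -- assemble the wrapper
  have hstab2 : Stab ((∏ k ∈ Finset.Icc 1 m, Iv (vtop m) k ^ a k)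
      ⊔ (⊥ : Ideal (Rg (m+1))) ⊔ Ideal.span {u}) (vtop m (m+1)) :=
    hKtop (Ideal.span {u}) rfl
  have hmain := lemA hstab1 hstab2 (a (m+1))
  have hIvQ : Iw (m+1) = Ideal.span {u, vtop m (m+1)} := by
    rw [hIwTop, Set.pair_comm, hu_def]
  rw [hIcc, Finset.iInf_insert, Finset.prod_insert hnot]
  have hcongr : ∀ k ∈ Finset.Icc 1 m, Iw k ^ a k = Iv (vtop m) k ^ a k := by
    intro k hk
    rw [Finset.mem_Icc] at hk
    rw [hIw k hk.1 hk.2]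
  rw [Finset.prod_congr rfl hcongr]
  have hinf : (⨅ k ∈ Finset.Icc 1 m, Iw k ^ a k)
      = ⨅ k ∈ Finset.Icc 1 m, Iv (vtop m) k ^ a k := by
    refine iInf_congr ?_
    intro k
    refine iInf_congr ?_
    intro hk
    rw [Finset.mem_Icc] at hk
    rw [hIw k hk.1 hk.2]
  rw [hinf, hIvQ]
  have hIH'' : (⨅ k ∈ Finset.Icc 1 m, Iv (vtop m) k ^ a k)
      = (∏ k ∈ Finset.Icc 1 m, Iv (vtop m) k ^ a k) := by
    have h5 := hIH'
    simp only [sup_bot_eq] at h5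
    exact h5
  rw [hIH'']
  have h6 := hmain
  simp only [sup_bot_eq] at h6
  exact h6

end A16

open A16 in
/-- For the linearly oriented Aₙ quiver (n ≥ 4), intersections of powers of the ideals
`I_k = (x_k, f_k)` equal their products, for all exponent tuples. Here `x 0 = x (n+1) = 1`
by convention, so `f 1 = 1 + x 2` and `f n = 1 + x (n-1)`. -/
theorem stmt_16 (n : ℕ) (hn : 4 ≤ n)
    (x : ℕ → MvPolynomial (Fin n) ℚ)
    (hx : ∀ k (h1 : 1 ≤ k) (h2 : k ≤ n), x k = X ⟨k - 1, by omega⟩)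
    (hx0 : x 0 = 1) (hxn : x (n + 1) = 1)
    (f : ℕ → MvPolynomial (Fin n) ℚ)
    (hf : ∀ k, 1 ≤ k → k ≤ n → f k = x (k - 1) + x (k + 1))
    (a : ℕ → ℕ) :
    (⨅ k ∈ Finset.Icc 1 n, (Ideal.span {x k, f k}) ^ a k) =
      ∏ k ∈ Finset.Icc 1 n, (Ideal.span {x k, f k}) ^ a k := by
  obtain ⟨m, rfl⟩ : ∃ m, n = m + 1 := ⟨n - 1, by omega⟩
  have hm : 3 ≤ m := by omega
  have hxv : ∀ k, k ≤ m + 1 → x k = vtop m k := by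
    intro k hk
    rcases Nat.eq_zero_or_pos k with h0 | h0
    · rw [h0, hx0, vtop_zero]
    · rw [hx k h0 hk, vtop_eq_X m h0 hk]
  have hIw : ∀ k, 1 ≤ k → k ≤ m → Ideal.span {x k, f k} = Iv (vtop m) k := by
    intro k h1 h2
    rw [show Iv (vtop m) k
      = Ideal.span {vtop m k, vtop m (k-1) + vtop m (k+1)} from rfl]
    rw [hf k h1 (by omega), hxv k (by omega), hxv (k-1) (by omega), hxv (k+1) (by omega)]
  have hIwTop : Ideal.span {x (m+1), f (m+1)}
      = Ideal.span {vtop m (m+1), vtop m m + 1} := by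
    rw [hf (m+1) (by omega) (by omega), hxn, hxv (m+1) (by omega)]
    rw [show (m+1-1) = m from rfl, hxv m (by omega)]
  exact wrapper m hm a (fun k => Ideal.span {x k, f k}) hIw hIwTop
end

section
/- Let A be the ℚ-subalgebra of ℚ(x_1, x_2) generated by x_1, x_2, (1+x_2)/x_1, (1+x_1)/x_2 (the type A_2 cluster algebra). Then A is a unique factorization domain. -/
open MvPolynomial

noncomputable section ClusterA2
namespace ClusterA2

abbrev R2 : Type := MvPolynomial (Fin 2) ℚ
abbrev F2 : Type := FractionRing R2

def al : R2 →+* F2 := algebraMap R2 F2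

lemma al_inj : Function.Injective al := IsFractionRing.injective R2 F2

lemma alX_ne (i : Fin 2) : al (X i) ≠ 0 := by
  simpa using al_inj.ne (MvPolynomial.X_ne_zero (R := ℚ) i)

/-- substitution `X j ↦ X i * X j - 1`, fixing others -/
def sg (i j : Fin 2) : R2 →ₐ[ℚ] R2 :=
  aeval (fun k => if k = j then X i * X j - 1 else X k)

/-- substitution `X j ↦ X i * X j`, fixing others -/
def dl (i j : Fin 2) : R2 →ₐ[ℚ] R2 :=
  aeval (fun k => if k = j then X i * X j else X k)

/-- substitution `X j ↦ X j + 1` -/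
def tr (j : Fin 2) : R2 →ₐ[ℚ] R2 :=
  aeval (fun k => if k = j then X j + 1 else X k)

/-- substitution `X j ↦ X j - 1` -/
def trInv (j : Fin 2) : R2 →ₐ[ℚ] R2 :=
  aeval (fun k => if k = j then X j - 1 else X k)

lemma sg_X_self {i j : Fin 2} (hij : i ≠ j) : sg i j (X i) = X i := by
  simp [sg, if_neg hij]

lemma sg_X_other (i j : Fin 2) : sg i j (X j) = X i * X j - 1 := by simp [sg]

lemma tr_trInv (j : Fin 2) (P : R2) : tr j (trInv j P) = P := by
  have : (tr j).comp (trInv j) = AlgHom.id ℚ R2 := by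
    apply MvPolynomial.algHom_ext
    intro k
    by_cases hk : k = j <;> simp [tr, trInv, hk]
  calc tr j (trInv j P) = ((tr j).comp (trInv j)) P := rfl
    _ = P := by rw [this]; rfl

lemma sg_comp_tr (i j : Fin 2) (P : R2) : sg i j (tr j P) = dl i j P := by
  have : (sg i j).comp (tr j) = dl i j := by
    apply MvPolynomial.algHom_ext
    intro k
    by_cases hk : k = j <;> simp [tr, sg, dl, hk]
  calc sg i j (tr j P) = ((sg i j).comp (tr j)) P := rfl
    _ = dl i j P := by rw [this]

/-- auxiliary right inverse used for injectivity of `sg` -/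
def rho (i j : Fin 2) : R2 →ₐ[ℚ] F2 :=
  aeval (fun k => if k = j then (1 + al (X j)) / al (X i) else al (X k))

lemma sg_inj {i j : Fin 2} (hij : i ≠ j) : Function.Injective (sg i j) := by
  have hcomp : (rho i j).comp (sg i j) = IsScalarTower.toAlgHom ℚ R2 F2 := by
    apply MvPolynomial.algHom_ext
    intro k
    by_cases hk : k = j
    · subst hk
      have hine : i ≠ k := hij
      simp only [AlgHom.coe_comp, Function.comp_apply, sg_X_other, map_sub, map_mul, map_one,
        rho, aeval_X, if_neg hine, if_pos rfl, if_true]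
      rw [mul_div_cancel₀ _ (alX_ne i)]
      simp [al, IsScalarTower.toAlgHom]
    · simp [sg, rho, if_neg hk, al, IsScalarTower.toAlgHom]
  intro P Q h
  apply al_inj
  have : (rho i j) (sg i j P) = (rho i j) (sg i j Q) := by rw [h]
  calc al P = ((rho i j).comp (sg i j)) P := by rw [hcomp]; rfl
    _ = ((rho i j).comp (sg i j)) Q := this
    _ = al Q := by rw [hcomp]; rfl

lemma sg_ne_zero {i j : Fin 2} (hij : i ≠ j) {P : R2} (hP : P ≠ 0) : sg i j P ≠ 0 := by
  intro h
  exact hP (sg_inj hij (by simpa using h))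

lemma prime_X (i : Fin 2) : Prime (X i : R2) := by
  have h0 : Prime (X 0 : R2) := by
    rw [← MulEquiv.prime_iff (MvPolynomial.finSuccEquiv ℚ 1).toMulEquiv]
    simpa [MvPolynomial.finSuccEquiv_X_zero] using
      (Polynomial.prime_X (R := MvPolynomial (Fin 1) ℚ))
  fin_cases i
  · exact h0
  · rw [← MulEquiv.prime_iff (MvPolynomial.renameEquiv ℚ (Equiv.swap (0 : Fin 2) 1)).toMulEquiv]
    simpa [MvPolynomial.renameEquiv_apply, Equiv.swap_apply_right] using h0

section Monomials

variable {i j : Fin 2}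

lemma fin2_cases (hij : i ≠ j) (k : Fin 2) : k = i ∨ k = j := by
  fin_cases i <;> fin_cases j <;> fin_cases k <;> simp_all

lemma mon2 (hij : i ≠ j) (s : Fin 2 →₀ ℕ) (c : ℚ) :
    (monomial s c : R2) = C c * X i ^ (s i) * X j ^ (s j) := by
  rw [monomial_eq]
  rw [Finsupp.prod_fintype _ _ (fun k => pow_zero _)]
  have h2 : ∀ (g : Fin 2 → R2), ∏ k, g k = g 0 * g 1 := fun g => Fin.prod_univ_two g
  rw [h2]
  fin_cases i <;> fin_cases j <;> simp_all <;> ring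

/-- exponent transform of `dl`: adds the `j`-exponent onto the `i`-exponent -/
def E (i j : Fin 2) (s : Fin 2 →₀ ℕ) : Fin 2 →₀ ℕ := s + Finsupp.single i (s j)

lemma E_apply_i (hij : i ≠ j) (s : Fin 2 →₀ ℕ) : E i j s i = s i + s j := by
  simp [E]

lemma E_apply_j (hij : i ≠ j) (s : Fin 2 →₀ ℕ) : E i j s j = s j := by
  simp [E, Finsupp.single_apply, if_neg hij]

lemma E_inj (hij : i ≠ j) : Function.Injective (E i j) := by
  intro s t h
  have hj : s j = t j := by
    have := congrArg (fun u => u j) h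
    simpa [E_apply_j hij] using this
  have hi : s i = t i := by
    have := congrArg (fun u => u i) h
    simp only [E_apply_i hij] at this
    omega
  ext k
  rcases fin2_cases hij k with rfl | rfl
  · exact hi
  · exact hj

lemma dl_monomial (hij : i ≠ j) (s : Fin 2 →₀ ℕ) (c : ℚ) :
    dl i j (monomial s c) = monomial (E i j s) c := by
  rw [mon2 hij s c, mon2 hij (E i j s) c, E_apply_i hij, E_apply_j hij]
  have hC : dl i j (C c) = C c := by simp [dl]
  have hXi : dl i j (X i) = X i := by simp [dl, if_neg hij]
  have hXj : dl i j (X j) = X i * X j := by simp [dl]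
  rw [map_mul, map_mul, map_pow, map_pow, hC, hXi, hXj]
  ring

lemma coeff_dl (hij : i ≠ j) (Q : R2) (s : Fin 2 →₀ ℕ) (hs : s ∈ Q.support) :
    coeff (E i j s) (dl i j Q) = coeff s Q := by
  conv_lhs => rw [Q.as_sum]
  rw [map_sum, coeff_sum]
  have : ∀ t ∈ Q.support, t ≠ s →
      coeff (E i j s) (dl i j (monomial t (coeff t Q))) = 0 := by
    intro t _ hts
    rw [dl_monomial hij, coeff_monomial, if_neg (fun h => hts (E_inj hij h))]
  rw [Finset.sum_eq_single s _ (fun h => absurd hs h)]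
  · rw [dl_monomial hij, coeff_monomial, if_pos rfl]
  · exact this

lemma support_dvd_pow {a : ℕ} {W : R2} (h : X i ^ a ∣ W) :
    ∀ u ∈ W.support, a ≤ u i := by
  obtain ⟨V, rfl⟩ := h
  intro u hu
  classical
  have := MvPolynomial.support_mul (X i ^ a) V hu
  rw [Finset.mem_add] at this
  obtain ⟨v, hv, w, hw, rfl⟩ := this
  rw [MvPolynomial.support_X_pow] at hv
  simp only [Finset.mem_singleton] at hv
  subst hv
  simp [Finsupp.single_apply]

lemma dl_dvd_support (hij : i ≠ j) {a : ℕ} {Q : R2} (h : X i ^ a ∣ dl i j Q) :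
    ∀ s ∈ Q.support, a ≤ s i + s j := by
  intro s hs
  have hco : coeff (E i j s) (dl i j Q) ≠ 0 := by
    rw [coeff_dl hij Q s hs]
    exact (mem_support_iff).1 hs
  have hmem : E i j s ∈ (dl i j Q).support := mem_support_iff.2 hco
  have := support_dvd_pow h _ hmem
  rwa [E_apply_i hij] at this

/-- the ideal of the point; `Idl 0 1 = (X 0, 1 + X 1)` -/
def Idl (i j : Fin 2) : Ideal R2 := Ideal.span {X i, 1 + X j}

lemma tr_monomial (hij : i ≠ j) (s : Fin 2 →₀ ℕ) (c : ℚ) :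
    tr j (monomial s c) = C c * X i ^ (s i) * (1 + X j) ^ (s j) := by
  rw [mon2 hij s c]
  have hC : tr j (C c) = C c := by simp [tr]
  have hXi : tr j (X i) = X i := by simp [tr, if_neg hij]
  have hXj : tr j (X j) = X j + 1 := by simp [tr]
  rw [map_mul, map_mul, map_pow, map_pow, hC, hXi, hXj, add_comm (X j) 1]

lemma mem_Idl_pow_of_dvd (hij : i ≠ j) {a : ℕ} {P : R2} (h : X i ^ a ∣ sg i j P) :
    P ∈ (Idl i j) ^ a := by
  set Q := trInv j P with hQ
  have hPQ : P = tr j Q := (tr_trInv j P).symm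
  have hdl : sg i j P = dl i j Q := by rw [hPQ, sg_comp_tr]
  rw [hdl] at h
  have hsupp := dl_dvd_support hij h
  rw [hPQ, Q.as_sum, map_sum]
  apply Ideal.sum_mem
  intro s hs
  rw [tr_monomial hij]
  have h1 : (X i : R2) ∈ Idl i j := Ideal.subset_span (by simp)
  have h2 : (1 + X j : R2) ∈ Idl i j := Ideal.subset_span (by simp)
  have hmem : X i ^ (s i) * (1 + X j) ^ (s j) ∈ (Idl i j) ^ (s i + s j) := by
    rw [pow_add]
    exact Ideal.mul_mem_mul (Ideal.pow_mem_pow h1 _) (Ideal.pow_mem_pow h2 _)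
  rw [mul_assoc]
  exact Ideal.mul_mem_left _ _ (Ideal.pow_le_pow_right (hsupp s hs) hmem)

end Monomials

section AlgebraA

def y1 : F2 := al (X 0)
def y2 : F2 := al (X 1)

lemma y1_def : y1 = al (X 0) := rfl
lemma y2_def : y2 = al (X 1) := rfl

lemma y1_ne : y1 ≠ 0 := alX_ne 0
lemma y2_ne : y2 ≠ 0 := alX_ne 1

def genSet : Set F2 := {y1, y2, (1 + y2) / y1, (1 + y1) / y2}

def AA : Subalgebra ℚ F2 := Algebra.adjoin ℚ genSet

lemma y1_mem : y1 ∈ AA := Algebra.subset_adjoin (by simp [genSet])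
lemma y2_mem : y2 ∈ AA := Algebra.subset_adjoin (by simp [genSet])
lemma g3_mem : (1 + y2) / y1 ∈ AA := Algebra.subset_adjoin (by simp [genSet])
lemma g4_mem : (1 + y1) / y2 ∈ AA := Algebra.subset_adjoin (by simp [genSet])

lemma alg_mem_AA (P : R2) : al P ∈ AA := by
  induction P using MvPolynomial.induction_on with
  | C q =>
      have : al (C q) = algebraMap ℚ F2 q := by
        rw [show (C q : R2) = algebraMap ℚ R2 q from rfl, al,
          ← IsScalarTower.algebraMap_apply]
      rw [this]; exact AA.algebraMap_mem q
  | add p q hp hq => rw [map_add]; exact AA.add_mem hp hq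
  | mul_X p n hp =>
      rw [map_mul]
      refine AA.mul_mem hp ?_
      fin_cases n
      · exact y1_mem
      · exact y2_mem

/-- the membership predicate defining `AA` by numerators and denominators -/
def memA (f : F2) : Prop :=
  ∃ P : R2, ∃ a b : ℕ,
    f * y1 ^ a * y2 ^ b = al P ∧ X 0 ^ a ∣ sg 0 1 P ∧ X 1 ^ b ∣ sg 1 0 P

lemma sg_pow_self {i j : Fin 2} (hij : i ≠ j) (k : ℕ) : sg i j (X i ^ k) = X i ^ k := by
  rw [map_pow, sg_X_self hij]

lemma sg_pow_other (i j : Fin 2) (l : ℕ) : sg i j (X j ^ l) = (X i * X j - 1) ^ l := by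
  rw [map_pow, sg_X_other]

lemma ne01 : (0 : Fin 2) ≠ 1 := by decide
lemma ne10 : (1 : Fin 2) ≠ 0 := by decide

lemma memA_bump {f : F2} {P : R2} {a b : ℕ}
    (heq : f * y1 ^ a * y2 ^ b = al P)
    (h1 : X 0 ^ a ∣ sg 0 1 P) (h2 : X 1 ^ b ∣ sg 1 0 P) (k l : ℕ) :
    f * y1 ^ (a + k) * y2 ^ (b + l) = al (P * X 0 ^ k * X 1 ^ l) ∧
      X 0 ^ (a + k) ∣ sg 0 1 (P * X 0 ^ k * X 1 ^ l) ∧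
      X 1 ^ (b + l) ∣ sg 1 0 (P * X 0 ^ k * X 1 ^ l) := by
  refine ⟨?_, ?_, ?_⟩
  · rw [map_mul, map_mul, map_pow, map_pow, ← heq, ← y1_def, ← y2_def, pow_add, pow_add]
    ring
  · rw [map_mul, map_mul, sg_pow_self ne01, sg_pow_other 0 1, pow_add]
    exact dvd_mul_of_dvd_left (mul_dvd_mul h1 dvd_rfl) _
  · rw [map_mul, map_mul, sg_pow_other 1 0, sg_pow_self ne10, pow_add]
    calc X 1 ^ b * X 1 ^ l ∣ (sg 1 0 P * X 1 ^ l) := mul_dvd_mul h2 dvd_rfl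
      _ ∣ sg 1 0 P * (X 1 * X 0 - 1) ^ k * X 1 ^ l := by
          rw [mul_comm (sg 1 0 P) ((X 1 * X 0 - 1) ^ k), mul_assoc]
          exact dvd_mul_left _ _

def A' : Subalgebra ℚ F2 where
  carrier := {f | memA f}
  mul_mem' := by
    rintro f g ⟨P, a, b, heq, h1, h2⟩ ⟨P', a', b', heq', h1', h2'⟩
    show memA (f * g)
    refine ⟨P * P', a + a', b + b', ?_, ?_, ?_⟩
    · rw [map_mul, ← heq, ← heq', pow_add, pow_add]; ring
    · rw [map_mul, pow_add]; exact mul_dvd_mul h1 h1'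
    · rw [map_mul, pow_add]; exact mul_dvd_mul h2 h2'
  add_mem' := by
    rintro f g ⟨P, a, b, heq, h1, h2⟩ ⟨P', a', b', heq', h1', h2'⟩
    obtain ⟨e1, d1, d2⟩ := memA_bump heq h1 h2 (max a a' - a) (max b b' - b)
    obtain ⟨e1', d1', d2'⟩ := memA_bump heq' h1' h2' (max a a' - a') (max b b' - b')
    rw [Nat.add_sub_cancel' (le_max_left a a'), Nat.add_sub_cancel' (le_max_left b b')] at e1
    rw [Nat.add_sub_cancel' (le_max_left a a')] at d1
    rw [Nat.add_sub_cancel' (le_max_left b b')] at d2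
    rw [Nat.add_sub_cancel' (le_max_right a a'), Nat.add_sub_cancel' (le_max_right b b')] at e1'
    rw [Nat.add_sub_cancel' (le_max_right a a')] at d1'
    rw [Nat.add_sub_cancel' (le_max_right b b')] at d2'
    show memA (f + g)
    refine ⟨P * X 0 ^ (max a a' - a) * X 1 ^ (max b b' - b) +
      P' * X 0 ^ (max a a' - a') * X 1 ^ (max b b' - b'), max a a', max b b', ?_, ?_, ?_⟩
    · rw [map_add, ← e1, ← e1']; ring
    · rw [map_add]; exact dvd_add d1 d1'
    · rw [map_add]; exact dvd_add d2 d2'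
  algebraMap_mem' := by
    intro q
    show memA (algebraMap ℚ F2 q)
    refine ⟨C q, 0, 0, ?_, by simp, by simp⟩
    rw [pow_zero, pow_zero, mul_one, mul_one, al,
      show (C q : R2) = algebraMap ℚ R2 q from rfl, ← IsScalarTower.algebraMap_apply]

lemma AA_le_A' : AA ≤ A' := by
  apply Algebra.adjoin_le
  rintro f (rfl | rfl | rfl | rfl)
  · exact show memA y1 from ⟨X 0, 0, 0, by simp [y1], by simp, by simp⟩
  · exact show memA y2 from ⟨X 1, 0, 0, by simp [y2], by simp, by simp⟩
  · show memA ((1 + y2) / y1)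
    refine ⟨1 + X 1, 1, 0, ?_, ?_, by simp⟩
    · rw [pow_one, pow_zero, mul_one, div_mul_cancel₀ _ y1_ne, map_add, map_one]; rfl
    · rw [pow_one, map_add, map_one, sg_X_other]
      exact ⟨X 1, by ring⟩
  · show memA ((1 + y1) / y2)
    refine ⟨1 + X 0, 0, 1, ?_, by simp, ?_⟩
    · rw [pow_one, pow_zero, mul_one, div_mul_cancel₀ _ y2_ne, map_add, map_one]; rfl
    · rw [pow_one, map_add, map_one, sg_X_other]
      exact ⟨X 0, by ring⟩

lemma Idl_helper {i j : Fin 2} (hij : i ≠ j) (hg : (1 + al (X j)) / al (X i) ∈ AA) :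
    ∀ (a : ℕ) (r : R2), r ∈ (Idl i j) ^ a → ∃ g ∈ AA, al r = (al (X i)) ^ a * g := by
  intro a
  induction a with
  | zero => intro r _; exact ⟨al r, alg_mem_AA r, by rw [pow_zero, one_mul]⟩
  | succ a ih =>
      intro r hr
      rw [pow_succ] at hr
      refine Submodule.mul_induction_on hr (fun m hm n hn => ?_) ?_
      ·
          obtain ⟨gm, hgm, hem⟩ := ih m hm
          have hn' : ∃ g ∈ AA, al n = al (X i) * g := by
            induction hn using Submodule.span_induction with
            | mem x hx =>
                rcases hx with rfl | rfl
                · exact ⟨1, AA.one_mem, by rw [mul_one]⟩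
                · refine ⟨(1 + al (X j)) / al (X i), hg, ?_⟩
                  rw [mul_comm, div_mul_cancel₀ _ (alX_ne i), map_add, map_one]
            | zero => exact ⟨0, AA.zero_mem, by simp⟩
            | add x y hx hy ihx ihy =>
                obtain ⟨g1, hg1, he1⟩ := ihx
                obtain ⟨g2, hg2, he2⟩ := ihy
                exact ⟨g1 + g2, AA.add_mem hg1 hg2, by rw [map_add, he1, he2, mul_add]⟩
            | smul c x hx ihx =>
                obtain ⟨g1, hg1, he1⟩ := ihx
                refine ⟨al c * g1, AA.mul_mem (alg_mem_AA c) hg1, ?_⟩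
                rw [smul_eq_mul, map_mul, he1]; ring
          obtain ⟨gn, hgn, hen⟩ := hn'
          refine ⟨gm * gn, AA.mul_mem hgm hgn, ?_⟩
          rw [map_mul, hem, hen, pow_succ]; ring
      · rintro x y ⟨g1, hg1, he1⟩ ⟨g2, hg2, he2⟩
        exact ⟨g1 + g2, AA.add_mem hg1 hg2, by rw [map_add, he1, he2, mul_add]⟩

lemma Idl_coprime : Idl 0 1 ⊔ Idl 1 0 = ⊤ := by
  rw [Ideal.eq_top_iff_one]
  apply Submodule.mem_sup.2
  refine ⟨1 + X 1, Ideal.subset_span (by simp), -(X 1),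
    Submodule.neg_mem _ (Ideal.subset_span (by simp [Idl])), by ring⟩

lemma mem_product {P : R2} {a b : ℕ} (h1 : P ∈ (Idl 0 1) ^ a) (h2 : P ∈ (Idl 1 0) ^ b) :
    P ∈ (Idl 0 1) ^ a * (Idl 1 0) ^ b := by
  have hc1 : Idl 0 1 ⊔ (Idl 1 0) ^ b = ⊤ := Ideal.sup_pow_eq_top Idl_coprime
  have hc2 : (Idl 1 0) ^ b ⊔ (Idl 0 1) ^ a = ⊤ :=
    Ideal.sup_pow_eq_top (by rwa [sup_comm] at hc1)
  have hco : (Idl 0 1) ^ a ⊔ (Idl 1 0) ^ b = ⊤ := by rwa [sup_comm] at hc2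
  rw [Ideal.mul_eq_inf_of_coprime hco]
  exact ⟨h1, h2⟩

lemma memA_imp_mem {f : F2} (h : memA f) : f ∈ AA := by
  obtain ⟨P, a, b, heq, h1, h2⟩ := h
  have hP1 : P ∈ (Idl 0 1) ^ a := mem_Idl_pow_of_dvd ne01 h1
  have hP2 : P ∈ (Idl 1 0) ^ b := mem_Idl_pow_of_dvd ne10 h2
  have hprod := mem_product hP1 hP2
  have : ∃ g ∈ AA, al P = y1 ^ a * y2 ^ b * g := by
    refine Submodule.mul_induction_on hprod (fun m hm n hn => ?_) ?_
    · obtain ⟨gm, hgm, hem⟩ := Idl_helper ne01 g3_mem a m hm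
      obtain ⟨gn, hgn, hen⟩ := Idl_helper ne10 g4_mem b n hn
      exact ⟨gm * gn, AA.mul_mem hgm hgn, by rw [map_mul, hem, hen, ← y1_def, ← y2_def]; ring⟩
    · rintro x y ⟨g1, hg1, he1⟩ ⟨g2, hg2, he2⟩
      exact ⟨g1 + g2, AA.add_mem hg1 hg2, by rw [map_add, he1, he2, mul_add]⟩
  obtain ⟨g, hgA, hg⟩ := this
  have hfg : f = g := by
    have hne : y1 ^ a * y2 ^ b ≠ 0 :=
      mul_ne_zero (pow_ne_zero _ y1_ne) (pow_ne_zero _ y2_ne)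
    apply mul_right_cancel₀ hne
    calc f * (y1 ^ a * y2 ^ b) = f * y1 ^ a * y2 ^ b := by ring
      _ = al P := heq
      _ = g * (y1 ^ a * y2 ^ b) := by rw [hg]; ring
  rw [hfg]; exact hgA

lemma mem_A'_iff (f : F2) : f ∈ A' ↔ memA f := ⟨fun h => h, fun h => h⟩

lemma mem_AA_iff (f : F2) : f ∈ AA ↔ memA f :=
  ⟨fun h => (mem_A'_iff f).1 (AA_le_A' h), memA_imp_mem⟩

end AlgebraA

section Mult

lemma X_not_unit (i : Fin 2) : ¬IsUnit (X i : R2) := (prime_X i).not_unit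

/-- order of vanishing of `P` at the point corresponding to `Idl i j` -/
def dv (i j : Fin 2) (P : R2) : ℕ := multiplicity (X i) (sg i j P)

lemma dv_finite {i j : Fin 2} (hij : i ≠ j) {P : R2} (hP : P ≠ 0) :
    FiniteMultiplicity (X i) (sg i j P) :=
  FiniteMultiplicity.of_not_isUnit (X_not_unit i) (sg_ne_zero hij hP)

lemma dv_dvd_iff {i j : Fin 2} (hij : i ≠ j) {P : R2} (hP : P ≠ 0) (k : ℕ) :
    X i ^ k ∣ sg i j P ↔ k ≤ dv i j P :=
  (dv_finite hij hP).pow_dvd_iff_le_multiplicity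

lemma dv_mul {i j : Fin 2} (hij : i ≠ j) {P Q : R2} (hP : P ≠ 0) (hQ : Q ≠ 0) :
    dv i j (P * Q) = dv i j P + dv i j Q := by
  have hfin := dv_finite hij (mul_ne_zero hP hQ)
  rw [map_mul] at hfin
  rw [dv, map_mul]
  exact multiplicity_mul (prime_X i) hfin

lemma dv_one (i j : Fin 2) : dv i j 1 = 0 := by
  rw [dv, map_one]
  exact multiplicity_eq_zero.2 (fun h => X_not_unit i (isUnit_of_dvd_one h))

lemma dv_unit {i j : Fin 2} {U : R2} (hU : IsUnit U) : dv i j U = 0 := by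
  rw [dv]
  exact multiplicity_eq_zero.2
    (fun h => X_not_unit i (isUnit_of_dvd_unit h (hU.map (sg i j))))

lemma dv_pow_self {i j : Fin 2} (hij : i ≠ j) (k : ℕ) : dv i j (X i ^ k) = k := by
  rw [dv, sg_pow_self hij]
  exact multiplicity_pow_self_of_prime (prime_X i) k

lemma dv_pow_other {i j : Fin 2} (hij : i ≠ j) (l : ℕ) : dv i j (X j ^ l) = 0 := by
  rw [dv, sg_pow_other]
  refine multiplicity_eq_zero.2 (fun h => ?_)
  have hdvd : (X i : R2) ∣ X i * X j - 1 := (prime_X i).dvd_of_dvd_pow h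
  have : (X i : R2) ∣ 1 := by
    have h2 : (X i : R2) ∣ X i * X j := dvd_mul_right _ _
    have := dvd_sub h2 hdvd
    simpa using this
  exact X_not_unit i (isUnit_of_dvd_one this)

lemma dv_mul_pows {i j : Fin 2} (hij : i ≠ j) {M : R2} (hM : M ≠ 0) (k l : ℕ) :
    dv i j (M * X i ^ k * X j ^ l) = dv i j M + k := by
  have hXk : (X i : R2) ^ k ≠ 0 := pow_ne_zero _ (MvPolynomial.X_ne_zero _)
  have hXl : (X j : R2) ^ l ≠ 0 := pow_ne_zero _ (MvPolynomial.X_ne_zero _)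
  rw [dv_mul hij (mul_ne_zero hM hXk) hXl, dv_mul hij hM hXk, dv_pow_self hij,
    dv_pow_other hij, add_zero]

lemma dv01_pows (k l : ℕ) : dv 0 1 (X 0 ^ k * X 1 ^ l : R2) = k := by
  have := dv_mul_pows ne01 (M := (1 : R2)) one_ne_zero k l
  rw [dv_one] at this
  simpa using this

lemma dv10_pows (k l : ℕ) : dv 1 0 (X 0 ^ k * X 1 ^ l : R2) = l := by
  have := dv_mul_pows ne10 (M := (1 : R2)) one_ne_zero l k
  rw [dv_one] at this
  rw [show (X 0 ^ k * X 1 ^ l : R2) = 1 * X 1 ^ l * X 0 ^ k by ring]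
  simpa using this

lemma numerator_ne {f : F2} {P : R2} {a b : ℕ}
    (heq : f * y1 ^ a * y2 ^ b = al P) (hf : f ≠ 0) : P ≠ 0 := by
  rintro rfl
  rw [map_zero] at heq
  exact (mul_ne_zero (mul_ne_zero hf (pow_ne_zero _ y1_ne)) (pow_ne_zero _ y2_ne)) heq

end Mult

section PrimesInA

def x1A : ↥AA := ⟨y1, y1_mem⟩
def x2A : ↥AA := ⟨y2, y2_mem⟩

lemma coe_ne_zero {q : ↥AA} (h : q ≠ 0) : (q : F2) ≠ 0 :=
  fun h0 => h (Subtype.ext h0)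

lemma rep_of (q : ↥AA) :
    ∃ P a b, (q : F2) * y1 ^ a * y2 ^ b = al P ∧ X 0 ^ a ∣ sg 0 1 P ∧ X 1 ^ b ∣ sg 1 0 P :=
  (mem_AA_iff _).1 q.2

lemma x1_dvd_of_rep {f : ↥AA} {P : R2} {a b : ℕ}
    (heq : (f : F2) * y1 ^ a * y2 ^ b = al P)
    (h1 : X 0 ^ (a + 1) ∣ sg 0 1 P) (h2 : X 1 ^ b ∣ sg 1 0 P) :
    ∃ t : ↥AA, f = x1A * t := by
  have hmem : memA ((f : F2) / y1) := by
    refine ⟨P, a + 1, b, ?_, h1, h2⟩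
    rw [← heq, pow_succ]
    field_simp [y1_ne]
  refine ⟨⟨(f : F2) / y1, (mem_AA_iff _).2 hmem⟩, ?_⟩
  apply Subtype.ext
  show (f : F2) = y1 * ((f : F2) / y1)
  rw [mul_comm, div_mul_cancel₀ _ y1_ne]

lemma x2_dvd_of_rep {f : ↥AA} {P : R2} {a b : ℕ}
    (heq : (f : F2) * y1 ^ a * y2 ^ b = al P)
    (h1 : X 0 ^ a ∣ sg 0 1 P) (h2 : X 1 ^ (b + 1) ∣ sg 1 0 P) :
    ∃ t : ↥AA, f = x2A * t := by
  have hmem : memA ((f : F2) / y2) := by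
    refine ⟨P, a, b + 1, ?_, h1, h2⟩
    rw [← heq, pow_succ]
    field_simp [y2_ne]
  refine ⟨⟨(f : F2) / y2, (mem_AA_iff _).2 hmem⟩, ?_⟩
  apply Subtype.ext
  show (f : F2) = y2 * ((f : F2) / y2)
  rw [mul_comm, div_mul_cancel₀ _ y2_ne]

lemma balance_of_unit {w : ↥AA} (hw : IsUnit w) {P : R2} {a b : ℕ}
    (heq : (w : F2) * y1 ^ a * y2 ^ b = al P)
    (hd1 : X 0 ^ a ∣ sg 0 1 P) (hd2 : X 1 ^ b ∣ sg 1 0 P) :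
    dv 0 1 P = a ∧ dv 1 0 P = b := by
  have hw0 : (w : F2) ≠ 0 := coe_ne_zero hw.ne_zero
  have hP : P ≠ 0 := numerator_ne heq hw0
  obtain ⟨v, hv⟩ := hw.exists_right_inv
  have hvc : (w : F2) * (v : F2) = 1 := by simpa using Subtype.ext_iff.1 hv
  have hv0 : (v : F2) ≠ 0 := by
    intro h0
    rw [h0, mul_zero] at hvc
    exact one_ne_zero hvc.symm
  obtain ⟨W, c, e, heqv, hv1, hv2⟩ := rep_of v
  have hW : W ≠ 0 := numerator_ne heqv hv0
  have key : P * W = X 0 ^ (a + c) * X 1 ^ (b + e) := by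
    apply al_inj
    simp only [map_mul, map_pow, ← y1_def, ← y2_def]
    rw [← heq, ← heqv]
    linear_combination (y1 ^ (a + c) * y2 ^ (b + e)) * hvc
  have k1 : dv 0 1 P + dv 0 1 W = a + c := by
    rw [← dv_mul ne01 hP hW, key, dv01_pows]
  have k2 : dv 1 0 P + dv 1 0 W = b + e := by
    rw [← dv_mul ne10 hP hW, key, dv10_pows]
  have l1 : a ≤ dv 0 1 P := (dv_dvd_iff ne01 hP a).1 hd1
  have l2 : b ≤ dv 1 0 P := (dv_dvd_iff ne10 hP b).1 hd2
  have l3 : c ≤ dv 0 1 W := (dv_dvd_iff ne01 hW c).1 hv1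
  have l4 : e ≤ dv 1 0 W := (dv_dvd_iff ne10 hW e).1 hv2
  omega

lemma x1A_rep : (x1A : F2) * y1 ^ 0 * y2 ^ 0 = al (X 0) := by
  simp [x1A, y1_def]

lemma x2A_rep : (x2A : F2) * y1 ^ 0 * y2 ^ 0 = al (X 1) := by
  simp [x2A, y2_def]

lemma x1A_not_unit : ¬IsUnit x1A := by
  intro h
  have := (balance_of_unit h x1A_rep (one_dvd _) (one_dvd _)).1
  have h1 : dv 0 1 (X 0 : R2) = 1 := by
    have := dv_pow_self ne01 1
    simpa using this
  omega

lemma x2A_not_unit : ¬IsUnit x2A := by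
  intro h
  have := (balance_of_unit h x2A_rep (one_dvd _) (one_dvd _)).2
  have h1 : dv 1 0 (X 1 : R2) = 1 := by
    have := dv_pow_self ne10 1
    simpa using this
  omega

lemma x1A_prime : Prime x1A := by
  refine ⟨fun h => y1_ne (ZeroMemClass.coe_eq_zero.2 h), x1A_not_unit, ?_⟩
  intro f g ⟨t, hfg⟩
  by_cases hf0 : f = 0
  · exact Or.inl (hf0 ▸ dvd_zero _)
  by_cases hg0 : g = 0
  · exact Or.inr (hg0 ▸ dvd_zero _)
  have hfgc : (f : F2) * (g : F2) = y1 * (t : F2) := by simpa [x1A] using Subtype.ext_iff.1 hfg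
  have ht0 : (t : F2) ≠ 0 := by
    intro h0
    rw [h0, mul_zero] at hfgc
    exact mul_ne_zero (coe_ne_zero hf0) (coe_ne_zero hg0) hfgc
  obtain ⟨Pf, af, bf, heqf, hf1, hf2⟩ := rep_of f
  obtain ⟨Pg, ag, bg, heqg, hg1, hg2⟩ := rep_of g
  obtain ⟨Pt, at', bt, heqt, ht1, ht2⟩ := rep_of t
  have hPf : Pf ≠ 0 := numerator_ne heqf (coe_ne_zero hf0)
  have hPg : Pg ≠ 0 := numerator_ne heqg (coe_ne_zero hg0)
  have hPt : Pt ≠ 0 := numerator_ne heqt ht0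
  have key : Pf * Pg * X 0 ^ at' * X 1 ^ bt = Pt * X 0 ^ (af + ag + 1) * X 1 ^ (bf + bg) := by
    apply al_inj
    simp only [map_mul, map_pow, ← y1_def, ← y2_def]
    rw [← heqf, ← heqg, ← heqt]
    linear_combination (y1 ^ (af + ag + at') * y2 ^ (bf + bg + bt)) * hfgc
  have k1 : dv 0 1 Pf + dv 0 1 Pg + at' = dv 0 1 Pt + (af + ag + 1) := by
    have hL := dv_mul_pows ne01 (mul_ne_zero hPf hPg) at' bt
    have hR := dv_mul_pows ne01 hPt (af + ag + 1) (bf + bg)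
    rw [dv_mul ne01 hPf hPg] at hL
    rw [← key] at hR
    omega
  have lf : af ≤ dv 0 1 Pf := (dv_dvd_iff ne01 hPf af).1 hf1
  have lg : ag ≤ dv 0 1 Pg := (dv_dvd_iff ne01 hPg ag).1 hg1
  have lt' : at' ≤ dv 0 1 Pt := (dv_dvd_iff ne01 hPt at').1 ht1
  have : af + 1 ≤ dv 0 1 Pf ∨ ag + 1 ≤ dv 0 1 Pg := by omega
  rcases this with h | h
  · obtain ⟨t', ht'⟩ := x1_dvd_of_rep heqf ((dv_dvd_iff ne01 hPf _).2 h) hf2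
    exact Or.inl ⟨t', ht'⟩
  · obtain ⟨t', ht'⟩ := x1_dvd_of_rep heqg ((dv_dvd_iff ne01 hPg _).2 h) hg2
    exact Or.inr ⟨t', ht'⟩

lemma x2A_prime : Prime x2A := by
  refine ⟨fun h => y2_ne (ZeroMemClass.coe_eq_zero.2 h), x2A_not_unit, ?_⟩
  intro f g ⟨t, hfg⟩
  by_cases hf0 : f = 0
  · exact Or.inl (hf0 ▸ dvd_zero _)
  by_cases hg0 : g = 0
  · exact Or.inr (hg0 ▸ dvd_zero _)
  have hfgc : (f : F2) * (g : F2) = y2 * (t : F2) := by simpa [x2A] using Subtype.ext_iff.1 hfg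
  have ht0 : (t : F2) ≠ 0 := by
    intro h0
    rw [h0, mul_zero] at hfgc
    exact mul_ne_zero (coe_ne_zero hf0) (coe_ne_zero hg0) hfgc
  obtain ⟨Pf, af, bf, heqf, hf1, hf2⟩ := rep_of f
  obtain ⟨Pg, ag, bg, heqg, hg1, hg2⟩ := rep_of g
  obtain ⟨Pt, at', bt, heqt, ht1, ht2⟩ := rep_of t
  have hPf : Pf ≠ 0 := numerator_ne heqf (coe_ne_zero hf0)
  have hPg : Pg ≠ 0 := numerator_ne heqg (coe_ne_zero hg0)
  have hPt : Pt ≠ 0 := numerator_ne heqt ht0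
  have key : Pf * Pg * X 0 ^ at' * X 1 ^ bt = Pt * X 0 ^ (af + ag) * X 1 ^ (bf + bg + 1) := by
    apply al_inj
    simp only [map_mul, map_pow, ← y1_def, ← y2_def]
    rw [← heqf, ← heqg, ← heqt]
    linear_combination (y1 ^ (af + ag + at') * y2 ^ (bf + bg + bt)) * hfgc
  have k1 : dv 1 0 Pf + dv 1 0 Pg + bt = dv 1 0 Pt + (bf + bg + 1) := by
    have hL : dv 1 0 (Pf * Pg * X 0 ^ at' * X 1 ^ bt) = dv 1 0 (Pf * Pg) + bt := by
      rw [show Pf * Pg * X 0 ^ at' * X 1 ^ bt = (Pf * Pg) * X 1 ^ bt * X 0 ^ at' by ring]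
      exact dv_mul_pows ne10 (mul_ne_zero hPf hPg) bt at'
    have hR : dv 1 0 (Pt * X 0 ^ (af + ag) * X 1 ^ (bf + bg + 1)) = dv 1 0 Pt + (bf + bg + 1) := by
      rw [show Pt * X 0 ^ (af + ag) * X 1 ^ (bf + bg + 1)
        = Pt * X 1 ^ (bf + bg + 1) * X 0 ^ (af + ag) by ring]
      exact dv_mul_pows ne10 hPt (bf + bg + 1) (af + ag)
    rw [dv_mul ne10 hPf hPg] at hL
    rw [← key] at hR
    omega
  have lf : bf ≤ dv 1 0 Pf := (dv_dvd_iff ne10 hPf bf).1 hf2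
  have lg : bg ≤ dv 1 0 Pg := (dv_dvd_iff ne10 hPg bg).1 hg2
  have lt' : bt ≤ dv 1 0 Pt := (dv_dvd_iff ne10 hPt bt).1 ht2
  have : bf + 1 ≤ dv 1 0 Pf ∨ bg + 1 ≤ dv 1 0 Pg := by omega
  rcases this with h | h
  · obtain ⟨t', ht'⟩ := x2_dvd_of_rep heqf hf1 ((dv_dvd_iff ne10 hPf _).2 h)
    exact Or.inl ⟨t', ht'⟩
  · obtain ⟨t', ht'⟩ := x2_dvd_of_rep heqg hg1 ((dv_dvd_iff ne10 hPg _).2 h)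
    exact Or.inr ⟨t', ht'⟩

end PrimesInA

section MainPrime

lemma unit_of_dvd_monomial {U : R2} {α β : ℕ} (h : U ∣ X 0 ^ α * X 1 ^ β)
    (h0 : ¬ (X 0 : R2) ∣ U) (h1 : ¬ (X 1 : R2) ∣ U) : IsUnit U := by
  by_contra hU
  have hmono : (X 0 ^ α * X 1 ^ β : R2) ≠ 0 :=
    mul_ne_zero (pow_ne_zero _ (MvPolynomial.X_ne_zero _)) (pow_ne_zero _ (MvPolynomial.X_ne_zero _))
  have hU0 : U ≠ 0 := by rintro rfl; exact hmono (zero_dvd_iff.1 h)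
  obtain ⟨r, hr_irr, hr_dvd⟩ := WfDvdMonoid.exists_irreducible_factor hU hU0
  have hr_prime : Prime r := (UniqueFactorizationMonoid.irreducible_iff_prime).1 hr_irr
  have hr2 : r ∣ X 0 ^ α * X 1 ^ β := hr_dvd.trans h
  rcases hr_prime.2.2 _ _ hr2 with hh | hh
  · have hrX : r ∣ (X 0 : R2) := hr_prime.dvd_of_dvd_pow hh
    exact h0 (((hr_irr.associated_of_dvd (prime_X 0).irreducible hrX).symm.dvd).trans hr_dvd)
  · have hrX : r ∣ (X 1 : R2) := hr_prime.dvd_of_dvd_pow hh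
    exact h1 (((hr_irr.associated_of_dvd (prime_X 1).irreducible hrX).symm.dvd).trans hr_dvd)

lemma mk_mem {U : R2} (hU : U ≠ 0) : al U / (y1 ^ dv 0 1 U * y2 ^ dv 1 0 U) ∈ AA := by
  apply (mem_AA_iff _).2
  refine ⟨U, dv 0 1 U, dv 1 0 U, ?_, (dv_dvd_iff ne01 hU _).2 le_rfl,
    (dv_dvd_iff ne10 hU _).2 le_rfl⟩
  rw [mul_assoc, div_mul_cancel₀ _ (mul_ne_zero (pow_ne_zero _ y1_ne) (pow_ne_zero _ y2_ne))]

def mkAA (U : R2) (hU : U ≠ 0) : ↥AA := ⟨al U / (y1 ^ dv 0 1 U * y2 ^ dv 1 0 U), mk_mem hU⟩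

lemma mk_eq {U : R2} (hU : U ≠ 0) :
    (mkAA U hU : F2) * (y1 ^ dv 0 1 U * y2 ^ dv 1 0 U) = al U := by
  show al U / (y1 ^ dv 0 1 U * y2 ^ dv 1 0 U) * _ = al U
  rw [div_mul_cancel₀ _ (mul_ne_zero (pow_ne_zero _ y1_ne) (pow_ne_zero _ y2_ne))]

lemma mk_nonunit {U : R2} (hU0 : U ≠ 0) (h0 : ¬ (X 0 : R2) ∣ U) (h1 : ¬ (X 1 : R2) ∣ U)
    (hU : ¬IsUnit U) : ¬ IsUnit (mkAA U hU0) := by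
  intro h
  obtain ⟨v, hv⟩ := h.exists_right_inv
  have hvc : (mkAA U hU0 : F2) * (v : F2) = 1 := by simpa using Subtype.ext_iff.1 hv
  have hv0 : (v : F2) ≠ 0 := by
    intro hz
    rw [hz, mul_zero] at hvc
    exact one_ne_zero hvc.symm
  obtain ⟨W, cw, ew, heqv, _, _⟩ := rep_of v
  have hW : W ≠ 0 := numerator_ne heqv hv0
  have key : U * W = X 0 ^ (dv 0 1 U + cw) * X 1 ^ (dv 1 0 U + ew) := by
    apply al_inj
    simp only [map_mul, map_pow, ← y1_def, ← y2_def]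
    rw [← heqv, ← mk_eq hU0]
    linear_combination (y1 ^ (dv 0 1 U + cw) * y2 ^ (dv 1 0 U + ew)) * hvc
  exact hU (unit_of_dvd_monomial ⟨W, key.symm⟩ h0 h1)

set_option maxHeartbeats 1000000 in
theorem AA_irreducible_prime {q : ↥AA} (hq : Irreducible q) : Prime q := by
  have hq0 : q ≠ 0 := fun h => not_irreducible_zero (h ▸ hq)
  have hqc : (q : F2) ≠ 0 := coe_ne_zero hq0
  obtain ⟨P, a, b, heq, h1, h2⟩ := rep_of q
  have hP : P ≠ 0 := numerator_ne heq hqc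
  have hd1 : a ≤ dv 0 1 P := (dv_dvd_iff ne01 hP a).1 h1
  have hd2 : b ≤ dv 1 0 P := (dv_dvd_iff ne10 hP b).1 h2
  by_cases hlt1 : a < dv 0 1 P
  · obtain ⟨t, ht⟩ := x1_dvd_of_rep heq ((dv_dvd_iff ne01 hP _).2 hlt1) h2
    rcases hq.isUnit_or_isUnit ht with hu | hu
    · exact absurd hu x1A_not_unit
    · have hassoc : Associated x1A q := ⟨hu.unit, by rw [IsUnit.unit_spec]; exact ht.symm⟩
      exact hassoc.prime x1A_prime
  by_cases hlt2 : b < dv 1 0 P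
  · obtain ⟨t, ht⟩ := x2_dvd_of_rep heq h1 ((dv_dvd_iff ne10 hP _).2 hlt2)
    rcases hq.isUnit_or_isUnit ht with hu | hu
    · exact absurd hu x2A_not_unit
    · have hassoc : Associated x2A q := ⟨hu.unit, by rw [IsUnit.unit_spec]; exact ht.symm⟩
      exact hassoc.prime x2A_prime
  have hea : dv 0 1 P = a := by omega
  have heb : dv 1 0 P = b := by omega
  -- extract the monomial content of the numerator
  have fin0 : FiniteMultiplicity (X 0) P :=
    FiniteMultiplicity.of_not_isUnit (X_not_unit 0) hP
  obtain ⟨P1, hP1eq, hnd1⟩ := fin0.exists_eq_pow_mul_and_not_dvd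
  set c := multiplicity (X 0) P with hc
  have hP1 : P1 ≠ 0 := by
    rintro rfl
    rw [mul_zero] at hP1eq
    exact hP hP1eq
  have fin1 : FiniteMultiplicity (X 1) P1 :=
    FiniteMultiplicity.of_not_isUnit (X_not_unit 1) hP1
  obtain ⟨P0, hP0eq, hnd2⟩ := fin1.exists_eq_pow_mul_and_not_dvd
  set e := multiplicity (X 1) P1 with he
  have hP0 : P0 ≠ 0 := by
    rintro rfl
    rw [mul_zero] at hP0eq
    exact hP1 hP0eq
  have hnd0 : ¬ (X 0 : R2) ∣ P0 := fun h => hnd1 (by rw [hP0eq]; exact h.mul_left _)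
  have hPdecomp : P = P0 * X 0 ^ c * X 1 ^ e := by rw [hP1eq, hP0eq]; ring
  have hdva : a = c + dv 0 1 P0 := by
    rw [← hea, hPdecomp, show P0 * X 0 ^ c * X 1 ^ e = P0 * X 0 ^ c * X 1 ^ e from rfl,
      dv_mul_pows ne01 hP0 c e]
    omega
  have hdvb : b = e + dv 1 0 P0 := by
    rw [← heb, hPdecomp, show P0 * X 0 ^ c * X 1 ^ e = P0 * X 1 ^ e * X 0 ^ c by ring,
      dv_mul_pows ne10 hP0 e c]
    omega
  have hPal : al P = al P0 * y1 ^ c * y2 ^ e := by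
    rw [hPdecomp]
    simp only [map_mul, map_pow, ← y1_def, ← y2_def]
  have hqP0 : (q : F2) * y1 ^ (dv 0 1 P0) * y2 ^ (dv 1 0 P0) = al P0 := by
    have h' : ((q : F2) * y1 ^ (dv 0 1 P0) * y2 ^ (dv 1 0 P0)) * (y1 ^ c * y2 ^ e)
        = al P0 * (y1 ^ c * y2 ^ e) := by
      calc ((q : F2) * y1 ^ (dv 0 1 P0) * y2 ^ (dv 1 0 P0)) * (y1 ^ c * y2 ^ e)
          = (q : F2) * y1 ^ a * y2 ^ b := by rw [hdva, hdvb]; ring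
        _ = al P := heq
        _ = al P0 * (y1 ^ c * y2 ^ e) := by rw [hPal]; ring
    exact mul_right_cancel₀ (mul_ne_zero (pow_ne_zero _ y1_ne) (pow_ne_zero _ y2_ne)) h'
  by_cases hP0u : IsUnit P0
  · exfalso
    apply hq.not_isUnit
    have hq_eq : (q : F2) = al P0 := by
      have e1 : dv 0 1 P0 = 0 := dv_unit hP0u
      have e2 : dv 1 0 P0 = 0 := dv_unit hP0u
      simpa [e1, e2] using hqP0
    obtain ⟨V, hV⟩ := isUnit_iff_exists_inv.1 hP0u
    refine IsUnit.of_mul_eq_one (a := q) ⟨al V, alg_mem_AA V⟩ (Subtype.ext ?_)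
    show (q : F2) * al V = 1
    rw [hq_eq, ← map_mul, hV, map_one]
  -- P0 is irreducible (hence prime)
  have hirr0 : Irreducible P0 := by
    rw [irreducible_iff]
    refine ⟨hP0u, fun U V hUV => ?_⟩
    by_contra hcon
    push_neg at hcon
    obtain ⟨hU, hV⟩ := hcon
    have hU0 : U ≠ 0 := by rintro rfl; rw [zero_mul] at hUV; exact hP0 hUV
    have hV0 : V ≠ 0 := by rintro rfl; rw [mul_zero] at hUV; exact hP0 hUV
    have hUX0 : ¬ (X 0 : R2) ∣ U := fun h => hnd0 (hUV ▸ h.mul_right V)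
    have hUX1 : ¬ (X 1 : R2) ∣ U := fun h => hnd2 (hUV ▸ h.mul_right V)
    have hVX0 : ¬ (X 0 : R2) ∣ V := fun h => hnd0 (hUV ▸ h.mul_left U)
    have hVX1 : ¬ (X 1 : R2) ∣ V := fun h => hnd2 (hUV ▸ h.mul_left U)
    have hsum1 : dv 0 1 P0 = dv 0 1 U + dv 0 1 V := by rw [hUV, dv_mul ne01 hU0 hV0]
    have hsum2 : dv 1 0 P0 = dv 1 0 U + dv 1 0 V := by rw [hUV, dv_mul ne10 hU0 hV0]
    have hquv : q = mkAA U hU0 * mkAA V hV0 := by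
      apply Subtype.ext
      show (q : F2) = (mkAA U hU0 : F2) * (mkAA V hV0 : F2)
      have hne : (y1 ^ (dv 0 1 P0) * y2 ^ (dv 1 0 P0) : F2) ≠ 0 :=
        mul_ne_zero (pow_ne_zero _ y1_ne) (pow_ne_zero _ y2_ne)
      apply mul_right_cancel₀ hne
      calc (q : F2) * (y1 ^ (dv 0 1 P0) * y2 ^ (dv 1 0 P0))
          = (q : F2) * y1 ^ (dv 0 1 P0) * y2 ^ (dv 1 0 P0) := by ring
        _ = al P0 := hqP0
        _ = al U * al V := by rw [← map_mul, ← hUV]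
        _ = ((mkAA U hU0 : F2) * (y1 ^ dv 0 1 U * y2 ^ dv 1 0 U)) *
            ((mkAA V hV0 : F2) * (y1 ^ dv 0 1 V * y2 ^ dv 1 0 V)) := by
              rw [mk_eq hU0, mk_eq hV0]
        _ = (mkAA U hU0 : F2) * (mkAA V hV0 : F2) *
            (y1 ^ (dv 0 1 P0) * y2 ^ (dv 1 0 P0)) := by
              rw [hsum1, hsum2]; ring
    rcases hq.isUnit_or_isUnit hquv with h | h
    · exact mk_nonunit hU0 hUX0 hUX1 hU h
    · exact mk_nonunit hV0 hVX0 hVX1 hV h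
  have hprime0 : Prime P0 := (UniqueFactorizationMonoid.irreducible_iff_prime).1 hirr0
  have hnotdvd : ∀ i : Fin 2, ¬ (X i : R2) ∣ P0 → ¬ P0 ∣ (X i : R2) := by
    intro i hni hdvd
    obtain ⟨s, hs⟩ := hdvd
    rcases (prime_X i).irreducible.isUnit_or_isUnit hs with h' | h'
    · exact hP0u h'
    · obtain ⟨s', hs'⟩ := isUnit_iff_exists_inv.1 h'
      exact hni ⟨s', by rw [hs, mul_assoc, hs', mul_one]⟩
  -- Prime q
  refine ⟨hq0, hq.not_isUnit, ?_⟩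
  rintro f g ⟨t, hfg⟩
  by_cases hf0 : f = 0
  · exact Or.inl (hf0 ▸ dvd_zero q)
  by_cases hg0 : g = 0
  · exact Or.inr (hg0 ▸ dvd_zero q)
  have ht0 : t ≠ 0 := by
    rintro rfl
    rw [mul_zero] at hfg
    exact mul_ne_zero hf0 hg0 hfg
  have hfgc : (f : F2) * (g : F2) = (q : F2) * (t : F2) := by
    simpa using Subtype.ext_iff.1 hfg
  obtain ⟨Pf, af, bf, heqf, hf1, hf2⟩ := rep_of f
  obtain ⟨Pg, ag, bg, heqg, hg1, hg2⟩ := rep_of g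
  obtain ⟨Pt, at', bt, heqt, ht1, ht2⟩ := rep_of t
  have hPf : Pf ≠ 0 := numerator_ne heqf (coe_ne_zero hf0)
  have hPg : Pg ≠ 0 := numerator_ne heqg (coe_ne_zero hg0)
  have hPt : Pt ≠ 0 := numerator_ne heqt (coe_ne_zero ht0)
  have key : Pf * Pg * X 0 ^ (a + at') * X 1 ^ (b + bt)
      = P * Pt * X 0 ^ (af + ag) * X 1 ^ (bf + bg) := by
    apply al_inj
    simp only [map_mul, map_pow, ← y1_def, ← y2_def]
    rw [← heqf, ← heqg, ← heqt, ← heq]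
    linear_combination (y1 ^ (af + ag + a + at') * y2 ^ (bf + bg + b + bt)) * hfgc
  have hP0dvd : P0 ∣ Pf * Pg := by
    have hstep : P0 ∣ Pf * Pg * X 0 ^ (a + at') * X 1 ^ (b + bt) := by
      rw [key, hPdecomp]
      exact ⟨X 0 ^ c * X 1 ^ e * Pt * X 0 ^ (af + ag) * X 1 ^ (bf + bg), by ring⟩
    rcases hprime0.2.2 _ _ hstep with hh | hh
    · rcases hprime0.2.2 _ _ hh with hh' | hh'
      · exact hh'
      · exact absurd (hprime0.dvd_of_dvd_pow hh') (hnotdvd 0 hnd0)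
    · exact absurd (hprime0.dvd_of_dvd_pow hh) (hnotdvd 1 hnd2)
  -- common final step
  have main : ∀ (w : ↥AA) (Pw : R2) (aw bw : ℕ),
      ((w : F2) * y1 ^ aw * y2 ^ bw = al Pw) → Pw ≠ 0 →
      (X 0 ^ aw ∣ sg 0 1 Pw) → (X 1 ^ bw ∣ sg 1 0 Pw) → P0 ∣ Pw → q ∣ w := by
    intro w Pw aw bw heqw hPw hw1 hw2 hdvdw
    obtain ⟨M, hM⟩ := hdvdw
    have hM0 : M ≠ 0 := by
      rintro rfl
      rw [mul_zero] at hM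
      exact hPw hM
    have hN0 : (M * X 0 ^ a * X 1 ^ b : R2) ≠ 0 :=
      mul_ne_zero (mul_ne_zero hM0 (pow_ne_zero _ (MvPolynomial.X_ne_zero _)))
        (pow_ne_zero _ (MvPolynomial.X_ne_zero _))
    have hdvPw1 : aw ≤ dv 0 1 Pw := (dv_dvd_iff ne01 hPw aw).1 hw1
    have hdvPw2 : bw ≤ dv 1 0 Pw := (dv_dvd_iff ne10 hPw bw).1 hw2
    have hPwsum1 : dv 0 1 Pw = dv 0 1 P0 + dv 0 1 M := by rw [hM, dv_mul ne01 hP0 hM0]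
    have hPwsum2 : dv 1 0 Pw = dv 1 0 P0 + dv 1 0 M := by rw [hM, dv_mul ne10 hP0 hM0]
    have hmem : memA (al (M * X 0 ^ a * X 1 ^ b) / (y1 ^ (aw + c) * y2 ^ (bw + e))) := by
      refine ⟨M * X 0 ^ a * X 1 ^ b, aw + c, bw + e, by
        rw [mul_assoc, div_mul_cancel₀ _
          (mul_ne_zero (pow_ne_zero _ y1_ne) (pow_ne_zero _ y2_ne))], ?_, ?_⟩
      · refine (dv_dvd_iff ne01 hN0 _).2 ?_
        rw [dv_mul_pows ne01 hM0]
        omega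
      · refine (dv_dvd_iff ne10 hN0 _).2 ?_
        rw [show M * X 0 ^ a * X 1 ^ b = M * X 1 ^ b * X 0 ^ a by ring, dv_mul_pows ne10 hM0]
        omega
    set t' : ↥AA := ⟨_, (mem_AA_iff _).2 hmem⟩ with ht'def
    have teq : (t' : F2) * (y1 ^ (aw + c) * y2 ^ (bw + e)) = al (M * X 0 ^ a * X 1 ^ b) := by
      show al (M * X 0 ^ a * X 1 ^ b) / (y1 ^ (aw + c) * y2 ^ (bw + e)) * _ = _
      rw [div_mul_cancel₀ _ (mul_ne_zero (pow_ne_zero _ y1_ne) (pow_ne_zero _ y2_ne))]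
    have alMeq : al (M * X 0 ^ a * X 1 ^ b) = al M * y1 ^ a * y2 ^ b := by
      simp only [map_mul, map_pow, ← y1_def, ← y2_def]
    have hPwal : al Pw = al P0 * al M := by rw [hM, map_mul]
    refine ⟨t', Subtype.ext ?_⟩
    show (w : F2) = (q : F2) * (t' : F2)
    have hne : (y1 ^ (a + aw + c) * y2 ^ (b + bw + e) : F2) ≠ 0 :=
      mul_ne_zero (pow_ne_zero _ y1_ne) (pow_ne_zero _ y2_ne)
    apply mul_right_cancel₀ hne
    calc (w : F2) * (y1 ^ (a + aw + c) * y2 ^ (b + bw + e))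
        = ((w : F2) * y1 ^ aw * y2 ^ bw) * (y1 ^ (a + c) * y2 ^ (b + e)) := by ring
      _ = al P0 * al M * (y1 ^ (a + c) * y2 ^ (b + e)) := by rw [heqw, hPwal]
      _ = (al P0 * y1 ^ c * y2 ^ e) * (al M * y1 ^ a * y2 ^ b) := by ring
      _ = ((q : F2) * y1 ^ a * y2 ^ b) * ((t' : F2) * (y1 ^ (aw + c) * y2 ^ (bw + e))) := by
          rw [heq, teq, hPal, alMeq]
      _ = (q : F2) * (t' : F2) * (y1 ^ (a + aw + c) * y2 ^ (b + bw + e)) := by ring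
  rcases hprime0.2.2 _ _ hP0dvd with hh | hh
  · exact Or.inl (main f Pf af bf heqf hPf hf1 hf2 hh)
  · exact Or.inr (main g Pg ag bg heqg hPg hg1 hg2 hh)

end MainPrime

section Final

lemma AA_fg : AA.FG :=
  Subalgebra.fg_def.mpr ⟨genSet,
    show ({y1, y2, (1 + y2) / y1, (1 + y1) / y2} : Set F2).Finite from Set.toFinite _, rfl⟩

theorem AA_ufm : UniqueFactorizationMonoid ↥AA := by
  letI : Algebra.FiniteType ℚ ↥AA := (Subalgebra.fg_iff_finiteType AA).1 AA_fg
  letI : IsNoetherianRing ↥AA := Algebra.FiniteType.isNoetherianRing ℚ ↥AA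
  letI : WfDvdMonoid ↥AA := IsNoetherianRing.wfDvdMonoid
  exact ⟨fun {a} => ⟨fun h => AA_irreducible_prime h, Prime.irreducible⟩⟩

end Final

end ClusterA2

end ClusterA2

/-- The type A₂ cluster algebra `A = ℚ[x₁, x₂, (1+x₂)/x₁, (1+x₁)/x₂] ⊆ ℚ(x₁,x₂)` is a
unique factorization domain. -/
theorem stmt_19 :
    let R := MvPolynomial (Fin 2) ℚ
    let F := FractionRing R
    let x1 : F := algebraMap R F (X 0)
    let x2 : F := algebraMap R F (X 1)
    let A := Algebra.adjoin ℚ ({x1, x2, (1 + x2) / x1, (1 + x1) / x2} : Set F)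
    UniqueFactorizationMonoid A := by
  intro R F x1 x2 A
  exact ClusterA2.AA_ufm
end
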